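/- arXiv:math/0703781 — 12 statements merged into one kernel-verified Lean document; each statement's English description precedes it below -/
import Mathlib

section
/- Let q : (0,∞) → ℝ be a C¹ function such that q²(x) − q'(x) is bounded below on (0,∞) and q²(x) − q'(x) → +∞ as x → ∞. Then |q(x)| → ∞ as x → ∞. -/
open Filter Set Topology

/-- Barrier lemma: if `f a ≤ c` and whenever `f x = c` (for `x ≥ a`) the derivative is
negative, then `f x ≤ c` for all `x ≥ a`. -/
lemma barrier_aux (f f' : ℝ → ℝ) (a c : ℝ) (ha : 0 < a)
    (hd : ∀ x ∈ Set.Ioi (0:ℝ), HasDerivAt f (f' x) x)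
    (hlevel : ∀ x, a ≤ x → f x = c → f' x < 0)
    (hfa : f a ≤ c) : ∀ x, a ≤ x → f x ≤ c := by
  intro x₁ hx₁
  by_contra hlt
  push_neg at hlt
  have hax : a < x₁ := by
    rcases lt_or_eq_of_le hx₁ with h | h
    · exact h
    · exact absurd hfa (by rw [h]; exact not_le.mpr hlt)
  have hcont : ContinuousOn f (Set.Icc a x₁) := fun x hx =>
    ((hd x (lt_of_lt_of_le ha hx.1)).continuousAt).continuousWithinAt
  set T : Set ℝ := {x ∈ Set.Icc a x₁ | f x ≤ c} with hT
  have hTne : T.Nonempty := ⟨a, ⟨le_refl a, le_of_lt hax⟩, hfa⟩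
  have hTbdd : BddAbove T := ⟨x₁, fun x hx => hx.1.2⟩
  have hTclosed : IsClosed T := by
    have : T = Set.Icc a x₁ ∩ f ⁻¹' Set.Iic c := rfl
    rw [this]
    exact hcont.preimage_isClosed_of_isClosed isClosed_Icc isClosed_Iic
  set s := sSup T with hs
  have hsT : s ∈ T := hTclosed.csSup_mem hTne hTbdd
  have hsa : a ≤ s := hsT.1.1
  have hsx₁ : s ≤ x₁ := hsT.1.2
  have hfs : f s ≤ c := hsT.2
  have hspos : (0:ℝ) < s := lt_of_lt_of_le ha hsa
  have hsx₁' : s < x₁ := by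
    rcases lt_or_eq_of_le hsx₁ with h | h
    · exact h
    · exfalso; rw [h] at hfs; exact absurd hfs (not_le.mpr hlt)
  have hgt : ∀ x, s < x → x ≤ x₁ → c < f x := by
    intro x hsx hxx₁
    by_contra hle
    push_neg at hle
    exact absurd (le_csSup hTbdd (⟨⟨le_trans hsa (le_of_lt hsx), hxx₁⟩, hle⟩ : x ∈ T))
      (not_le.mpr hsx)
  have hfs_ge : c ≤ f s := by
    have hc : ContinuousAt f s := (hd s hspos).continuousAt
    have htend : Tendsto f (𝓝[>] s) (𝓝 (f s)) :=
      hc.continuousWithinAt.tendsto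
    refine ge_of_tendsto htend ?_
    filter_upwards [Ioo_mem_nhdsGT hsx₁'] with x hx
    exact le_of_lt (hgt x hx.1 (le_of_lt hx.2))
  have hfs_eq : f s = c := le_antisymm hfs hfs_ge
  have hneg : f' s < 0 := hlevel s hsa hfs_eq
  have hslope : Tendsto (slope f s) (𝓝[≠] s) (𝓝 (f' s)) :=
    hasDerivAt_iff_tendsto_slope.mp (hd s hspos)
  have hslope' : Tendsto (slope f s) (𝓝[>] s) (𝓝 (f' s)) :=
    hslope.mono_left (nhdsWithin_mono s (fun x hx => ne_of_gt hx))
  have hge : (0:ℝ) ≤ f' s := by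
    refine ge_of_tendsto hslope' ?_
    filter_upwards [Ioo_mem_nhdsGT hsx₁'] with x hx
    have h1 : c < f x := hgt x hx.1 (le_of_lt hx.2)
    have hpos : 0 < x - s := sub_pos.mpr hx.1
    have h2 : 0 < f x - f s := by rw [hfs_eq]; linarith
    rw [slope_def_field]
    exact le_of_lt (div_pos h2 hpos)
  linarith

/-- Let `q : (0,∞) → ℝ` be a `C¹` function such that `q²(x) − q'(x)` is
bounded below on `(0,∞)` and `q²(x) − q'(x) → +∞` as `x → ∞`.
Then `|q(x)| → ∞` as `x → ∞`. -/
theorem abs_drift_tendsto_atTop (q q' : ℝ → ℝ)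
    (hderiv : ∀ x ∈ Set.Ioi (0:ℝ), HasDerivAt q (q' x) x)
    (hcont : ContinuousOn q' (Set.Ioi 0))
    (hbdd : ∃ c : ℝ, ∀ x ∈ Set.Ioi (0:ℝ), c ≤ (q x) ^ 2 - q' x)
    (htop : Tendsto (fun x => (q x) ^ 2 - q' x) atTop atTop) :
    Tendsto (fun x => |q x|) atTop atTop := by
  by_contra hnot
  rw [tendsto_atTop] at hnot
  push_neg at hnot
  obtain ⟨b, hb⟩ := hnot
  set M : ℝ := max b 1 with hM
  have hM1 : (1:ℝ) ≤ M := le_max_right b 1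
  have hMpos : (0:ℝ) < M := lt_of_lt_of_le one_pos hM1
  have hfreq : ∃ᶠ x in atTop, |q x| < M :=
    hb.mono (fun x hx => lt_of_lt_of_le hx (le_max_left b 1))
  -- get X beyond which q² - q' ≥ 5M²
  obtain ⟨X, hX⟩ := (tendsto_atTop.mp htop (5 * M ^ 2)).exists_forall_of_atTop
  set X' : ℝ := max X 1 with hX'
  have hX'pos : (0:ℝ) < X' := lt_of_lt_of_le one_pos (le_max_right X 1)
  have hq' : ∀ x, X' ≤ x → q' x ≤ q x ^ 2 - 5 * M ^ 2 := by
    intro x hx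
    have := hX x (le_trans (le_max_left X 1) hx)
    linarith
  have hpos_of_ge : ∀ x : ℝ, X' ≤ x → (0:ℝ) < x := fun x hx => lt_of_lt_of_le hX'pos hx
  -- find x₀ ≥ X' with |q x₀| < M
  obtain ⟨x₀, hx₀X, hx₀M⟩ := (frequently_atTop.mp hfreq) X'
  have hx₀pos : (0:ℝ) < x₀ := hpos_of_ge x₀ hx₀X
  -- Barrier 1 : q x ≤ M for x ≥ x₀
  have hbar1 : ∀ x, x₀ ≤ x → q x ≤ M := by
    refine barrier_aux q q' x₀ M hx₀pos hderiv ?_ ?_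
    · intro x hx hqx
      have h1 := hq' x (le_trans hx₀X hx)
      rw [hqx] at h1
      nlinarith
    · calc q x₀ ≤ |q x₀| := le_abs_self _
        _ ≤ M := le_of_lt hx₀M
  -- Step 2 : find x₁ ≥ x₀ with q x₁ ≤ -2M
  have hstep2 : ∃ x₁, x₀ ≤ x₁ ∧ q x₁ ≤ -(2*M) := by
    by_contra hno
    push_neg at hno
    set y : ℝ := x₀ + 3 / M with hy
    have hx₀y : x₀ < y := by
      have h3 : 0 < 3 / M := by positivity
      rw [hy]; linarith
    have hcq : ContinuousOn q (Set.Icc x₀ y) := fun x hx =>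
      ((hderiv x (lt_of_lt_of_le hx₀pos hx.1)).continuousAt).continuousWithinAt
    obtain ⟨ξ, hξ, hslope⟩ := exists_hasDerivAt_eq_slope q q' hx₀y hcq
      (fun x hx => hderiv x (lt_of_lt_of_le hx₀pos (le_of_lt hx.1)))
    have hξ1 : x₀ ≤ ξ := le_of_lt hξ.1
    have hqξup : q ξ ≤ M := hbar1 ξ hξ1
    have hqξlo : -(2*M) < q ξ := hno ξ hξ1
    have hd1 : q' ξ ≤ q ξ ^ 2 - 5 * M ^ 2 := hq' ξ (le_trans hx₀X hξ1)
    have hsq : q ξ ^ 2 ≤ 4 * M ^ 2 := by nlinarith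
    have hdneg : q' ξ ≤ -(M ^ 2) := by linarith
    have hyx : y - x₀ = 3 / M := by rw [hy]; ring
    have hne : y - x₀ ≠ 0 := ne_of_gt (sub_pos.mpr hx₀y)
    have hqy : q y - q x₀ = q' ξ * (y - x₀) := by
      rw [hslope]; field_simp
    have hqyval : q y ≤ q x₀ - 3 * M := by
      rw [hyx] at hqy
      have : q' ξ * (3 / M) ≤ -(M ^ 2) * (3 / M) := by
        apply mul_le_mul_of_nonneg_right hdneg (by positivity)
      have h2 : -(M ^ 2) * (3 / M) = -(3*M) := by field_simp
      linarith [hqy, this, h2.le]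
    have hqx₀ : q x₀ ≤ M := hbar1 x₀ le_rfl
    have : q y ≤ -(2*M) := by linarith
    exact absurd this (not_le.mpr (hno y (le_of_lt hx₀y)))
  obtain ⟨x₁, hx₁x₀, hx₁q⟩ := hstep2
  have hx₁pos : (0:ℝ) < x₁ := lt_of_lt_of_le hx₀pos hx₁x₀
  -- Barrier 2 : q x ≤ -2M for x ≥ x₁
  have hbar2 : ∀ x, x₁ ≤ x → q x ≤ -(2*M) := by
    refine barrier_aux q q' x₁ (-(2*M)) hx₁pos hderiv ?_ hx₁q
    intro x hx hqx
    have h1 := hq' x (le_trans (le_trans hx₀X hx₁x₀) hx)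
    rw [hqx] at h1
    nlinarith
  -- contradiction with frequently |q x| < M
  obtain ⟨x₂, hx₂x₁, hx₂M⟩ := (frequently_atTop.mp hfreq) x₁
  have h1 : q x₂ ≤ -(2*M) := hbar2 x₂ hx₂x₁
  have h2 : 2*M ≤ |q x₂| := by
    rw [abs_of_nonpos (by linarith)]
    linarith
  linarith
end

section
/- Let q : (0,∞) → ℝ be a C¹ function such that q²(x) − q'(x) is bounded below on (0,∞) and q²(x) − q'(x) → +∞ as x → ∞. Then either q⁺(x) := max(q(x),0) → 0 as x → 0⁺, or q⁻(x) := max(−q(x),0) → 0 as x → 0⁺. -/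
open Filter Set Topology

lemma freq_ge_of_not_tendsto (f : ℝ → ℝ)
    (h : ¬ Tendsto (fun x => max (f x) 0) (𝓝[>] (0:ℝ)) (𝓝 0)) :
    ∃ a > (0:ℝ), ∃ᶠ x in 𝓝[>] (0:ℝ), a ≤ f x := by
  rw [Metric.tendsto_nhds] at h
  push_neg at h
  obtain ⟨a, ha, hfa⟩ := h
  refine ⟨a, ha, hfa.mono fun x hx => ?_⟩
  rw [Real.dist_eq, sub_zero, abs_of_nonneg (le_max_right _ _)] at hx
  rcases le_or_gt (f x) 0 with h0 | h0
  · rw [max_eq_right h0] at hx; linarith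
  · calc a ≤ max (f x) 0 := hx
      _ = f x := max_eq_left h0.le

/-- Let `q : (0,∞) → ℝ` be a `C¹` function such that `q²(x) − q'(x)` is
bounded below on `(0,∞)` and `q²(x) − q'(x) → +∞` as `x → ∞`. Then either
`q⁺(x) = max(q(x),0) → 0` as `x → 0⁺`, or `q⁻(x) = max(−q(x),0) → 0` as `x → 0⁺`. -/
theorem qplus_or_qminus_tendsto_zero (q q' : ℝ → ℝ)
    (hderiv : ∀ x ∈ Set.Ioi (0:ℝ), HasDerivAt q (q' x) x)
    (hcont : ContinuousOn q' (Set.Ioi 0))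
    (hbdd : ∃ c : ℝ, ∀ x ∈ Set.Ioi (0:ℝ), c ≤ (q x) ^ 2 - q' x)
    (htop : Tendsto (fun x => (q x) ^ 2 - q' x) atTop atTop) :
    Tendsto (fun x => max (q x) 0) (𝓝[>] (0:ℝ)) (𝓝 0) ∨
      Tendsto (fun x => max (-q x) 0) (𝓝[>] (0:ℝ)) (𝓝 0) := by
  by_contra hcon
  push_neg at hcon
  obtain ⟨h1, h2⟩ := hcon
  obtain ⟨a, ha, hfa⟩ := freq_ge_of_not_tendsto q h1
  obtain ⟨b, hb, hfb⟩ := freq_ge_of_not_tendsto (fun x => -q x) h2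
  obtain ⟨c, hc⟩ := hbdd
  set D : ℝ := max (a^2+b^2-c) 0 + 1 with hD
  have hDpos : 0 < D := by positivity
  set ε : ℝ := (a+b)/D with hε
  have hεpos : 0 < ε := div_pos (by linarith) hDpos
  -- find x ∈ (0, ε) with q x ≥ a
  have hx' : ∃ᶠ u in 𝓝[>] (0:ℝ), a ≤ q u ∧ u ∈ Ioo (0:ℝ) ε :=
    hfa.and_eventually (Ioo_mem_nhdsGT_of_mem ⟨le_refl 0, hεpos⟩)
  obtain ⟨x, hqx, hx0, hxε⟩ := hx'.exists
  -- find y ∈ (0, x) with q y ≤ -b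
  have hy' : ∃ᶠ u in 𝓝[>] (0:ℝ), b ≤ -q u ∧ u ∈ Ioo (0:ℝ) x :=
    hfb.and_eventually (Ioo_mem_nhdsGT_of_mem ⟨le_refl 0, hx0⟩)
  obtain ⟨y, hqy, hy0, hyx⟩ := hy'.exists
  have hqy' : q y ≤ -b := by linarith
  have hqc : ContinuousOn q (Icc y x) := fun u hu =>
    ((hderiv u (lt_of_lt_of_le hy0 hu.1)).continuousAt).continuousWithinAt
  -- first time q reaches a
  set A : Set ℝ := Icc y x ∩ q ⁻¹' (Ici a) with hA
  have hAc : IsClosed A := hqc.preimage_isClosed_of_isClosed isClosed_Icc isClosed_Ici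
  have hAne : A.Nonempty := ⟨x, ⟨hyx.le, le_refl x⟩, hqx⟩
  have hAbdd : BddBelow A := ⟨y, fun u hu => hu.1.1⟩
  set t := sInf A with ht
  have htA : t ∈ A := hAc.csInf_mem hAne hAbdd
  have hty : y ≤ t := htA.1.1
  have htx : t ≤ x := htA.1.2
  have hqt : a ≤ q t := htA.2
  have hyt : y < t := by
    rcases eq_or_lt_of_le hty with h | h
    · exfalso; rw [← h] at hqt; linarith
    · exact h
  have hlt : ∀ u ∈ Ico y t, q u < a := by
    intro u hu
    by_contra h
    push_neg at h
    have : t ≤ u := csInf_le hAbdd ⟨⟨hu.1, hu.2.le.trans htx⟩, h⟩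
    exact absurd hu.2 (not_lt.2 this)
  -- last time before t that q is ≤ -b
  set B : Set ℝ := Icc y t ∩ q ⁻¹' (Iic (-b)) with hB
  have hqc2 : ContinuousOn q (Icc y t) := hqc.mono (Icc_subset_Icc le_rfl htx)
  have hBc : IsClosed B := hqc2.preimage_isClosed_of_isClosed isClosed_Icc isClosed_Iic
  have hBne : B.Nonempty := ⟨y, ⟨le_refl y, hty⟩, hqy'⟩
  have hBbdd : BddAbove B := ⟨t, fun u hu => hu.1.2⟩
  set s := sSup B with hs
  have hsB : s ∈ B := hBc.csSup_mem hBne hBbdd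
  have hys : y ≤ s := hsB.1.1
  have hst' : s ≤ t := hsB.1.2
  have hqs : q s ≤ -b := hsB.2
  have hst : s < t := by
    rcases eq_or_lt_of_le hst' with h | h
    · exfalso; rw [h] at hqs; linarith
    · exact h
  have hgt : ∀ u ∈ Ioc s t, -b < q u := by
    intro u hu
    by_contra h
    push_neg at h
    have : u ≤ s := le_csSup hBbdd ⟨⟨hys.trans hu.1.le, hu.2⟩, h⟩
    exact absurd hu.1 (not_lt.2 this)
  -- mean value theorem on [s, t]
  obtain ⟨ξ, hξ, hξ'⟩ := exists_hasDerivAt_eq_slope q q' hst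
      (hqc2.mono (Icc_subset_Icc hys le_rfl))
      (fun u hu => hderiv u (lt_of_lt_of_le hy0 (hys.trans hu.1.le)))
  have hts : 0 < t - s := sub_pos.2 hst
  have htsε : t - s < ε := by linarith
  have hqξu : q ξ < a := hlt ξ ⟨hys.trans hξ.1.le, hξ.2⟩
  have hqξl : -b < q ξ := hgt ξ ⟨hξ.1, hξ.2.le⟩
  have hslope : D ≤ q' ξ := by
    rw [hξ']
    have h1 : a + b ≤ q t - q s := by linarith
    have h2 : D * (t - s) ≤ D * ε := by nlinarith
    have h3 : D * ε = a + b := by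
      rw [hε, mul_div_cancel₀ _ (ne_of_gt hDpos)]
    rw [le_div_iff₀ hts]
    linarith
  have hξpos : (0:ℝ) < ξ := lt_of_lt_of_le hy0 (hys.trans hξ.1.le)
  have hbound := hc ξ hξpos
  have hsq : q ξ ^ 2 ≤ a^2 + b^2 := by nlinarith [mul_pos (sub_pos.2 hqξu) (by linarith : (0:ℝ) < q ξ + b), sq_nonneg (a-b), sq_nonneg (a+b), mul_pos ha hb]
  have hmax : a^2+b^2-c ≤ max (a^2+b^2-c) 0 := le_max_left _ _
  linarith
end

section
/- Assume Q(x) → +∞ as x → ∞, let λ > 0, and let η : (0,∞) → ℝ be a strictly positive C² function satisfying η''(x) − 2q(x)η'(x) = −2λη(x) for all x > 0. Then the function F(x) := η'(x)e^{−Q(x)} is nonnegative and nonincreasing on (0,∞), and for every x > 0 one has 2λ∫ₓ^∞ η(y)e^{−Q(y)} dy ≤ F(x) < ∞. In particular η is nondecreasing on (0,∞). -/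
open Filter Set Topology MeasureTheory

/-- Assume `Q(x) → +∞` as `x → ∞`, let `λ > 0`, and let `η : (0,∞) → ℝ`
be a strictly positive `C²` function satisfying `η'' − 2qη' = −2λη` on `(0,∞)`.
Then `F(x) := η'(x)e^{−Q(x)}` is nonnegative and nonincreasing on `(0,∞)`, for every `x > 0`
the integral `∫ₓ^∞ η e^{−Q}` is finite and `2λ∫ₓ^∞ η(y)e^{−Q(y)} dy ≤ F(x)`, and `η` is
nondecreasing on `(0,∞)`. -/
theorem flux_nonneg_antitone_and_eta_monotone (q q' Q : ℝ → ℝ) (l : ℝ) (η η' η'' : ℝ → ℝ)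
    (hqderiv : ∀ x ∈ Set.Ioi (0:ℝ), HasDerivAt q (q' x) x)
    (hqcont : ContinuousOn q' (Set.Ioi 0))
    (hQ : ∀ x ∈ Set.Ioi (0:ℝ), Q x = 2 * ∫ u in (1:ℝ)..x, q u)
    (hQtop : Tendsto Q atTop atTop)
    (hl : 0 < l)
    (hη1 : ∀ x ∈ Set.Ioi (0:ℝ), HasDerivAt η (η' x) x)
    (hη2 : ∀ x ∈ Set.Ioi (0:ℝ), HasDerivAt η' (η'' x) x)
    (hη'' : ContinuousOn η'' (Set.Ioi 0))
    (hηpos : ∀ x ∈ Set.Ioi (0:ℝ), 0 < η x)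
    (hODE : ∀ x ∈ Set.Ioi (0:ℝ), η'' x - 2 * q x * η' x = -2 * l * η x) :
    (∀ x ∈ Set.Ioi (0:ℝ), 0 ≤ η' x * Real.exp (-(Q x))) ∧
    (∀ x ∈ Set.Ioi (0:ℝ), ∀ y, x ≤ y →
      η' y * Real.exp (-(Q y)) ≤ η' x * Real.exp (-(Q x))) ∧
    (∀ x ∈ Set.Ioi (0:ℝ),
      MeasureTheory.IntegrableOn (fun y => η y * Real.exp (-(Q y))) (Set.Ioi x) ∧
      2 * l * ∫ y in Set.Ioi x, η y * Real.exp (-(Q y)) ≤ η' x * Real.exp (-(Q x))) ∧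
    (∀ x ∈ Set.Ioi (0:ℝ), ∀ y, x ≤ y → η x ≤ η y) := by
  set F : ℝ → ℝ := fun y => η' y * Real.exp (-(Q y)) with hFdef
  -- continuity of q on Ioi 0
  have hqca : ∀ x ∈ Set.Ioi (0:ℝ), ContinuousAt q x := fun x hx => (hqderiv x hx).continuousAt
  have hqc : ContinuousOn q (Set.Ioi 0) := fun x hx => (hqca x hx).continuousWithinAt
  -- derivative of Q
  have hQd : ∀ x ∈ Set.Ioi (0:ℝ), HasDerivAt Q (2 * q x) x := by
    intro x hx
    have hsub : Set.uIcc (1:ℝ) x ⊆ Set.Ioi 0 := by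
      intro t ht
      have h1 : (0:ℝ) < min 1 x := lt_min one_pos hx
      exact lt_of_lt_of_le h1 ht.1
    have hint : IntervalIntegrable q MeasureTheory.volume 1 x :=
      (hqc.mono hsub).intervalIntegrable
    have hmeas := ContinuousAt.stronglyMeasurableAtFilter
      (μ := MeasureTheory.volume) isOpen_Ioi hqca x hx
    have hG : HasDerivAt (fun t => (2:ℝ) * ∫ u in (1:ℝ)..t, q u) (2 * q x) x :=
      (intervalIntegral.integral_hasDerivAt_right hint hmeas (hqca x hx)).const_mul 2
    apply hG.congr_of_eventuallyEq
    filter_upwards [isOpen_Ioi.mem_nhds hx] with t ht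
    exact hQ t ht
  -- derivative of F
  have hFd : ∀ x ∈ Set.Ioi (0:ℝ),
      HasDerivAt F (-2 * l * η x * Real.exp (-(Q x))) x := by
    intro x hx
    have h2 := (hη2 x hx).mul ((hQd x hx).neg.exp)
    refine h2.congr_deriv ?_
    simp only [Pi.neg_apply]
    rw [← hODE x hx]; ring
  -- F is antitone on Ioi 0
  have hFanti : AntitoneOn F (Set.Ioi 0) := by
    apply antitoneOn_of_deriv_nonpos (convex_Ioi 0)
    · exact fun x hx => (hFd x hx).continuousAt.continuousWithinAt
    · intro x hx
      rw [interior_Ioi] at hx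
      exact (hFd x hx).differentiableAt.differentiableWithinAt
    · intro x hx
      rw [interior_Ioi] at hx
      rw [(hFd x hx).deriv]
      have h1 := hηpos x hx
      have h2 := Real.exp_pos (-(Q x))
      nlinarith [mul_pos (mul_pos hl h1) h2]
  -- F is nonnegative on Ioi 0
  have hFnonneg : ∀ x ∈ Set.Ioi (0:ℝ), 0 ≤ F x := by
    intro x hx
    by_contra hneg
    push_neg at hneg
    obtain ⟨N0, hN0⟩ := eventually_atTop.1 (hQtop.eventually_ge_atTop 0)
    set N : ℝ := max x N0 with hNdef
    have hNx : x ≤ N := le_max_left _ _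
    have hNpos : (0:ℝ) < N := lt_of_lt_of_le hx hNx
    have hη'le : ∀ y, N ≤ y → η' y ≤ F x := by
      intro y hy
      have hyx : x ≤ y := le_trans hNx hy
      have hy0 : y ∈ Set.Ioi (0:ℝ) := lt_of_lt_of_le hNpos hy
      have hFy : F y ≤ F x := hFanti hx hy0 hyx
      have hQy : (0:ℝ) ≤ Q y := hN0 y (le_trans (le_max_right _ _) hy)
      have hexp1 : (1:ℝ) ≤ Real.exp (Q y) := Real.one_le_exp hQy
      have hexp2 : Real.exp (-(Q y)) * Real.exp (Q y) = 1 := by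
        rw [← Real.exp_add]; simp
      have hFy' : η' y * Real.exp (-(Q y)) ≤ F x := hFy
      nlinarith [mul_le_mul_of_nonneg_right hFy' (le_of_lt (Real.exp_pos (Q y)))]
    -- the function y ↦ η y - F x * y is antitone on Ici N
    have hganti : AntitoneOn (fun y => η y - F x * y) (Set.Ici N) := by
      apply antitoneOn_of_deriv_nonpos (convex_Ici N)
      · intro y hy
        have hy0 : y ∈ Set.Ioi (0:ℝ) := lt_of_lt_of_le hNpos hy
        exact (((hη1 y hy0).sub ((hasDerivAt_id y).const_mul
          (F x))).continuousAt).continuousWithinAt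
      · intro y hy
        rw [interior_Ici] at hy
        have hy0 : y ∈ Set.Ioi (0:ℝ) := lt_trans hNpos hy
        exact (((hη1 y hy0).sub ((hasDerivAt_id y).const_mul
          (F x))).differentiableAt).differentiableWithinAt
      · intro y hy
        rw [interior_Ici] at hy
        have hy0 : y ∈ Set.Ioi (0:ℝ) := lt_trans hNpos hy
        have hd : HasDerivAt (fun y => η y - F x * y) (η' y - F x) y := by
          have := (hη1 y hy0).sub ((hasDerivAt_id y).const_mul (F x))
          exact this.congr_deriv (by ring)
        rw [hd.deriv]
        have := hη'le y (le_of_lt hy)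
        linarith
    have hηN := hηpos N (Set.mem_Ioi.2 hNpos)
    have hFxne : F x ≠ 0 := ne_of_lt hneg
    have hd0 : (0:ℝ) ≤ (η N + 1) / (-(F x)) :=
      div_nonneg (by linarith) (by linarith)
    have hbN : N ≤ N + (η N + 1) / (-(F x)) := by linarith
    have hb0 : (0:ℝ) < N + (η N + 1) / (-(F x)) := lt_of_lt_of_le hNpos hbN
    have hgb := hganti Set.self_mem_Ici hbN hbN
    simp only at hgb
    have hkey : F x * ((η N + 1) / (-(F x))) = -(η N + 1) := by
      field_simp
    have hexpand : F x * (N + (η N + 1) / (-(F x)))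
        = F x * N + F x * ((η N + 1) / (-(F x))) := by ring
    have hηb := hηpos _ (Set.mem_Ioi.2 hb0)
    linarith
  -- FTC estimate
  have hcont_h : ContinuousOn (fun y => η y * Real.exp (-(Q y))) (Set.Ioi 0) := by
    intro y hy
    exact ((((hη1 y hy).continuousAt).mul
      (((hQd y hy).neg.exp).continuousAt)).continuousWithinAt)
  have hIoc_int : ∀ x ∈ Set.Ioi (0:ℝ), ∀ i : ℝ,
      MeasureTheory.IntegrableOn (fun y => η y * Real.exp (-(Q y))) (Set.Ioc x i) := by
    intro x hx i
    have hsub : Set.Icc x i ⊆ Set.Ioi 0 := fun t ht => lt_of_lt_of_le hx ht.1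
    exact ((hcont_h.mono hsub).integrableOn_Icc).mono_set Set.Ioc_subset_Icc_self
  have hFTC : ∀ x ∈ Set.Ioi (0:ℝ), ∀ b, x ≤ b →
      2 * l * (∫ y in x..b, η y * Real.exp (-(Q y))) = F x - F b := by
    intro x hx b hb
    have hsub : Set.uIcc x b ⊆ Set.Ioi 0 := by
      rw [Set.uIcc_of_le hb]
      exact fun t ht => lt_of_lt_of_le hx ht.1
    have hderiv : ∀ t ∈ Set.uIcc x b,
        HasDerivAt F (-2 * l * η t * Real.exp (-(Q t))) t :=
      fun t ht => hFd t (hsub ht)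
    have hint : IntervalIntegrable (fun t => -2 * l * η t * Real.exp (-(Q t)))
        MeasureTheory.volume x b := by
      apply ContinuousOn.intervalIntegrable
      intro t ht
      have ht0 := hsub ht
      exact ((continuousAt_const.mul ((hη1 t ht0).continuousAt)).mul
        (((hQd t ht0).neg.exp).continuousAt)).continuousWithinAt
    have heq := intervalIntegral.integral_eq_sub_of_hasDerivAt hderiv hint
    have : (∫ y in x..b, -2 * l * η y * Real.exp (-(Q y)))
        = ∫ y in x..b, (-2 * l) * (η y * Real.exp (-(Q y))) := by
      congr 1; ext y; ring
    rw [this, intervalIntegral.integral_const_mul] at heq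
    linarith [heq]
  -- main integral statement
  have hmain : ∀ x ∈ Set.Ioi (0:ℝ),
      MeasureTheory.IntegrableOn (fun y => η y * Real.exp (-(Q y))) (Set.Ioi x) ∧
      2 * l * ∫ y in Set.Ioi x, η y * Real.exp (-(Q y)) ≤ F x := by
    intro x hx
    have hbound : ∀ b, x ≤ b →
        2 * l * (∫ y in x..b, η y * Real.exp (-(Q y))) ≤ F x := by
      intro b hb
      have hb0 : b ∈ Set.Ioi (0:ℝ) := lt_of_lt_of_le hx hb
      have := hFTC x hx b hb
      have := hFnonneg b hb0
      linarith
    have hInt : MeasureTheory.IntegrableOn (fun y => η y * Real.exp (-(Q y)))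
        (Set.Ioi x) := by
      apply MeasureTheory.integrableOn_Ioi_of_intervalIntegral_norm_bounded
        (F x / (2 * l)) x (fun i => hIoc_int x hx i) tendsto_id
      filter_upwards [eventually_ge_atTop x] with i hi
      have heq : (∫ y in x..i, ‖η y * Real.exp (-(Q y))‖)
          = ∫ y in x..i, η y * Real.exp (-(Q y)) := by
        apply intervalIntegral.integral_congr
        intro t ht
        rw [Set.uIcc_of_le hi] at ht
        have ht0 : t ∈ Set.Ioi (0:ℝ) := lt_of_lt_of_le hx ht.1
        have h1 := hηpos t ht0
        have h2 := Real.exp_pos (-(Q t))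
        simp only [Real.norm_eq_abs]
        exact abs_of_nonneg (by positivity)
      rw [heq, le_div_iff₀ (by positivity)]
      have := hbound i hi
      linarith
    refine ⟨hInt, ?_⟩
    have htend := MeasureTheory.intervalIntegral_tendsto_integral_Ioi x hInt tendsto_id
    have htend2 : Tendsto (fun b => 2 * l * ∫ y in x..b, η y * Real.exp (-(Q y)))
        atTop (𝓝 (2 * l * ∫ y in Set.Ioi x, η y * Real.exp (-(Q y)))) :=
      htend.const_mul (2 * l)
    apply le_of_tendsto htend2
    filter_upwards [eventually_ge_atTop x] with b hb
    exact hbound b hb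
  -- η' nonneg, hence η monotone
  have hη'nonneg : ∀ x ∈ Set.Ioi (0:ℝ), 0 ≤ η' x := by
    intro x hx
    have h1 : 0 ≤ η' x * Real.exp (-(Q x)) := hFnonneg x hx
    have h2 := Real.exp_pos (-(Q x))
    by_contra hc
    push_neg at hc
    nlinarith [mul_neg_of_neg_of_pos hc h2]
  have hmono : MonotoneOn η (Set.Ioi 0) := by
    apply monotoneOn_of_deriv_nonneg (convex_Ioi 0)
    · exact fun x hx => (hη1 x hx).continuousAt.continuousWithinAt
    · intro x hx
      rw [interior_Ioi] at hx
      exact (hη1 x hx).differentiableAt.differentiableWithinAt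
    · intro x hx
      rw [interior_Ioi] at hx
      rw [(hη1 x hx).deriv]
      exact hη'nonneg x hx
  refine ⟨hFnonneg, ?_, hmain, ?_⟩
  · intro x hx y hy
    exact hFanti hx (lt_of_lt_of_le hx hy) hy
  · intro x hx y hy
    exact hmono hx (lt_of_lt_of_le hx hy) hy
end

section
/- Assume Q(x) → +∞ as x → ∞, let λ > 0, and let η : (0,∞) → ℝ be a strictly positive C² function satisfying η''(x) − 2q(x)η'(x) = −2λη(x) for all x > 0. Then ∫₁^∞ e^{−Q(y)} dy < ∞ and ∫₁^∞ η(y) e^{−Q(y)} dy < ∞. -/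
open Filter Set Topology MeasureTheory

/-- Assume `Q(x) → +∞` as `x → ∞`, let `λ > 0`, and let `η : (0,∞) → ℝ`
be a strictly positive `C²` function satisfying `η'' − 2qη' = −2λη` on `(0,∞)`.
Then `∫₁^∞ e^{−Q(y)} dy < ∞` and `∫₁^∞ η(y) e^{−Q(y)} dy < ∞`. -/
theorem speed_measure_and_eta_integrable_at_infinity (q q' Q : ℝ → ℝ) (l : ℝ)
    (η η' η'' : ℝ → ℝ)
    (hqderiv : ∀ x ∈ Set.Ioi (0:ℝ), HasDerivAt q (q' x) x)
    (hqcont : ContinuousOn q' (Set.Ioi 0))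
    (hQ : ∀ x ∈ Set.Ioi (0:ℝ), Q x = 2 * ∫ u in (1:ℝ)..x, q u)
    (hQtop : Tendsto Q atTop atTop)
    (hl : 0 < l)
    (hη1 : ∀ x ∈ Set.Ioi (0:ℝ), HasDerivAt η (η' x) x)
    (hη2 : ∀ x ∈ Set.Ioi (0:ℝ), HasDerivAt η' (η'' x) x)
    (hη'' : ContinuousOn η'' (Set.Ioi 0))
    (hηpos : ∀ x ∈ Set.Ioi (0:ℝ), 0 < η x)
    (hODE : ∀ x ∈ Set.Ioi (0:ℝ), η'' x - 2 * q x * η' x = -2 * l * η x) :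
    MeasureTheory.IntegrableOn (fun y => Real.exp (-(Q y))) (Set.Ioi 1) ∧
    MeasureTheory.IntegrableOn (fun y => η y * Real.exp (-(Q y))) (Set.Ioi 1) := by
  have hqc : ContinuousOn q (Set.Ioi 0) := fun y hy =>
    ((hqderiv y hy).continuousAt).continuousWithinAt
  -- Q has derivative 2 q x at every x > 0
  have hQderiv : ∀ x ∈ Set.Ioi (0:ℝ), HasDerivAt Q (2 * q x) x := by
    intro x hx
    have hsub : Set.uIcc 1 x ⊆ Set.Ioi (0:ℝ) := by
      intro y hy
      rcases Set.mem_uIcc.mp hy with h | h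
      · exact lt_of_lt_of_le one_pos h.1
      · exact lt_of_lt_of_le hx h.1
    have hint : IntervalIntegrable q volume 1 x :=
      (hqc.mono hsub).intervalIntegrable
    have hmeas : StronglyMeasurableAtFilter q (𝓝 x) volume :=
      AEStronglyMeasurable.stronglyMeasurableAtFilter_of_mem
        (hqc.aestronglyMeasurable measurableSet_Ioi) (isOpen_Ioi.mem_nhds hx)
    have hd := (intervalIntegral.integral_hasDerivAt_right hint hmeas
      ((hqderiv x hx).continuousAt)).const_mul (2:ℝ)
    apply hd.congr_of_eventuallyEq
    filter_upwards [isOpen_Ioi.mem_nhds hx] with y hy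
    exact hQ y hy
  have hQc : ContinuousOn Q (Set.Ioi 0) := fun y hy =>
    ((hQderiv y hy).continuousAt).continuousWithinAt
  have hηc : ContinuousOn η (Set.Ioi 0) := fun y hy =>
    ((hη1 y hy).continuousAt).continuousWithinAt
  have hη'c : ContinuousOn η' (Set.Ioi 0) := fun y hy =>
    ((hη2 y hy).continuousAt).continuousWithinAt
  set F : ℝ → ℝ := fun x => η' x * Real.exp (-(Q x)) with hFdef
  have hFderiv : ∀ x ∈ Set.Ioi (0:ℝ),
      HasDerivAt F (-(2 * l) * (η x * Real.exp (-(Q x)))) x := by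
    intro x hx
    have hexp : HasDerivAt (fun u => Real.exp (-(Q u)))
        (Real.exp (-(Q x)) * (-(2 * q x))) x := ((hQderiv x hx).neg).exp
    have := (hη2 x hx).mul hexp
    refine this.congr_deriv ?_
    have hode := hODE x hx
    linear_combination (Real.exp (-(Q x))) * hode
  have hFc : ContinuousOn F (Set.Ioi 0) := fun y hy =>
    ((hFderiv y hy).continuousAt).continuousWithinAt
  -- F is antitone on Ioi 0
  have hFanti : AntitoneOn F (Set.Ioi 0) := by
    apply antitoneOn_of_deriv_nonpos (convex_Ioi 0) hFc
    · intro x hx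
      rw [interior_Ioi] at hx
      exact ((hFderiv x hx).differentiableAt).differentiableWithinAt
    · intro x hx
      rw [interior_Ioi] at hx
      rw [(hFderiv x hx).deriv]
      have h1 := hηpos x hx
      have h2 := Real.exp_pos (-(Q x))
      nlinarith [mul_pos hl (mul_pos h1 h2)]
  -- F is nonnegative on Ioi 0
  have hFnonneg : ∀ x ∈ Set.Ioi (0:ℝ), 0 ≤ F x := by
    by_contra hcon
    push_neg at hcon
    obtain ⟨x₀, hx₀, hFx₀⟩ := hcon
    obtain ⟨R₀, hR₀⟩ := (hQtop.eventually (eventually_ge_atTop (0:ℝ))).exists_forall_of_atTop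
    set R : ℝ := max R₀ x₀ with hRdef
    have hRpos : 0 < R := lt_of_lt_of_le hx₀ (le_max_right _ _)
    have hIci : Set.Ici R ⊆ Set.Ioi (0:ℝ) := fun y hy => lt_of_lt_of_le hRpos hy
    -- η' x ≤ F x₀ for x ≥ R
    have hkey : ∀ x ∈ Set.Ici R, η' x ≤ F x₀ := by
      intro x hx
      have hx0 : x ∈ Set.Ioi (0:ℝ) := hIci hx
      have hFle : F x ≤ F x₀ := hFanti hx₀ hx0 (le_trans (le_max_right _ _) hx)
      have hQx : 0 ≤ Q x := hR₀ x (le_trans (le_max_left _ _) hx)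
      have hexp1 : (1:ℝ) ≤ Real.exp (Q x) := Real.one_le_exp hQx
      have hη'eq : η' x = F x * Real.exp (Q x) := by
        rw [hFdef]
        simp [mul_assoc, ← Real.exp_add]
      rw [hη'eq]
      nlinarith
    -- g := η - F x₀ • id is antitone on Ici R
    have hganti : AntitoneOn (fun x => η x - F x₀ * x) (Set.Ici R) := by
      apply antitoneOn_of_deriv_nonpos (convex_Ici R)
      · exact (hηc.mono hIci).sub ((continuous_const.mul continuous_id).continuousOn)
      · intro x hx
        rw [interior_Ici] at hx
        exact (((hη1 x (hIci (Set.mem_Ici.mpr (le_of_lt hx)))).sub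
          ((hasDerivAt_id x).const_mul (F x₀))).differentiableAt).differentiableWithinAt
      · intro x hx
        rw [interior_Ici] at hx
        have hd : HasDerivAt (fun x => η x - F x₀ * x) (η' x - F x₀) x := by
          exact ((hη1 x (hIci (Set.mem_Ici.mpr (le_of_lt hx)))).sub
            ((hasDerivAt_id' x).const_mul (F x₀))).congr_deriv (by ring)
        rw [hd.deriv]
        have := hkey x (Set.mem_Ici.mpr (le_of_lt hx))
        linarith
    have hFpos : (0:ℝ) < -F x₀ := by linarith
    have hne : F x₀ ≠ 0 := ne_of_lt hFx₀
    have hdivpos : 0 < (η R + 1) / (-F x₀) :=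
      div_pos (by linarith [hηpos R (hIci (le_refl R))]) hFpos
    have hXR : R ≤ R + (η R + 1) / (-F x₀) := by linarith
    have hg' : η (R + (η R + 1) / (-F x₀)) - F x₀ * (R + (η R + 1) / (-F x₀))
        ≤ η R - F x₀ * R := hganti (Set.self_mem_Ici) hXR hXR
    have hXeq : F x₀ * (R + (η R + 1) / (-F x₀)) = F x₀ * R - (η R + 1) := by
      field_simp
      ring
    have hηX : η (R + (η R + 1) / (-F x₀)) ≤ -1 := by nlinarith
    exact absurd (hηpos _ (lt_of_lt_of_le hRpos hXR)) (by linarith)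
  -- hence η' ≥ 0 on Ioi 0, η monotone on Ioi 0
  have hη'nonneg : ∀ x ∈ Set.Ioi (0:ℝ), 0 ≤ η' x := by
    intro x hx
    have h : 0 ≤ η' x * Real.exp (-(Q x)) := hFnonneg x hx
    have hexp := Real.exp_pos (-(Q x))
    by_contra hneg
    push_neg at hneg
    nlinarith [mul_pos (neg_pos.mpr hneg) hexp]
  have hηmono : MonotoneOn η (Set.Ioi 0) := by
    apply monotoneOn_of_deriv_nonneg (convex_Ioi 0) hηc
    · intro x hx
      rw [interior_Ioi] at hx
      exact ((hη1 x hx).differentiableAt).differentiableWithinAt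
    · intro x hx
      rw [interior_Ioi] at hx
      rw [(hη1 x hx).deriv]
      exact hη'nonneg x hx
  have hη1pos : 0 < η 1 := hηpos 1 (by norm_num)
  -- the key integral bound
  have hbound : ∀ x : ℝ, 1 ≤ x →
      (∫ u in (1:ℝ)..x, η u * Real.exp (-(Q u))) ≤ F 1 / (2 * l) := by
    intro x hx
    have hsub : Set.uIcc 1 x ⊆ Set.Ioi (0:ℝ) := by
      intro y hy
      rcases Set.mem_uIcc.mp hy with h | h
      · exact lt_of_lt_of_le one_pos h.1
      · exact lt_of_lt_of_le (lt_of_lt_of_le one_pos hx) h.1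
    have hcontI : ContinuousOn (fun u => -(2 * l) * (η u * Real.exp (-(Q u))))
        (Set.uIcc 1 x) := by
      apply ContinuousOn.mul continuousOn_const
      exact ((hηc.mono hsub).mul (((hQc.mono hsub).neg).rexp))
    have hftc := intervalIntegral.integral_eq_sub_of_hasDerivAt
      (f := F) (f' := fun u => -(2 * l) * (η u * Real.exp (-(Q u))))
      (fun t ht => hFderiv t (hsub ht)) hcontI.intervalIntegrable
    have hFx : 0 ≤ F x := hFnonneg x (lt_of_lt_of_le one_pos hx)
    have h2 : (∫ u in (1:ℝ)..x, η u * Real.exp (-(Q u))) = (F 1 - F x) / (2 * l) := by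
      rw [intervalIntegral.integral_const_mul] at hftc
      field_simp at hftc ⊢
      linarith
    rw [h2]
    have h2l : (0:ℝ) < 2 * l := by linarith
    rw [div_le_div_iff₀ h2l h2l]
    nlinarith
  -- integrability of η e^{-Q} on (1, ∞)
  have hIoc : ∀ x : ℝ, IntegrableOn (fun y => η y * Real.exp (-(Q y))) (Set.Ioc 1 x) := by
    intro x
    rcases le_or_gt x 1 with h | h
    · rw [Set.Ioc_eq_empty (by linarith)]
      exact integrableOn_empty
    · have hsub : Set.Icc (1:ℝ) x ⊆ Set.Ioi 0 := fun y hy => lt_of_lt_of_le one_pos hy.1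
      have : ContinuousOn (fun y => η y * Real.exp (-(Q y))) (Set.Icc 1 x) :=
        (hηc.mono hsub).mul (((hQc.mono hsub).neg).rexp)
      exact (this.integrableOn_Icc).mono_set Set.Ioc_subset_Icc_self
  have hInt2 : MeasureTheory.IntegrableOn (fun y => η y * Real.exp (-(Q y))) (Set.Ioi 1) := by
    apply MeasureTheory.integrableOn_Ioi_of_intervalIntegral_norm_bounded
      (F 1 / (2 * l)) 1 hIoc tendsto_id
    filter_upwards [eventually_ge_atTop (1:ℝ)] with x hx
    have heq : (∫ u in (1:ℝ)..x, ‖η u * Real.exp (-(Q u))‖)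
        = ∫ u in (1:ℝ)..x, η u * Real.exp (-(Q u)) := by
      apply intervalIntegral.integral_congr
      intro y hy
      have hy0 : y ∈ Set.Ioi (0:ℝ) := by
        rcases Set.mem_uIcc.mp hy with h | h
        · exact lt_of_lt_of_le one_pos h.1
        · exact lt_of_lt_of_le (lt_of_lt_of_le one_pos hx) h.1
      have := hηpos y hy0
      have := Real.exp_pos (-(Q y))
      simp only [Real.norm_eq_abs, abs_of_nonneg (by positivity : (0:ℝ) ≤ η y * Real.exp (-(Q y)))]
    rw [heq]
    exact hbound x hx
  refine ⟨?_, hInt2⟩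
  -- e^{-Q} ≤ η e^{-Q} / η 1 on (1, ∞)
  have hmeas : AEStronglyMeasurable (fun y => Real.exp (-(Q y)))
      (volume.restrict (Set.Ioi (1:ℝ))) := by
    have hsub : Set.Ioi (1:ℝ) ⊆ Set.Ioi 0 := fun y hy => Set.mem_Ioi.mpr (lt_of_lt_of_le one_pos (le_of_lt hy))
    exact (((hQc.mono hsub).neg).rexp).aestronglyMeasurable measurableSet_Ioi
  apply MeasureTheory.Integrable.mono' (hInt2.const_mul (η 1)⁻¹) hmeas
  rw [ae_restrict_iff' measurableSet_Ioi]
  filter_upwards with y hy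
  have hy0 : y ∈ Set.Ioi (0:ℝ) := Set.mem_Ioi.mpr (lt_trans one_pos hy)
  have hηy : η 1 ≤ η y := hηmono (by norm_num) hy0 (le_of_lt hy)
  have hexp := Real.exp_pos (-(Q y))
  rw [Real.norm_eq_abs, abs_of_pos hexp]
  have hstep : η 1 * Real.exp (-(Q y)) ≤ η y * Real.exp (-(Q y)) := by nlinarith
  calc Real.exp (-(Q y)) = (η 1)⁻¹ * (η 1 * Real.exp (-(Q y))) := by
        field_simp
    _ ≤ (η 1)⁻¹ * (η y * Real.exp (-(Q y))) :=
        mul_le_mul_of_nonneg_left hstep (le_of_lt (inv_pos.mpr hη1pos))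
end

section
/- Assume Q(x) → +∞ as x → ∞, let λ > 0, and let η : (0,∞) → ℝ be a strictly positive C² function satisfying η''(x) − 2q(x)η'(x) = −2λη(x) for all x > 0. Then the limits F(0⁺) := lim_{x→0⁺} F(x) ∈ (0,∞] and F(∞) := lim_{x→∞} F(x) ∈ [0,∞) both exist, the identity ∫₀^∞ η(y) e^{−Q(y)} dy = (F(0⁺) − F(∞))/(2λ) holds in [0,∞], and consequently ∫₀^∞ η(y) e^{−Q(y)} dy < ∞ if and only if F(0⁺) < ∞. -/
open Filter Set Topology MeasureTheory
open scoped ENNReal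

/-- Assume `Q(x) → +∞` as `x → ∞`, let `λ > 0`, and let `η : (0,∞) → ℝ`
be a strictly positive `C²` function satisfying `η'' − 2qη' = −2λη` on `(0,∞)`.
Then with `F(x) = η'(x) e^{−Q(x)}`, the limit `F(0⁺)` exists in `(0,∞]` (expressed here as
a limit of `ENNReal.ofReal ∘ F` in `ℝ≥0∞`), the limit `F(∞)` exists in `[0,∞)`, the identity
`∫₀^∞ η e^{−Q} = (F(0⁺) − F(∞))/(2λ)` holds in `[0,∞]`, and `η e^{−Q}` is integrable on
`(0,∞)` iff `F(0⁺) < ∞`. -/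
theorem flux_limits_and_integrability_criterion (q q' Q : ℝ → ℝ) (l : ℝ)
    (η η' η'' : ℝ → ℝ)
    (hqderiv : ∀ x ∈ Set.Ioi (0:ℝ), HasDerivAt q (q' x) x)
    (hqcont : ContinuousOn q' (Set.Ioi 0))
    (hQ : ∀ x ∈ Set.Ioi (0:ℝ), Q x = 2 * ∫ u in (1:ℝ)..x, q u)
    (hQtop : Tendsto Q atTop atTop)
    (hl : 0 < l)
    (hη1 : ∀ x ∈ Set.Ioi (0:ℝ), HasDerivAt η (η' x) x)
    (hη2 : ∀ x ∈ Set.Ioi (0:ℝ), HasDerivAt η' (η'' x) x)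
    (hη'' : ContinuousOn η'' (Set.Ioi 0))
    (hηpos : ∀ x ∈ Set.Ioi (0:ℝ), 0 < η x)
    (hODE : ∀ x ∈ Set.Ioi (0:ℝ), η'' x - 2 * q x * η' x = -2 * l * η x) :
    ∃ F0 : ℝ≥0∞, ∃ Finf : ℝ,
      Tendsto (fun x => ENNReal.ofReal (η' x * Real.exp (-(Q x)))) (𝓝[>] (0:ℝ)) (𝓝 F0) ∧
      0 < F0 ∧
      Tendsto (fun x => η' x * Real.exp (-(Q x))) atTop (𝓝 Finf) ∧
      0 ≤ Finf ∧
      (∫⁻ y in Set.Ioi (0:ℝ), ENNReal.ofReal (η y * Real.exp (-(Q y)))) =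
        (F0 - ENNReal.ofReal Finf) / ENNReal.ofReal (2 * l) ∧
      (MeasureTheory.IntegrableOn (fun y => η y * Real.exp (-(Q y))) (Set.Ioi 0) ↔
        F0 < ⊤) := by
  have hqc : ContinuousOn q (Set.Ioi 0) := fun x hx =>
    ((hqderiv x hx).continuousAt).continuousWithinAt
  -- derivative of Q
  have hQd : ∀ x ∈ Set.Ioi (0:ℝ), HasDerivAt Q (2 * q x) x := by
    intro x hx
    have hI : HasDerivAt (fun y => ∫ u in (1:ℝ)..y, q u) (q x) x := by
      apply intervalIntegral.integral_hasDerivAt_right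
      · apply ContinuousOn.intervalIntegrable
        apply hqc.mono
        intro y hy
        rcases le_total 1 x with h | h
        · rw [Set.uIcc_of_le h] at hy; exact lt_of_lt_of_le one_pos hy.1
        · rw [Set.uIcc_of_ge h] at hy; exact lt_of_lt_of_le hx hy.1
      · exact hqc.stronglyMeasurableAtFilter isOpen_Ioi x hx
      · exact hqc.continuousAt (isOpen_Ioi.mem_nhds hx)
    have h2 : HasDerivAt (fun y => 2 * ∫ u in (1:ℝ)..y, q u) (2 * q x) x := hI.const_mul 2
    refine HasDerivAt.congr_of_eventuallyEq h2 ?_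
    filter_upwards [isOpen_Ioi.mem_nhds hx] with y hy
    exact hQ y hy
  set F : ℝ → ℝ := fun x => η' x * Real.exp (-(Q x)) with hF
  -- derivative of F
  have hFd : ∀ x ∈ Set.Ioi (0:ℝ), HasDerivAt F (-(2*l) * (η x * Real.exp (-(Q x)))) x := by
    intro x hx
    have hE : HasDerivAt (fun y => Real.exp (-(Q y))) (Real.exp (-(Q x)) * (-(2 * q x))) x :=
      ((hQd x hx).neg).exp
    have hmul := (hη2 x hx).mul hE
    refine hmul.congr_deriv ?_
    have hode := hODE x hx
    have : η'' x = 2 * q x * η' x - 2 * l * η x := by linarith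
    rw [this]; ring
  have hηc : ContinuousOn η (Set.Ioi 0) := fun x hx =>
    (hη1 x hx).continuousAt.continuousWithinAt
  have hQc : ContinuousOn Q (Set.Ioi 0) := fun x hx =>
    (hQd x hx).continuousAt.continuousWithinAt
  have hfc : ContinuousOn (fun y => η y * Real.exp (-(Q y))) (Set.Ioi 0) :=
    hηc.mul (Real.continuous_exp.comp_continuousOn hQc.neg)
  have hFc : ContinuousOn F (Set.Ioi 0) := fun x hx =>
    (hFd x hx).continuousAt.continuousWithinAt
  -- strict antitonicity of F
  have hFanti : StrictAntiOn F (Set.Ioi 0) := by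
    apply strictAntiOn_of_deriv_neg (convex_Ioi 0) hFc
    intro x hx
    rw [interior_Ioi] at hx
    rw [(hFd x hx).deriv]
    have h1 := hηpos x hx
    have h2 := Real.exp_pos (-(Q x))
    nlinarith [mul_pos h1 h2]
  have hFanti' : AntitoneOn F (Set.Ioi 0) := hFanti.antitoneOn
  -- FTC
  have hFTC : ∀ a b : ℝ, 0 < a → a ≤ b →
      ∫ y in a..b, 2 * l * (η y * Real.exp (-(Q y))) = F a - F b := by
    intro a b ha hab
    have hsub : Set.uIcc a b ⊆ Set.Ioi 0 := by
      rw [Set.uIcc_of_le hab]; exact fun y hy => lt_of_lt_of_le ha hy.1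
    have key : ∫ y in a..b, 2 * l * (η y * Real.exp (-(Q y)))
        = (fun x => -F x) b - (fun x => -F x) a := by
      apply intervalIntegral.integral_eq_sub_of_hasDerivAt
      · intro x hx
        have := (hFd x (hsub hx)).neg
        exact this.congr_deriv (by ring)
      · exact (continuousOn_const.mul (hfc.mono hsub)).intervalIntegrable
    simp only [] at key
    linarith [key]
  -- nonnegativity of F
  have hFnonneg : ∀ x ∈ Set.Ioi (0:ℝ), 0 ≤ F x := by
    intro b hb
    by_contra hneg
    push_neg at hneg
    set c := -F b with hc
    have hcpos : 0 < c := by simp only [hc]; linarith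
    obtain ⟨B₀, hB₀⟩ := eventually_atTop.1 (hQtop.eventually_ge_atTop 0)
    set B := max b B₀ with hB
    have hbB : b ≤ B := le_max_left _ _
    have hBpos : 0 < B := lt_of_lt_of_le hb hbB
    have hη'le : ∀ x, B ≤ x → η' x ≤ -c := by
      intro x hx
      have hxpos : 0 < x := lt_of_lt_of_le hBpos hx
      have hFx : F x ≤ F b := hFanti' hb hxpos (le_trans hbB hx)
      have hQx : 0 ≤ Q x := hB₀ x (le_trans (le_max_right _ _) hx)
      have hexp1 : (1:ℝ) ≤ Real.exp (Q x) := Real.one_le_exp hQx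
      have hprod : Real.exp (-(Q x)) * Real.exp (Q x) = 1 := by
        rw [← Real.exp_add]; simp
      have hFx' : η' x * Real.exp (-(Q x)) ≤ -c := by
        simpa [hF, hc] using hFx
      nlinarith [mul_le_mul_of_nonneg_right hFx' (le_of_lt (Real.exp_pos (Q x)))]
    -- g = η + c x is antitone on Ici B
    have hganti : AntitoneOn (fun x => η x + c * x) (Set.Ici B) := by
      apply antitoneOn_of_deriv_nonpos (convex_Ici B)
      · apply ContinuousOn.add
        · exact hηc.mono (fun y hy => lt_of_lt_of_le hBpos hy)
        · exact (continuous_const.mul continuous_id).continuousOn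
      · intro x hx
        rw [interior_Ici] at hx
        have hxpos : (0:ℝ) < x := lt_trans hBpos hx
        have hcx : HasDerivAt (fun y : ℝ => c * y) c x := by
          simpa using (hasDerivAt_id x).const_mul c
        exact ((hη1 x hxpos).add hcx).differentiableAt.differentiableWithinAt
      · intro x hx
        rw [interior_Ici] at hx
        have hxpos : (0:ℝ) < x := lt_trans hBpos hx
        have hcx : HasDerivAt (fun y : ℝ => c * y) c x := by
          simpa using (hasDerivAt_id x).const_mul c
        rw [show deriv (fun x => η x + c * x) x = η' x + c from ((hη1 x hxpos).add hcx).deriv]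
        have := hη'le x (le_of_lt hx)
        linarith
    set x₀ := B + η B / c + 1 with hx₀
    have hBx₀ : B ≤ x₀ := by
      have : 0 < η B / c := div_pos (hηpos B hBpos) hcpos
      simp only [hx₀]; linarith
    have hgle := hganti (Set.self_mem_Ici) hBx₀ hBx₀
    have hx₀pos : 0 < x₀ := lt_of_lt_of_le hBpos hBx₀
    have hηx₀ := hηpos x₀ hx₀pos
    have hcancel : c * (η B / c) = η B := by field_simp
    simp only [hx₀] at hgle hηx₀
    nlinarith [hgle, hηx₀, hcancel]
  -- limit at infinity
  set G : ℝ → ℝ := fun x => F (max 1 x) with hG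
  have hmemG : ∀ x : ℝ, max 1 x ∈ Set.Ioi (0:ℝ) := fun x =>
    Set.mem_Ioi.2 (lt_of_lt_of_le one_pos (le_max_left _ _))
  have hGanti : Antitone G := by
    intro x y hxy
    exact hFanti' (hmemG x) (hmemG y) (max_le_max le_rfl hxy)
  have hGbdd : BddBelow (Set.range G) := by
    refine ⟨0, ?_⟩
    rintro z ⟨x, rfl⟩
    exact hFnonneg _ (hmemG x)
  have hGtend : Tendsto G atTop (𝓝 (⨅ x, G x)) := tendsto_atTop_ciInf hGanti hGbdd
  set Finf : ℝ := ⨅ x, G x with hFinf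
  have hFtend : Tendsto F atTop (𝓝 Finf) := by
    refine hGtend.congr' ?_
    filter_upwards [eventually_ge_atTop (1:ℝ)] with x hx
    simp only [hG, max_eq_right hx]
  have hFinf0 : 0 ≤ Finf := by
    refine ge_of_tendsto hFtend ?_
    filter_upwards [eventually_gt_atTop (0:ℝ)] with x hx
    exact hFnonneg x hx
  -- limit at 0+
  set gE : ℝ → ℝ≥0∞ := fun x => ENNReal.ofReal (F x) with hgE
  have hgEanti : AntitoneOn gE (Set.Ioi 0) := fun x hx y hy hxy =>
    ENNReal.ofReal_le_ofReal (hFanti' hx hy hxy)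
  set F0 : ℝ≥0∞ := sSup (gE '' Set.Ioi 0) with hF0
  have hF0tend : Tendsto gE (𝓝[>] (0:ℝ)) (𝓝 F0) :=
    hgEanti.tendsto_nhdsGT (OrderTop.bddAbove _)
  have hF0pos : 0 < F0 := by
    have h12 : F 2 < F 1 := hFanti (by norm_num) (by norm_num) (by norm_num)
    have hF1pos : 0 < F 1 := lt_of_le_of_lt (hFnonneg 2 (by norm_num)) h12
    have hle : gE 1 ≤ F0 := le_sSup ⟨1, by norm_num, rfl⟩
    exact lt_of_lt_of_le (ENNReal.ofReal_pos.2 hF1pos) hle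
  -- sequences
  set a : ℕ → ℝ := fun n => ((n:ℝ)+1)⁻¹ with ha
  set b : ℕ → ℝ := fun n => (n:ℝ)+1 with hbdef
  have hbpos : ∀ n, (1:ℝ) ≤ b n := by
    intro n
    simp only [hbdef]
    have : (0:ℝ) ≤ (n:ℝ) := Nat.cast_nonneg n
    linarith
  have hapos : ∀ n, 0 < a n := by
    intro n; simp only [ha]; positivity
  have ha1 : ∀ n, a n ≤ 1 := by
    intro n
    simp only [ha]
    rw [inv_le_one_iff₀]
    right; linarith [hbpos n]
  have hab : ∀ n, a n ≤ b n := fun n => le_trans (ha1 n) (hbpos n)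
  have haanti : Antitone a := by
    intro n m hnm
    simp only [ha]
    apply inv_anti₀
    · positivity
    · have : (n:ℝ) ≤ (m:ℝ) := Nat.cast_le.2 hnm
      linarith
  have hbmono : Monotone b := by
    intro n m hnm
    simp only [hbdef]
    have : (n:ℝ) ≤ (m:ℝ) := Nat.cast_le.2 hnm
    linarith
  have hbtop : Tendsto b atTop atTop :=
    tendsto_atTop_add_const_right _ 1 tendsto_natCast_atTop_atTop
  have hatend : Tendsto a atTop (𝓝[>] (0:ℝ)) := by
    apply tendsto_nhdsWithin_of_tendsto_nhds_of_eventually_within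
    · exact hbtop.inv_tendsto_atTop
    · exact Eventually.of_forall (fun n => hapos n)
  -- sequence limits
  have h1 : Tendsto (fun n => gE (a n)) atTop (𝓝 F0) := hF0tend.comp hatend
  have h2 : Tendsto (fun n => ENNReal.ofReal (F (b n))) atTop (𝓝 (ENNReal.ofReal Finf)) :=
    (ENNReal.continuous_ofReal.tendsto _).comp (hFtend.comp hbtop)
  set d : ℕ → ℝ≥0∞ := fun n => gE (a n) - ENNReal.ofReal (F (b n)) with hd
  have hdtend : Tendsto d atTop (𝓝 (F0 - ENNReal.ofReal Finf)) :=
    ENNReal.Tendsto.sub h1 h2 (Or.inr ENNReal.ofReal_ne_top)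
  have hdmono : Monotone d := by
    intro n m hnm
    simp only [hd]
    apply tsub_le_tsub
    · exact hgEanti (mem_Ioi.2 (hapos m)) (mem_Ioi.2 (hapos n)) (haanti hnm)
    · apply ENNReal.ofReal_le_ofReal
      exact hFanti' (mem_Ioi.2 (lt_of_lt_of_le one_pos (hbpos n)))
        (mem_Ioi.2 (lt_of_lt_of_le one_pos (hbpos m))) (hbmono hnm)
  have hsupd : (⨆ n, d n) = F0 - ENNReal.ofReal Finf :=
    tendsto_nhds_unique (tendsto_atTop_iSup hdmono) hdtend
  -- lintegral over Ioc (a n) (b n)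
  set fE : ℝ → ℝ≥0∞ := fun y => ENNReal.ofReal (η y * Real.exp (-(Q y))) with hfE
  have hsubn : ∀ n, Set.Ioc (a n) (b n) ⊆ Set.Ioi (0:ℝ) := fun n y hy =>
    lt_trans (hapos n) hy.1
  have hint : ∀ n, ∫⁻ y in Set.Ioc (a n) (b n), fE y
      = ENNReal.ofReal ((F (a n) - F (b n)) / (2*l)) := by
    intro n
    have hIcc : Set.Icc (a n) (b n) ⊆ Set.Ioi (0:ℝ) := fun y hy =>
      lt_of_lt_of_le (hapos n) hy.1
    have hInt : IntegrableOn (fun y => η y * Real.exp (-(Q y))) (Set.Ioc (a n) (b n)) :=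
      ((hfc.mono hIcc).integrableOn_Icc).mono_set Set.Ioc_subset_Icc_self
    have hnn : 0 ≤ᵐ[volume.restrict (Set.Ioc (a n) (b n))]
        (fun y => η y * Real.exp (-(Q y))) := by
      apply ae_restrict_of_forall_mem measurableSet_Ioc
      intro y hy
      have := hηpos y (hsubn n hy)
      positivity
    rw [hfE, ← ofReal_integral_eq_lintegral_ofReal hInt hnn]
    congr 1
    have h2l := hFTC (a n) (b n) (hapos n) (hab n)
    rw [intervalIntegral.integral_const_mul] at h2l
    rw [← intervalIntegral.integral_of_le (hab n)]
    field_simp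
    linarith [h2l]
  -- monotone convergence
  have hmeasf : AEMeasurable (fun y => η y * Real.exp (-(Q y))) (volume.restrict (Set.Ioi 0)) :=
    hfc.aemeasurable measurableSet_Ioi
  have hmeasE : AEMeasurable fE (volume.restrict (Set.Ioi 0)) :=
    ENNReal.measurable_ofReal.comp_aemeasurable hmeasf
  have hgmeas : ∀ n, AEMeasurable ((Set.Ioc (a n) (b n)).indicator fE) volume := by
    intro n
    rw [aemeasurable_indicator_iff measurableSet_Ioc]
    have hrr : volume.restrict (Set.Ioc (a n) (b n))
        = (volume.restrict (Set.Ioi 0)).restrict (Set.Ioc (a n) (b n)) := by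
      rw [Measure.restrict_restrict measurableSet_Ioc,
        Set.inter_eq_left.2 (hsubn n)]
    rw [hrr]
    exact hmeasE.restrict
  have hss : ∀ n m, n ≤ m → Set.Ioc (a n) (b n) ⊆ Set.Ioc (a m) (b m) := fun n m hnm =>
    Set.Ioc_subset_Ioc (haanti hnm) (hbmono hnm)
  have hmono : ∀ x, Monotone fun n => (Set.Ioc (a n) (b n)).indicator fE x := by
    intro x n m hnm
    exact Set.indicator_le_indicator_of_subset (hss n m hnm) (fun _ => zero_le) x
  have hsup : ∀ x, (⨆ n, (Set.Ioc (a n) (b n)).indicator fE x) = (Set.Ioi 0).indicator fE x := by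
    intro x
    by_cases hx : x ∈ Set.Ioi (0:ℝ)
    · obtain ⟨N, hN⟩ : ∃ N : ℕ, max x x⁻¹ < (N:ℝ) := exists_nat_gt _
      have hxN : x ∈ Set.Ioc (a N) (b N) := by
        constructor
        · simp only [ha]
          have hxinv : x⁻¹ < (N:ℝ) + 1 := lt_trans (lt_of_le_of_lt (le_max_right _ _) hN) (by linarith)
          have hxpos : (0:ℝ) < x := hx
          rw [inv_lt_iff_one_lt_mul₀ (by positivity)]
          nlinarith [mul_lt_mul_of_pos_left hxinv hxpos, mul_inv_cancel₀ (ne_of_gt hxpos)]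
        · simp only [hbdef]
          have : x < (N:ℝ) := lt_of_le_of_lt (le_max_left _ _) hN
          linarith
      rw [Set.indicator_of_mem hx]
      apply le_antisymm
      · exact iSup_le fun m => Set.indicator_le_self _ _ x
      · rw [← Set.indicator_of_mem hxN fE]
        exact le_iSup (fun n => (Set.Ioc (a n) (b n)).indicator fE x) N
    · have hnot : ∀ n, x ∉ Set.Ioc (a n) (b n) := fun n h => hx (hsubn n h)
      simp [Set.indicator_of_notMem, hx, hnot]
  have hkey : ∫⁻ y in Set.Ioi (0:ℝ), fE y = ⨆ n, ∫⁻ y in Set.Ioc (a n) (b n), fE y := by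
    rw [← lintegral_indicator measurableSet_Ioi fE]
    calc ∫⁻ x, (Set.Ioi (0:ℝ)).indicator fE x
        = ∫⁻ x, ⨆ n, (Set.Ioc (a n) (b n)).indicator fE x := by
          congr 1; funext x; rw [hsup]
      _ = ⨆ n, ∫⁻ x, (Set.Ioc (a n) (b n)).indicator fE x :=
          lintegral_iSup' hgmeas (ae_of_all _ hmono)
      _ = ⨆ n, ∫⁻ y in Set.Ioc (a n) (b n), fE y := by
          simp_rw [lintegral_indicator measurableSet_Ioc fE]
  -- identity
  have hId : (∫⁻ y in Set.Ioi (0:ℝ), fE y)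
      = (F0 - ENNReal.ofReal Finf) / ENNReal.ofReal (2*l) := by
    rw [hkey]
    have heach : ∀ n, ∫⁻ y in Set.Ioc (a n) (b n), fE y = d n / ENNReal.ofReal (2*l) := by
      intro n
      rw [hint n, ENNReal.ofReal_div_of_pos (by linarith),
        ENNReal.ofReal_sub _ (hFnonneg (b n) (mem_Ioi.2 (lt_of_lt_of_le one_pos (hbpos n))))]
    simp_rw [heach]
    rw [← ENNReal.iSup_div, hsupd]
  -- integrability criterion
  have hofne : ENNReal.ofReal (2*l) ≠ 0 := by
    simp only [ne_eq, ENNReal.ofReal_eq_zero, not_le]; linarith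
  have hiff : IntegrableOn (fun y => η y * Real.exp (-(Q y))) (Set.Ioi (0:ℝ)) ↔ F0 < ⊤ := by
    have hnorm : (∫⁻ y in Set.Ioi (0:ℝ), fE y)
        = ∫⁻ y in Set.Ioi (0:ℝ), (‖η y * Real.exp (-(Q y))‖₊ : ℝ≥0∞) := by
      apply lintegral_congr_ae
      apply ae_restrict_of_forall_mem measurableSet_Ioi
      intro y hy
      have h1 := hηpos y hy
      have h2 : 0 ≤ η y * Real.exp (-(Q y)) := by positivity
      simp only [hfE]
      rw [← Real.enorm_eq_ofReal h2, enorm_eq_nnnorm]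
    have hlt : (∫⁻ y in Set.Ioi (0:ℝ), fE y) < ⊤ ↔ F0 < ⊤ := by
      rw [hId]
      constructor
      · intro h
        by_contra htop
        push_neg at htop
        rw [top_le_iff] at htop
        have : (F0 - ENNReal.ofReal Finf) / ENNReal.ofReal (2*l) = ⊤ := by
          rw [ENNReal.div_eq_top]
          right
          exact ⟨by rw [ENNReal.sub_eq_top_iff]; exact ⟨htop, ENNReal.ofReal_ne_top⟩,
            ENNReal.ofReal_ne_top⟩
        rw [this] at h
        exact absurd h (lt_irrefl _)
      · intro h
        exact ENNReal.div_lt_top (ENNReal.sub_ne_top (ne_of_lt h)) hofne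
    rw [← hlt, hnorm]
    constructor
    · intro h
      exact h.2
    · intro h
      exact ⟨(hfc.aestronglyMeasurable measurableSet_Ioi), h⟩
  exact ⟨F0, Finf, hF0tend, hF0pos, hFtend, hFinf0, hId, hiff⟩
end

section
/- Let q : (0,∞) → ℝ be C¹ and let a > 0 be such that q(x) > 0 and q²(x) − q'(x) ≥ 1 for all x ≥ a. Then ∫ₐ^∞ e^{−Q(x)} dx ≤ q(a) e^{−Q(a)} < ∞. -/
open Filter Set Topology MeasureTheory

/-- Let `q : (0,∞) → ℝ` be `C¹` and let `a > 0` be such that `q(x) > 0`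
and `q²(x) − q'(x) ≥ 1` for all `x ≥ a`. Then `∫ₐ^∞ e^{−Q(x)} dx ≤ q(a) e^{−Q(a)} < ∞`. -/
theorem speed_measure_tail_integrable_of_potential_ge_one (q q' Q : ℝ → ℝ) (a : ℝ)
    (hderiv : ∀ x ∈ Set.Ioi (0:ℝ), HasDerivAt q (q' x) x)
    (hcont : ContinuousOn q' (Set.Ioi 0))
    (hQ : ∀ x ∈ Set.Ioi (0:ℝ), Q x = 2 * ∫ u in (1:ℝ)..x, q u)
    (ha : 0 < a)
    (hqpos : ∀ x, a ≤ x → 0 < q x)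
    (hq1 : ∀ x, a ≤ x → 1 ≤ (q x) ^ 2 - q' x) :
    MeasureTheory.IntegrableOn (fun x => Real.exp (-(Q x))) (Set.Ioi a) ∧
    ∫ x in Set.Ioi a, Real.exp (-(Q x)) ≤ q a * Real.exp (-(Q a)) := by
  -- continuity of q on Ioi 0
  have hqcont : ContinuousOn q (Set.Ioi 0) := fun x hx =>
    (hderiv x hx).continuousAt.continuousWithinAt
  -- Q has derivative 2 * q x on Ioi 0
  have hQderiv : ∀ x ∈ Set.Ioi (0:ℝ), HasDerivAt Q (2 * q x) x := by
    intro x hx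
    have hint : IntervalIntegrable q MeasureTheory.volume 1 x := by
      apply ContinuousOn.intervalIntegrable
      apply hqcont.mono
      intro y hy
      rcases Set.mem_uIcc.1 hy with h | h
      · exact lt_of_lt_of_le one_pos h.1
      · exact lt_of_lt_of_le hx h.1
    have hca : ContinuousAt q x :=
      hqcont.continuousAt (isOpen_Ioi.mem_nhds hx)
    have h1 : HasDerivAt (fun u => ∫ t in (1:ℝ)..u, q t) (q x) x :=
      intervalIntegral.integral_hasDerivAt_right hint
        (hqcont.stronglyMeasurableAtFilter isOpen_Ioi x hx) hca
    have h2 : HasDerivAt (fun u => 2 * ∫ t in (1:ℝ)..u, q t) (2 * q x) x :=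
      h1.const_mul 2
    apply h2.congr_of_eventuallyEq
    filter_upwards [isOpen_Ioi.mem_nhds hx] with y hy using (hQ y hy)
  -- the auxiliary function g
  set g : ℝ → ℝ := fun x => -(q x * Real.exp (-(Q x))) with hg_def
  set φ : ℝ → ℝ := fun x => (2 * (q x) ^ 2 - q' x) * Real.exp (-(Q x)) with hφ_def
  have hsub : Set.Ici a ⊆ Set.Ioi (0:ℝ) := fun x hx => lt_of_lt_of_le ha hx
  have hgderiv : ∀ x ∈ Set.Ici a, HasDerivAt g (φ x) x := by
    intro x hx
    have hx0 := hsub hx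
    have hE : HasDerivAt (fun y => Real.exp (-(Q y))) (-(2 * q x) * Real.exp (-(Q x))) x := by
      have := ((hQderiv x hx0).neg).exp
      convert this using 1
      · rfl
      · simp only [Pi.neg_apply]; ring
    have : HasDerivAt (fun y => -(q y * Real.exp (-(Q y))))
        (-(q' x * Real.exp (-(Q x)) + q x * (-(2 * q x) * Real.exp (-(Q x))))) x :=
      ((hderiv x hx0).mul hE).neg
    convert this using 1
    show (2 * (q x) ^ 2 - q' x) * Real.exp (-(Q x)) = _
    ring
  -- φ dominates exp(-Q) on [a, ∞)
  have hφge : ∀ x, a ≤ x → Real.exp (-(Q x)) ≤ φ x := by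
    intro x hx
    have h1 : 1 ≤ 2 * (q x) ^ 2 - q' x := by
      have := hq1 x hx
      nlinarith [sq_nonneg (q x)]
    calc Real.exp (-(Q x)) = 1 * Real.exp (-(Q x)) := by ring
      _ ≤ (2 * (q x) ^ 2 - q' x) * Real.exp (-(Q x)) := by
          exact mul_le_mul_of_nonneg_right h1 (Real.exp_pos _).le
  have hφpos : ∀ x ∈ Set.Ioi a, 0 ≤ φ x := fun x hx =>
    le_trans (Real.exp_pos _).le (hφge x hx.le)
  -- g is monotone on Ici a
  have hgmono : MonotoneOn g (Set.Ici a) := by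
    apply monotoneOn_of_hasDerivWithinAt_nonneg (convex_Ici a)
      (fun x hx => (hgderiv x hx).continuousAt.continuousWithinAt)
      (fun x hx => (hgderiv x (interior_subset hx)).hasDerivWithinAt)
    intro x hx
    rw [interior_Ici] at hx
    exact hφpos x hx
  -- g is bounded above by 0 on Ici a
  have hgneg : ∀ x, a ≤ x → g x ≤ 0 := by
    intro x hx
    simp only [hg_def]
    have := mul_pos (hqpos x hx) (Real.exp_pos (-(Q x)))
    linarith
  -- limit of g at infinity
  set G : ℝ → ℝ := fun x => g (max x a) with hG_def
  have hGmono : Monotone G := by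
    intro x y hxy
    exact hgmono (le_max_right x a) (le_max_right y a) (max_le_max hxy le_rfl)
  have hGbdd : BddAbove (Set.range G) := by
    refine ⟨0, ?_⟩
    rintro _ ⟨x, rfl⟩
    exact hgneg _ (le_max_right x a)
  have hGtend : Tendsto G atTop (𝓝 (⨆ x, G x)) := tendsto_atTop_ciSup hGmono hGbdd
  have hgtend : Tendsto g atTop (𝓝 (⨆ x, G x)) := by
    apply hGtend.congr'
    filter_upwards [Filter.eventually_ge_atTop a] with x hx
    simp [hG_def, max_eq_left hx]
  have hl : (⨆ x, G x) ≤ 0 := ciSup_le fun x => hgneg _ (le_max_right x a)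
  -- integrability and value of ∫ φ
  have hφint : MeasureTheory.IntegrableOn φ (Set.Ioi a) :=
    integrableOn_Ioi_deriv_of_nonneg' hgderiv hφpos hgtend
  have hφval : ∫ x in Set.Ioi a, φ x = (⨆ x, G x) - g a :=
    integral_Ioi_of_hasDerivAt_of_nonneg' hgderiv hφpos hgtend
  -- exp(-Q) is integrable on Ioi a
  have hQcont : ContinuousOn (fun x => Real.exp (-(Q x))) (Set.Ioi a) := by
    intro x hx
    exact ((hQderiv x (hsub (Set.mem_Ici.2 (le_of_lt hx)))).continuousAt.neg.rexp).continuousWithinAt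
  have hint : MeasureTheory.IntegrableOn (fun x => Real.exp (-(Q x))) (Set.Ioi a) := by
    apply hφint.mono' (hQcont.aestronglyMeasurable measurableSet_Ioi)
    filter_upwards [MeasureTheory.ae_restrict_mem measurableSet_Ioi] with x hx
    rw [Real.norm_eq_abs, abs_of_nonneg (Real.exp_pos _).le]
    exact hφge x hx.le
  refine ⟨hint, ?_⟩
  have hle : ∫ x in Set.Ioi a, Real.exp (-(Q x)) ≤ ∫ x in Set.Ioi a, φ x := by
    apply MeasureTheory.setIntegral_mono_on hint hφint measurableSet_Ioi
    intro x hx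
    exact hφge x hx.le
  have : ∫ x in Set.Ioi a, φ x ≤ q a * Real.exp (-(Q a)) := by
    rw [hφval]
    simp only [hg_def]
    linarith
  linarith
end

section
/- Let q : (0,∞) → ℝ be C¹ and suppose there exist x₀ ≥ 1 and q₀ > 0 such that: q(x) ≥ q₀ for all x ≥ x₀; limsup_{x→∞} q'(x)/(2q²(x)) < 1; and ∫_{x₀}^∞ dx/q(x) < ∞. Then ∫₁^∞ e^{Q(y)} (∫_y^∞ e^{−Q(z)} dz) dy < ∞, i.e. hypothesis (H5) holds. -/
open Filter Set Topology MeasureTheory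
open scoped ENNReal

/-- Let `q : (0,∞) → ℝ` be `C¹` and suppose there exist `x₀ ≥ 1` and
`q₀ > 0` such that `q(x) ≥ q₀` for all `x ≥ x₀`, `limsup_{x→∞} q'(x)/(2q²(x)) < 1`, and
`∫_{x₀}^∞ dx/q(x) < ∞`. Then `∫₁^∞ e^{Q(y)} (∫_y^∞ e^{−Q(z)} dz) dy < ∞`,
i.e. hypothesis (H5) holds. -/
theorem H5_of_integrable_inverse_drift (q q' Q : ℝ → ℝ) (x₀ q₀ : ℝ)
    (hderiv : ∀ x ∈ Set.Ioi (0:ℝ), HasDerivAt q (q' x) x)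
    (hcont : ContinuousOn q' (Set.Ioi 0))
    (hQ : ∀ x ∈ Set.Ioi (0:ℝ), Q x = 2 * ∫ u in (1:ℝ)..x, q u)
    (hx₀ : 1 ≤ x₀) (hq₀ : 0 < q₀)
    (hlower : ∀ x, x₀ ≤ x → q₀ ≤ q x)
    (hlimsup : Filter.limsup (fun x => ((q' x / (2 * (q x) ^ 2) : ℝ) : EReal)) atTop < 1)
    (hint : MeasureTheory.IntegrableOn (fun x => 1 / q x) (Set.Ici x₀)) :
    ∫⁻ y in Set.Ioi (1:ℝ),
        ENNReal.ofReal (Real.exp (Q y)) *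
          ∫⁻ z in Set.Ioi y, ENNReal.ofReal (Real.exp (-(Q z))) < ⊤ := by
  have hqcont : ContinuousOn q (Set.Ioi 0) := fun x hx =>
    (hderiv x hx).continuousAt.continuousWithinAt
  set qc : ℝ → ℝ := fun x => q (max x (1/2)) with hqc_def
  have hqc_cont : Continuous qc := by
    apply hqcont.comp_continuous (continuous_id.max continuous_const)
    intro x
    simp only [Set.mem_Ioi, lt_max_iff]
    right; norm_num
  have hqc_eq : ∀ x : ℝ, (1/2:ℝ) ≤ x → qc x = q x := by
    intro x hx
    simp only [hqc_def]
    rw [max_eq_left hx]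
  set R : ℝ → ℝ := fun x => 2 * ∫ u in (1:ℝ)..x, qc u with hR_def
  have hR_cont : Continuous R := by
    have h : Continuous fun x => ∫ u in (1:ℝ)..x, qc u := by
      rw [continuous_iff_continuousAt]
      exact fun b => ((hqc_cont.integral_hasStrictDerivAt 1 b).hasDerivAt).continuousAt
    exact continuous_const.mul h
  have hRQ : ∀ x : ℝ, (1/2:ℝ) < x → R x = Q x := by
    intro x hx
    rw [hQ x (by simp; linarith)]
    simp only [hR_def]
    congr 1
    apply intervalIntegral.integral_congr
    intro u hu
    apply hqc_eq
    rcases le_total 1 x with h | h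
    · have := hu.1; rw [uIcc_of_le h] at hu; linarith [hu.1]
    · rw [uIcc_of_ge h] at hu; linarith [hu.1]
  have hR_deriv : ∀ x : ℝ, (1/2:ℝ) < x → HasDerivAt R (2 * q x) x := by
    intro x hx
    have h := ((hqc_cont.integral_hasStrictDerivAt 1 x).hasDerivAt).const_mul (2:ℝ)
    simpa [hqc_eq x hx.le] using h
  -- extract c < 1 and threshold
  obtain ⟨C, hC1, hC2⟩ := exists_between hlimsup
  have hCtop : C ≠ ⊤ := ne_top_of_lt hC2
  have hCbot : C ≠ ⊥ := (bot_le.trans_lt hC1).ne'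
  lift C to ℝ using ⟨hCtop, hCbot⟩
  have hc1 : C < 1 := by exact_mod_cast hC2
  have hev := eventually_lt_of_limsup_lt hC1
  rw [eventually_atTop] at hev
  obtain ⟨X', hX'⟩ := hev
  set X : ℝ := max x₀ X' with hX_def
  have hXx₀ : x₀ ≤ X := le_max_left _ _
  have hX1 : (1:ℝ) ≤ X := le_trans hx₀ hXx₀
  have hXhalf : (1/2:ℝ) < X := by linarith
  have hqpos : ∀ x, X ≤ x → 0 < q x := fun x hx =>
    lt_of_lt_of_le hq₀ (hlower x (le_trans hXx₀ hx))
  have hXc : ∀ x, X ≤ x → q' x / (2 * q x ^ 2) ≤ C := by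
    intro x hx
    have := hX' x (le_trans (le_max_right _ _) hx)
    exact_mod_cast this.le
  -- growth of R
  have hgrow : ∀ w z : ℝ, X ≤ w → w ≤ z → 2 * (q₀ * (z - w)) ≤ R z - R w := by
    intro w z hw hz
    have hRz : R z - R w = 2 * ∫ u in w..z, qc u := by
      simp only [hR_def]
      rw [← mul_sub, intervalIntegral.integral_interval_sub_left
        (hqc_cont.intervalIntegrable 1 z) (hqc_cont.intervalIntegrable 1 w)]
    rw [hRz]
    have hmono : q₀ * (z - w) ≤ ∫ u in w..z, qc u := by
      have h := intervalIntegral.integral_mono_on hz (intervalIntegrable_const : IntervalIntegrable (fun _ => q₀) volume w z)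
        (hqc_cont.intervalIntegrable w z) (fun u hu => ?_)
      · rw [intervalIntegral.integral_const, smul_eq_mul] at h
        linarith
      · rw [hqc_eq u (by linarith [hu.1])]
        exact hlower u (by linarith [hu.1])
    linarith
  -- integrability of exp (-(R z)) on Ioi X
  have hexpint : IntegrableOn (fun z => Real.exp (-(R z))) (Set.Ioi X) := by
    have hmaj : IntegrableOn
        (fun z => Real.exp (-(R X) + 2*q₀*X) * Real.exp (-(2*q₀) * z)) (Set.Ioi X) :=
      (exp_neg_integrableOn_Ioi X (by positivity)).const_mul _
    apply Integrable.mono' hmaj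
      ((Real.continuous_exp.comp hR_cont.neg).aestronglyMeasurable.restrict)
    filter_upwards [ae_restrict_mem measurableSet_Ioi] with z hz
    simp only [Function.comp_apply]
    rw [Real.norm_eq_abs, abs_of_pos (Real.exp_pos _), ← Real.exp_add]
    apply Real.exp_le_exp.mpr
    have := hgrow X z le_rfl (le_of_lt hz)
    rw [Pi.neg_apply]
    nlinarith
  -- the primitive J
  set J : ℝ → ℝ := fun z => ∫ y in (1:ℝ)..z, Real.exp (R y) with hJ_def
  have hJ_deriv : ∀ z : ℝ, HasDerivAt J (Real.exp (R z)) z := fun z =>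
    ((Real.continuous_exp.comp hR_cont).integral_hasStrictDerivAt 1 z).hasDerivAt
  have hJ_cont : Continuous J := by
    rw [continuous_iff_continuousAt]; exact fun z => (hJ_deriv z).continuousAt
  -- φ and its derivative
  set φ : ℝ → ℝ := fun z => Real.exp (R z) / (2 * q z) with hφ_def
  have hφ_deriv : ∀ z, X ≤ z →
      HasDerivAt φ (Real.exp (R z) * (1 - q' z / (2 * q z ^ 2))) z := by
    intro z hz
    have hz0 : (0:ℝ) < z := by linarith
    have h1 : HasDerivAt (fun z => Real.exp (R z)) (Real.exp (R z) * (2 * q z)) z :=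
      (hR_deriv z (by linarith)).exp
    have h2 : HasDerivAt (fun z => 2 * q z) (2 * q' z) z :=
      (hderiv z hz0).const_mul 2
    have hqz : 0 < q z := hqpos z hz
    have hne : 2 * q z ≠ 0 := by positivity
    have h3 := h1.div h2 hne
    refine h3.congr_deriv ?_
    field_simp [hqz.ne']
  -- ψ monotone
  set ψ : ℝ → ℝ := fun z => φ z - (1 - C) * J z with hψ_def
  have hψ_mono : MonotoneOn ψ (Set.Ici X) := by
    apply monotoneOn_of_deriv_nonneg (convex_Ici X)
    · intro z hz
      exact ((hφ_deriv z hz).sub ((hJ_deriv z).const_mul _)).continuousAt.continuousWithinAt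
    · intro z hz
      rw [interior_Ici] at hz
      exact ((hφ_deriv z hz.le).sub
        ((hJ_deriv z).const_mul _)).differentiableAt.differentiableWithinAt
    · intro z hz
      rw [interior_Ici] at hz
      have hd := (hφ_deriv z hz.le).sub ((hJ_deriv z).const_mul (1 - C))
      rw [show deriv ψ z = _ from hd.deriv]
      have hc := hXc z hz.le
      nlinarith [Real.exp_pos (R z), mul_nonneg (sub_nonneg.mpr hc) (Real.exp_pos (R z)).le]
  set K : ℝ := (1 - C) * J X - φ X with hK_def
  have hJbound : ∀ z, X ≤ z → (1 - C) * J z ≤ φ z + K := by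
    intro z hz
    have h := hψ_mono (self_mem_Ici) hz hz
    simp only [hψ_def] at h
    simp only [hK_def]
    linarith
  have h1C : (0:ℝ) < 1 - C := by linarith
  -- the product function and its integrability
  set g : ℝ → ℝ := fun z => Real.exp (-(R z)) * J z with hg_def
  have hg_cont : Continuous g := (Real.continuous_exp.comp hR_cont.neg).mul hJ_cont
  have hg_nonneg : ∀ z, 1 ≤ z → 0 ≤ g z := by
    intro z hz
    apply mul_nonneg (Real.exp_pos _).le
    exact intervalIntegral.integral_nonneg hz (fun u _ => (Real.exp_pos _).le)
  have hgint : IntegrableOn g (Set.Ioi 1) := by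
    have h1 : IntegrableOn g (Set.Ioc 1 X) :=
      (hg_cont.integrableOn_Icc).mono_set Set.Ioc_subset_Icc_self
    have h2 : IntegrableOn g (Set.Ioi X) := by
      have hmaj : IntegrableOn
          (fun z => (1 / (2 * q z) + K * Real.exp (-(R z))) / (1 - C)) (Set.Ioi X) := by
        apply Integrable.div_const
        apply Integrable.add
        · have hq1 : IntegrableOn (fun z => 1 / q z) (Set.Ioi X) :=
            hint.mono_set (fun z hz => le_trans hXx₀ (le_of_lt hz))
          have := hq1.const_mul (1/2 : ℝ)
          apply this.congr
          filter_upwards with z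
          rw [one_div, one_div, one_div, mul_inv]
        · exact hexpint.const_mul _
      apply Integrable.mono' hmaj hg_cont.aestronglyMeasurable.restrict
      filter_upwards [ae_restrict_mem measurableSet_Ioi] with z hz
      have hzX : X ≤ z := (le_of_lt hz)
      rw [Real.norm_eq_abs, abs_of_nonneg (hg_nonneg z (le_trans hX1 hzX))]
      have hb := hJbound z hzX
      have hqz : 0 < q z := hqpos z hzX
      have hexppos := Real.exp_pos (-(R z))
      have e1 : Real.exp (-(R z)) * φ z = 1 / (2 * q z) := by
        simp only [hφ_def]
        rw [Real.exp_neg]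
        field_simp
      rw [le_div_iff₀ h1C]
      have h3 := mul_le_mul_of_nonneg_left hb hexppos.le
      simp only [hg_def]
      nlinarith [h3, e1]
    exact (h1.union h2).mono_set (fun z hz => by
      rcases le_or_gt z X with h | h
      · exact Or.inl ⟨hz, h⟩
      · exact Or.inr h)
  -- Step 0: replace Q by R in the goal
  have step0 : (∫⁻ y in Set.Ioi (1:ℝ), ENNReal.ofReal (Real.exp (Q y)) *
        ∫⁻ z in Set.Ioi y, ENNReal.ofReal (Real.exp (-(Q z))))
      = ∫⁻ y in Set.Ioi (1:ℝ), ENNReal.ofReal (Real.exp (R y)) *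
        ∫⁻ z in Set.Ioi y, ENNReal.ofReal (Real.exp (-(R z))) := by
    apply setLIntegral_congr_fun_ae measurableSet_Ioi
    apply ae_of_all
    intro y hy
    have hy1 : (1:ℝ) < y := hy
    rw [← hRQ y (by linarith)]
    congr 1
    apply setLIntegral_congr_fun_ae measurableSet_Ioi
    apply ae_of_all
    intro z hz
    have hz1 : y < z := hz
    rw [← hRQ z (by linarith)]
  rw [step0]
  set A : ℝ → ℝ≥0∞ := fun y => ENNReal.ofReal (Real.exp (R y)) with hA_def
  set B : ℝ → ℝ≥0∞ := fun z => ENNReal.ofReal (Real.exp (-(R z))) with hB_def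
  have hA_meas : Measurable A :=
    ENNReal.measurable_ofReal.comp (Real.continuous_exp.comp hR_cont).measurable
  have hB_meas : Measurable B :=
    ENNReal.measurable_ofReal.comp (Real.continuous_exp.comp hR_cont.neg).measurable
  have hswap : (∫⁻ y in Set.Ioi (1:ℝ), A y * ∫⁻ z in Set.Ioi y, B z)
      = ∫⁻ z in Set.Ioi (1:ℝ), B z * ∫⁻ y in Set.Ioo 1 z, A y := by
    have step1 : (∫⁻ y in Set.Ioi (1:ℝ), A y * ∫⁻ z in Set.Ioi y, B z)
        = ∫⁻ y in Set.Ioi (1:ℝ), ∫⁻ z in Set.Ioi (1:ℝ),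
            A y * (Set.Ioi y).indicator B z := by
      apply setLIntegral_congr_fun_ae measurableSet_Ioi
      apply ae_of_all
      intro y hy
      rw [show (∫⁻ z in Set.Ioi (1:ℝ), A y * (Set.Ioi y).indicator B z)
          = A y * ∫⁻ z in Set.Ioi (1:ℝ), (Set.Ioi y).indicator B z from
        lintegral_const_mul' _ _ ENNReal.ofReal_ne_top]
      congr 1
      rw [lintegral_indicator measurableSet_Ioi _,
        Measure.restrict_restrict measurableSet_Ioi,
        Set.inter_eq_left.mpr (Set.Ioi_subset_Ioi (le_of_lt hy))]
    rw [step1, lintegral_lintegral_swap]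
    · apply setLIntegral_congr_fun_ae measurableSet_Ioi
      apply ae_of_all
      intro z hz
      have hpt : ∀ y : ℝ, A y * (Set.Ioi y).indicator B z
          = (Set.Iio z).indicator (fun y => A y * B z) y := by
        intro y
        by_cases h : y < z
        · rw [Set.indicator_of_mem (Set.mem_Ioi.mpr h),
            Set.indicator_of_mem (Set.mem_Iio.mpr h)]
        · rw [Set.indicator_of_notMem (by simpa using h),
            Set.indicator_of_notMem (by simpa using h), mul_zero]
      simp_rw [hpt]
      rw [lintegral_indicator measurableSet_Iio _,
        Measure.restrict_restrict measurableSet_Iio,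
        show Set.Iio z ∩ Set.Ioi (1:ℝ) = Set.Ioo 1 z from by
          ext t; simp [Set.mem_Ioo, and_comm],
        lintegral_mul_const' _ _ ENNReal.ofReal_ne_top, mul_comm]
    · apply Measurable.aemeasurable
      have huncurry : (Function.uncurry fun y z => A y * (Set.Ioi y).indicator B z)
          = fun p : ℝ × ℝ =>
              A p.1 * ({p : ℝ × ℝ | p.1 < p.2}.indicator (fun p => B p.2) p) := by
        funext p
        simp only [Function.uncurry]
        congr 1
      rw [huncurry]
      exact (hA_meas.comp measurable_fst).mul
        ((hB_meas.comp measurable_snd).indicator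
          (measurableSet_lt measurable_fst measurable_snd))
  rw [hswap]
  have hIoo : ∀ z : ℝ, z ∈ Set.Ioi (1:ℝ) →
      B z * ∫⁻ y in Set.Ioo 1 z, A y = ENNReal.ofReal (g z) := by
    intro z hz
    have hz1 : (1:ℝ) < z := hz
    have hintJ : IntegrableOn (fun y => Real.exp (R y)) (Set.Ioo 1 z) :=
      ((Real.continuous_exp.comp hR_cont).integrableOn_Icc).mono_set
        Set.Ioo_subset_Icc_self
    have hinner : ∫⁻ y in Set.Ioo 1 z, A y = ENNReal.ofReal (J z) := by
      rw [← MeasureTheory.ofReal_integral_eq_lintegral_ofReal hintJ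
        (ae_of_all _ fun y => (Real.exp_pos _).le)]
      congr 1
      simp only [hJ_def]
      rw [intervalIntegral.integral_of_le hz1.le, integral_Ioc_eq_integral_Ioo]
    rw [hinner, hB_def, ← ENNReal.ofReal_mul (Real.exp_pos _).le]
  rw [setLIntegral_congr_fun_ae measurableSet_Ioi (ae_of_all _ hIoo)]
  exact hgint.lintegral_lt_top
end

section
/- Let γ > 0 and let h : [0,∞) → ℝ be C¹ with h(0) = 0, lim_{x→∞} h(x)/√x = −∞ and lim_{x→∞} x·h'(x)/h(x)² = 0. Define q(x) := 1/(2x) − (2/(γx))·h(γx²/4) for x > 0. Then lim_{x→0⁺} x²·(q²(x) − q'(x)) = 3/4; moreover inf_{x>0}(q²(x) − q'(x)) > −∞ and q²(x) − q'(x) → +∞ as x → ∞, i.e. hypothesis (H2) holds. -/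
open Filter Set Topology

lemma keyF (γ : ℝ) (hγ : 0 < γ) (h h' : ℝ → ℝ)
    (hderiv : ∀ x ∈ Set.Ici (0:ℝ), HasDerivWithinAt h (h' x) (Set.Ici 0) x)
    (q : ℝ → ℝ)
    (hq : ∀ x ∈ Set.Ioi (0:ℝ), q x = 1 / (2 * x) - (2 / (γ * x)) * h (γ * x ^ 2 / 4)) :
    ∀ x ∈ Set.Ioi (0:ℝ), (q x) ^ 2 - deriv q x =
      3 / (4 * x ^ 2) - 4 / (γ * x ^ 2) * h (γ * x ^ 2 / 4)
        + 4 / (γ ^ 2 * x ^ 2) * (h (γ * x ^ 2 / 4)) ^ 2 + h' (γ * x ^ 2 / 4) := by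
  intro x hx
  have hx0 : (0:ℝ) < x := hx
  have hu0 : (0:ℝ) < γ * x ^ 2 / 4 := by positivity
  set u : ℝ := γ * x ^ 2 / 4 with hu
  have hinner : HasDerivAt (fun y : ℝ => γ * y ^ 2 / 4) (γ * x / 2) x := by
    have := ((hasDerivAt_pow 2 x).const_mul γ).div_const 4
    convert this using 1
    · rfl
    · rfl
    push_cast
    ring
  have hhat : HasDerivAt h (h' u) u :=
    (hderiv u (le_of_lt hu0)).hasDerivAt (Ici_mem_nhds hu0)
  have hcomp : HasDerivAt (fun y : ℝ => h (γ * y ^ 2 / 4)) (h' u * (γ * x / 2)) x :=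
    hhat.comp x hinner
  have hinv : HasDerivAt (fun y : ℝ => y⁻¹) (-(x ^ 2)⁻¹) x := hasDerivAt_inv hx0.ne'
  have hψ : HasDerivAt (fun y : ℝ => (1/2) * y⁻¹ - (2/γ) * (y⁻¹ * h (γ * y ^ 2 / 4)))
      ((1/2) * (-(x ^ 2)⁻¹) - (2/γ) * ((-(x ^ 2)⁻¹) * h u + x⁻¹ * (h' u * (γ * x / 2)))) x :=
    ((hinv.const_mul (1/2)).sub ((hinv.mul hcomp).const_mul (2/γ)))
  have hev : q =ᶠ[𝓝 x] (fun y : ℝ => (1/2) * y⁻¹ - (2/γ) * (y⁻¹ * h (γ * y ^ 2 / 4))) := by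
    filter_upwards [Ioi_mem_nhds hx0] with y hy
    rw [hq y hy]
    have hy0 : (y:ℝ) ≠ 0 := (show (0:ℝ) < y from hy).ne'
    field_simp
  have hq' : HasDerivAt q
      ((1/2) * (-(x ^ 2)⁻¹) - (2/γ) * ((-(x ^ 2)⁻¹) * h u + x⁻¹ * (h' u * (γ * x / 2)))) x :=
    hψ.congr_of_eventuallyEq hev
  rw [hq'.deriv, hq x hx, ← hu]
  have hγ0 : γ ≠ 0 := hγ.ne'
  have hx0' : x ≠ 0 := hx0.ne'
  field_simp
  ring

set_option maxHeartbeats 1000000 in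
/-- Let `γ > 0` and let `h : [0,∞) → ℝ` be `C¹` with `h(0) = 0`,
`h(x)/√x → −∞` and `x h'(x)/h(x)² → 0` as `x → ∞`. For the drift
`q(x) = 1/(2x) − (2/(γx)) h(γx²/4)` one has `x²(q²(x) − q'(x)) → 3/4` as `x → 0⁺`,
`inf_{x>0}(q² − q') > −∞`, and `q²(x) − q'(x) → +∞` as `x → ∞` (hypothesis (H2)). -/
theorem H2_for_generalized_Feller_drift (γ : ℝ) (hγ : 0 < γ) (h h' : ℝ → ℝ)
    (hderiv : ∀ x ∈ Set.Ici (0:ℝ), HasDerivWithinAt h (h' x) (Set.Ici 0) x)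
    (hcont : ContinuousOn h' (Set.Ici 0))
    (h0 : h 0 = 0)
    (hh1 : Tendsto (fun x => h x / Real.sqrt x) atTop atBot)
    (hh2 : Tendsto (fun x => x * h' x / (h x) ^ 2) atTop (𝓝 0))
    (q : ℝ → ℝ)
    (hq : ∀ x ∈ Set.Ioi (0:ℝ), q x = 1 / (2 * x) - (2 / (γ * x)) * h (γ * x ^ 2 / 4)) :
    Tendsto (fun x => x ^ 2 * ((q x) ^ 2 - deriv q x)) (𝓝[>] (0:ℝ)) (𝓝 (3 / 4)) ∧
    BddBelow ((fun x => (q x) ^ 2 - deriv q x) '' Set.Ioi 0) ∧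
    Tendsto (fun x => (q x) ^ 2 - deriv q x) atTop atTop := by
  have key := keyF γ hγ h h' hderiv q hq
  have hγ0 : γ ≠ 0 := hγ.ne'
  set F : ℝ → ℝ := fun x => (q x) ^ 2 - deriv q x with hF
  -- continuity of h on Ici 0
  have hhc : ContinuousOn h (Set.Ici 0) := fun x hx => (hderiv x hx).continuousWithinAt
  ------------------------------------------------------------------
  -- Part 1 : limit at 0+
  ------------------------------------------------------------------
  have part1 : Tendsto (fun x => x ^ 2 * F x) (𝓝[>] (0:ℝ)) (𝓝 (3 / 4)) := by
    have huT : Tendsto (fun x : ℝ => γ * x ^ 2 / 4) (𝓝[>] (0:ℝ)) (𝓝[Set.Ici 0] 0) := by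
      rw [tendsto_nhdsWithin_iff]
      constructor
      · have hc : Tendsto (fun x : ℝ => γ * x ^ 2 / 4) (𝓝 0) (𝓝 (γ * 0 ^ 2 / 4)) :=
          (Continuous.tendsto (by continuity) 0)
        simpa using hc.mono_left nhdsWithin_le_nhds
      · exact Filter.Eventually.of_forall (fun x => Set.mem_Ici.mpr (by positivity))
    have hA : Tendsto (fun x : ℝ => h (γ * x ^ 2 / 4)) (𝓝[>] (0:ℝ)) (𝓝 0) := by
      have := (hhc 0 Set.self_mem_Ici).tendsto.comp huT
      simpa [h0, Function.comp_def] using this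
    have hB : Tendsto (fun x : ℝ => h' (γ * x ^ 2 / 4)) (𝓝[>] (0:ℝ)) (𝓝 (h' 0)) := by
      have := (hcont 0 Set.self_mem_Ici).tendsto.comp huT
      simpa [Function.comp_def] using this
    have hx2 : Tendsto (fun x : ℝ => x ^ 2) (𝓝[>] (0:ℝ)) (𝓝 0) := by
      have : Tendsto (fun x : ℝ => x ^ 2) (𝓝 0) (𝓝 ((0:ℝ) ^ 2)) :=
        Continuous.tendsto (by continuity) 0
      simpa using this.mono_left nhdsWithin_le_nhds
    have T : Tendsto (fun x : ℝ =>
        3 / 4 - 4 / γ * h (γ * x ^ 2 / 4) + 4 / γ ^ 2 * (h (γ * x ^ 2 / 4)) ^ 2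
          + x ^ 2 * h' (γ * x ^ 2 / 4)) (𝓝[>] (0:ℝ))
        (𝓝 (3 / 4 - 4 / γ * 0 + 4 / γ ^ 2 * 0 ^ 2 + 0 * h' 0)) := by
      exact ((((tendsto_const_nhds).sub (hA.const_mul (4/γ))).add
        ((hA.pow 2).const_mul (4/γ^2))).add (hx2.mul hB))
    have T' : Tendsto (fun x : ℝ =>
        3 / 4 - 4 / γ * h (γ * x ^ 2 / 4) + 4 / γ ^ 2 * (h (γ * x ^ 2 / 4)) ^ 2
          + x ^ 2 * h' (γ * x ^ 2 / 4)) (𝓝[>] (0:ℝ)) (𝓝 (3/4)) := by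
      convert T using 2
      ring
    refine T'.congr' ?_
    filter_upwards [self_mem_nhdsWithin] with x hx
    simp only [hF]
    rw [key x hx]
    have hx0 : x ≠ 0 := (show (0:ℝ) < x from hx).ne'
    field_simp
  ------------------------------------------------------------------
  -- Part 3 : limit at infinity
  ------------------------------------------------------------------
  have part3 : Tendsto F atTop atTop := by
    have huT : Tendsto (fun x : ℝ => γ * x ^ 2 / 4) atTop atTop := by
      apply Tendsto.atTop_div_const (by norm_num : (0:ℝ) < 4)
      exact (tendsto_pow_atTop two_ne_zero).const_mul_atTop hγ
    -- eventual lower bound in u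
    have hE1 : ∀ᶠ u in atTop, h u / Real.sqrt u ≤ -1 := hh1.eventually (eventually_le_atBot (-1))
    have hE2 : ∀ᶠ u in atTop, |u * h' u / (h u) ^ 2| < 1 / (2 * γ) := by
      have hpos : (0:ℝ) < 1 / (2 * γ) := by positivity
      have := hh2.eventually (eventually_abs_sub_lt 0 hpos)
      simpa using this
    -- lower bound eventually in x
    have hEv : ∀ᶠ x in atTop, (fun x =>
        (h (γ * x ^ 2 / 4) / Real.sqrt (γ * x ^ 2 / 4)) ^ 2 / (2 * γ)) x ≤ F x := by
      filter_upwards [huT.eventually hE1, huT.eventually hE2,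
        huT.eventually (eventually_ge_atTop 1), eventually_gt_atTop 0] with x h1 h2 h3 hx0
      set u : ℝ := γ * x ^ 2 / 4 with hu
      have hu0 : (0:ℝ) < u := lt_of_lt_of_le one_pos h3
      have hsqrt : Real.sqrt u ^ 2 = u := Real.sq_sqrt hu0.le
      have hsqrt0 : (0:ℝ) < Real.sqrt u := Real.sqrt_pos.mpr hu0
      set A : ℝ := h u with hA
      have hAneg : A ≤ -Real.sqrt u := by
        have := (div_le_iff₀ hsqrt0).mp h1
        linarith
      have hAle0 : A ≤ 0 := hAneg.trans (by linarith)
      have hA2 : u ≤ A ^ 2 := by nlinarith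
      have hA2pos : (0:ℝ) < A ^ 2 := lt_of_lt_of_le hu0 hA2
      set B : ℝ := h' u with hB
      have hstep : -(1 / (2 * γ)) * A ^ 2 < u * B := by
        have h2' : -(1 / (2 * γ)) < u * B / A ^ 2 := (abs_lt.mp h2).1
        have := (lt_div_iff₀ hA2pos).mp h2'
        linarith
      have hc : (0:ℝ) < u := hu0
      have h'_lb : -(2 / (γ ^ 2 * x ^ 2) * A ^ 2) ≤ B := by
        have hdiv : (-(1 / (2 * γ)) * A ^ 2) / u < B := by
          rw [div_lt_iff₀ hc]; linarith
        have heq : -(2 / (γ ^ 2 * x ^ 2) * A ^ 2) = (-(1 / (2 * γ)) * A ^ 2) / u := by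
          rw [hu]; field_simp; ring
        linarith [heq ▸ hdiv]
      have RHS_eq : (A / Real.sqrt u) ^ 2 / (2 * γ) = 2 / (γ ^ 2 * x ^ 2) * A ^ 2 := by
        rw [div_pow, hsqrt, hu]
        field_simp
        ring
      have hterm : 0 ≤ -(4 / (γ * x ^ 2) * A) := by
        have h4 : (0:ℝ) < 4 / (γ * x ^ 2) := by positivity
        nlinarith
      have h34 : (0:ℝ) < 3 / (4 * x ^ 2) := by positivity
      have e1 : 4 / (γ ^ 2 * x ^ 2) * A ^ 2 = 2 * (2 / (γ ^ 2 * x ^ 2) * A ^ 2) := by ring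
      have hxIoi : x ∈ Set.Ioi (0:ℝ) := hx0
      simp only [hF]
      rw [key x hxIoi, ← hu, ← hA, ← hB, RHS_eq]
      linarith
    have hsq : Tendsto (fun x : ℝ =>
        (h (γ * x ^ 2 / 4) / Real.sqrt (γ * x ^ 2 / 4)) ^ 2 / (2 * γ)) atTop atTop := by
      have hsT : Tendsto (fun x : ℝ => h (γ * x ^ 2 / 4) / Real.sqrt (γ * x ^ 2 / 4))
          atTop atBot := hh1.comp huT
      have hnT : Tendsto (fun x : ℝ => -(h (γ * x ^ 2 / 4) / Real.sqrt (γ * x ^ 2 / 4)))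
          atTop atTop := tendsto_neg_atBot_atTop.comp hsT
      have hmul := hnT.atTop_mul_atTop₀ hnT
      have : Tendsto (fun x : ℝ =>
          (h (γ * x ^ 2 / 4) / Real.sqrt (γ * x ^ 2 / 4)) ^ 2) atTop atTop := by
        refine hmul.congr (fun x => by ring)
      exact this.atTop_div_const (by positivity)
    exact tendsto_atTop_mono' atTop hEv hsq
  ------------------------------------------------------------------
  -- Part 2 : bounded below
  ------------------------------------------------------------------
  have part2 : BddBelow (F '' Set.Ioi 0) := by
    -- near 0 : F is eventually nonneg
    have hev0 : ∀ᶠ x in 𝓝[>] (0:ℝ), 0 ≤ F x := by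
      have hpos : ∀ᶠ x in 𝓝[>] (0:ℝ), 0 < x ^ 2 * F x :=
        part1.eventually (eventually_gt_nhds (by norm_num : (0:ℝ) < 3/4))
      filter_upwards [hpos, self_mem_nhdsWithin] with x hx hx0
      have hx0' : (0:ℝ) < x := hx0
      have hx2 : (0:ℝ) < x ^ 2 := by positivity
      nlinarith
    obtain ⟨a, ha, haP⟩ := (mem_nhdsGT_iff_exists_Ioo_subset).mp hev0
    -- at infinity : F eventually nonneg
    obtain ⟨b, hb⟩ := (part3.eventually (eventually_ge_atTop 0)).exists_forall_of_atTop
    set c : ℝ := max a b with hc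
    have hac : a ≤ c := le_max_left a b
    have ha0 : (0:ℝ) < a := ha
    -- continuity of F on Icc a c
    have hsub : Set.Icc a c ⊆ Set.Ioi 0 := fun y hy => lt_of_lt_of_le ha0 hy.1
    have hΦ : ContinuousOn (fun x : ℝ =>
        3 / (4 * x ^ 2) - 4 / (γ * x ^ 2) * h (γ * x ^ 2 / 4)
          + 4 / (γ ^ 2 * x ^ 2) * (h (γ * x ^ 2 / 4)) ^ 2 + h' (γ * x ^ 2 / 4))
        (Set.Icc a c) := by
      have hucont : ContinuousOn (fun x : ℝ => γ * x ^ 2 / 4) (Set.Icc a c) := by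
        fun_prop
      have hmaps : Set.MapsTo (fun x : ℝ => γ * x ^ 2 / 4) (Set.Icc a c) (Set.Ici 0) :=
        fun y _ => by simp only [Set.mem_Ici]; positivity
      have hhcomp : ContinuousOn (fun x : ℝ => h (γ * x ^ 2 / 4)) (Set.Icc a c) :=
        hhc.comp hucont hmaps
      have hh'comp : ContinuousOn (fun x : ℝ => h' (γ * x ^ 2 / 4)) (Set.Icc a c) :=
        hcont.comp hucont hmaps
      have hx2ne : ∀ y ∈ Set.Icc a c, (4:ℝ) * y ^ 2 ≠ 0 := fun y hy => by
        have hy0 : (0:ℝ) < y := hsub hy; positivity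
      have h1 : ContinuousOn (fun x : ℝ => 3 / (4 * x ^ 2)) (Set.Icc a c) :=
        ContinuousOn.div continuousOn_const (by fun_prop) hx2ne
      have hgx2ne : ∀ y ∈ Set.Icc a c, γ * y ^ 2 ≠ 0 := fun y hy => by
        have hy0 : (0:ℝ) < y := hsub hy; positivity
      have hg2x2ne : ∀ y ∈ Set.Icc a c, γ ^ 2 * y ^ 2 ≠ 0 := fun y hy => by
        have hy0 : (0:ℝ) < y := hsub hy; positivity
      have h2 : ContinuousOn (fun x : ℝ => 4 / (γ * x ^ 2) * h (γ * x ^ 2 / 4))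
          (Set.Icc a c) :=
        (ContinuousOn.div continuousOn_const (by fun_prop) hgx2ne).mul hhcomp
      have h3 : ContinuousOn (fun x : ℝ => 4 / (γ ^ 2 * x ^ 2) * (h (γ * x ^ 2 / 4)) ^ 2)
          (Set.Icc a c) :=
        (ContinuousOn.div continuousOn_const (by fun_prop) hg2x2ne).mul (hhcomp.pow 2)
      exact ((h1.sub h2).add h3).add hh'comp
    have hFc : ContinuousOn F (Set.Icc a c) := by
      apply hΦ.congr
      intro y hy
      exact key y (hsub hy)
    have hbdd : BddBelow (F '' Set.Icc a c) :=
      (isCompact_Icc.image_of_continuousOn hFc).bddBelow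
    obtain ⟨m, hm⟩ := hbdd
    refine ⟨min m 0, ?_⟩
    rintro y ⟨x, hx, rfl⟩
    rcases lt_or_ge x a with hxa | hxa
    · have : 0 ≤ F x := haP ⟨hx, hxa⟩
      exact le_trans (min_le_right m 0) this
    · rcases le_or_gt x c with hxc | hxc
      · have : m ≤ F x := hm ⟨x, ⟨hxa, hxc⟩, rfl⟩
        exact le_trans (min_le_left m 0) this
      · have : 0 ≤ F x := hb x (le_trans (le_max_right a b) hxc.le)
        exact le_trans (min_le_right m 0) this
  exact ⟨part1, part2, part3⟩
end

section
/- Let γ > 0 and let h : [0,∞) → ℝ be C¹ with h(0) = 0, lim_{x→∞} h(x)/√x = −∞ and lim_{x→∞} x·h'(x)/h(x)² = 0. Define q(x) := 1/(2x) − (2/(γx))·h(γx²/4) for x > 0 and Q(x) := 2∫₁ˣ q(u) du. Then: (i) Q(x)/x → +∞ as x → ∞; (ii) the limit A := lim_{x→0⁺}(Q(x) − log x) exists and is finite; (iii) ∫₁^∞ e^{Q(y)} dy = ∞; and (iv) ∫₀¹ e^{Q(y)} (∫_y¹ e^{−Q(z)} dz) dy < ∞ (i.e. Λ(∞) = ∞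 and κ(0⁺) < ∞, so absorption at 0 is certain). -/
open Filter Set Topology MeasureTheory
open scoped ENNReal

lemma primitive_continuousAt {f : ℝ → ℝ} (hf : ContinuousOn f (Set.Ioi 0))
    {x : ℝ} (hx : 0 < x) : ContinuousAt (fun y => ∫ t in (1:ℝ)..y, f t) x := by
  have hsub : Set.uIcc (1:ℝ) x ⊆ Set.Ioi 0 := fun t ht =>
    lt_of_lt_of_le (lt_min one_pos hx) ht.1
  have hint : IntervalIntegrable f volume 1 x :=
    (hf.mono hsub).intervalIntegrable
  exact (intervalIntegral.integral_hasDerivAt_right hint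
    (hf.stronglyMeasurableAtFilter isOpen_Ioi x hx)
    (hf.continuousAt (Ioi_mem_nhds hx))).continuousAt

set_option maxHeartbeats 2000000 in
/-- Let `γ > 0` and let `h` be `C¹` on `[0,∞)` with `h(0) = 0`,
`h(x)/√x → −∞` and `x h'(x)/h(x)² → 0` as `x → ∞`. For the drift
`q(x) = 1/(2x) − (2/(γx)) h(γx²/4)` and `Q(x) = 2∫₁ˣ q`, one has:
(i) `Q(x)/x → +∞`; (ii) `Q(x) − log x` has a finite limit as `x → 0⁺`;
(iii) `∫₁^∞ e^{Q} = ∞` (so `Λ(∞) = ∞`); and (iv) `∫₀¹ e^{Q(y)} (∫_y¹ e^{−Q(z)} dz) dy < ∞`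
(so `κ(0⁺) < ∞`), hence absorption at `0` is certain. -/
theorem H1_for_generalized_Feller_drift (γ : ℝ) (hγ : 0 < γ) (h h' : ℝ → ℝ)
    (hderiv : ∀ x ∈ Set.Ici (0:ℝ), HasDerivWithinAt h (h' x) (Set.Ici 0) x)
    (hcont : ContinuousOn h' (Set.Ici 0))
    (h0 : h 0 = 0)
    (hh1 : Tendsto (fun x => h x / Real.sqrt x) atTop atBot)
    (hh2 : Tendsto (fun x => x * h' x / (h x) ^ 2) atTop (𝓝 0))
    (q Q : ℝ → ℝ)
    (hq : ∀ x ∈ Set.Ioi (0:ℝ), q x = 1 / (2 * x) - (2 / (γ * x)) * h (γ * x ^ 2 / 4))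
    (hQ : ∀ x ∈ Set.Ioi (0:ℝ), Q x = 2 * ∫ u in (1:ℝ)..x, q u) :
    Tendsto (fun x => Q x / x) atTop atTop ∧
    (∃ A : ℝ, Tendsto (fun x => Q x - Real.log x) (𝓝[>] (0:ℝ)) (𝓝 A)) ∧
    (∫⁻ y in Set.Ioi (1:ℝ), ENNReal.ofReal (Real.exp (Q y))) = ⊤ ∧
    MeasureTheory.IntegrableOn
      (fun y => Real.exp (Q y) * ∫ z in y..(1:ℝ), Real.exp (-(Q z))) (Set.Ioo 0 1) := by
  have hhc : ContinuousOn h (Set.Ici 0) := fun x hx => (hderiv x hx).continuousWithinAt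
  set g : ℝ → ℝ := fun u => h (γ * u ^ 2 / 4) / u with hg_def
  -- continuity of g on (0,∞)
  have hginner : ContinuousOn (fun u : ℝ => h (γ * u ^ 2 / 4)) (Set.Ioi 0) := by
    apply hhc.comp (Continuous.continuousOn (by continuity))
    intro u _
    show (0:ℝ) ≤ γ * u ^ 2 / 4
    positivity
  have hgc : ContinuousOn g (Set.Ioi 0) :=
    hginner.div continuousOn_id (fun u hu => ne_of_gt hu)
  have hgint : ∀ a b : ℝ, 0 < a → 0 < b → IntervalIntegrable g volume a b := by
    intro a b ha hb
    exact (hgc.mono (fun t ht => lt_of_lt_of_le (lt_min ha hb) ht.1)).intervalIntegrable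
  -- key formula
  have hQform : ∀ x ∈ Set.Ioi (0:ℝ), Q x = Real.log x - (4/γ) * ∫ u in (1:ℝ)..x, g u := by
    intro x hx
    rw [hQ x hx]
    have hsub : Set.uIcc (1:ℝ) x ⊆ Set.Ioi 0 := fun t ht =>
      lt_of_lt_of_le (lt_min one_pos hx) ht.1
    have h1 : ∫ u in (1:ℝ)..x, q u
        = ∫ u in (1:ℝ)..x, ((2:ℝ)⁻¹ * u⁻¹ - (2/γ) * g u) := by
      apply intervalIntegral.integral_congr
      intro u hu
      have hu0 : (0:ℝ) < u := hsub hu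
      rw [hq u hu0, hg_def]
      field_simp

    rw [h1]
    have hint1 : IntervalIntegrable (fun u : ℝ => (2:ℝ)⁻¹ * u⁻¹) volume 1 x := by
      apply ContinuousOn.intervalIntegrable
      exact (continuousOn_const.mul (continuousOn_inv₀.mono
        (fun t ht => ne_of_gt (hsub ht))))
    have hint2 : IntervalIntegrable (fun u => (2/γ) * g u) volume 1 x :=
      (hgint 1 x one_pos hx).const_mul _
    rw [intervalIntegral.integral_sub hint1 hint2,
      intervalIntegral.integral_const_mul, intervalIntegral.integral_const_mul,
      integral_inv (fun hc => absurd (Set.mem_Ioi.mp (hsub hc)) (lt_irrefl 0)), div_one]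
    ring
  -- bound on h' on [0, γ/4]
  obtain ⟨M, hM⟩ := isCompact_Icc.exists_bound_of_continuousOn
    (hcont.mono (fun y (hy : y ∈ Set.Icc (0:ℝ) (γ/4)) => hy.1))
  have hM0 : 0 ≤ M := le_trans (norm_nonneg _) (hM 0 ⟨le_refl 0, by positivity⟩)
  have hhbound : ∀ y ∈ Set.Icc (0:ℝ) (γ/4), |h y| ≤ M * y := by
    intro y hy
    have := Convex.norm_image_sub_le_of_norm_hasDerivWithin_le
      (f := h) (f' := h') (s := Set.Icc 0 (γ/4))
      (fun z hz => (hderiv z hz.1).mono (fun w hw => hw.1)) hM (convex_Icc _ _)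
      ⟨le_refl 0, by positivity⟩ hy
    simpa [h0, Real.norm_eq_abs, abs_of_nonneg hy.1] using this
  -- bound on g on (0,1]
  have hgbound : ∀ u ∈ Set.Ioc (0:ℝ) 1, |g u| ≤ M * γ / 4 := by
    intro u hu
    have hu0 := hu.1
    have hu1 := hu.2
    have hu2 : u ^ 2 ≤ 1 := by nlinarith [hu.1, hu.2]
    have harg : γ * u ^ 2 / 4 ∈ Set.Icc (0:ℝ) (γ/4) :=
      ⟨by positivity, by nlinarith [hu2, hγ.le]⟩
    have hb := hhbound _ harg
    rw [hg_def]
    simp only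
    rw [abs_div, abs_of_pos hu0, div_le_iff₀ hu0]
    nlinarith [abs_nonneg (h (γ * u ^ 2 / 4))]
  -- |Q x - log x| ≤ M on (0,1]
  have hIabs : ∀ x ∈ Set.Ioc (0:ℝ) 1, |∫ u in x..(1:ℝ), g u| ≤ M * γ / 4 := by
    intro x hx
    have h1 : |∫ u in x..(1:ℝ), g u| ≤ ∫ u in x..(1:ℝ), |g u| :=
      intervalIntegral.abs_integral_le_integral_abs hx.2
    have h2 : ∫ u in x..(1:ℝ), |g u| ≤ ∫ _u in x..(1:ℝ), M * γ / 4 := by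
      apply intervalIntegral.integral_mono_on hx.2 ((hgint x 1 hx.1 one_pos).abs)
        intervalIntegrable_const
      intro u hu
      exact hgbound u ⟨lt_of_lt_of_le hx.1 hu.1, hu.2⟩
    have h3 : ∫ _u in x..(1:ℝ), M * γ / 4 = (1 - x) * (M * γ / 4) := by
      rw [intervalIntegral.integral_const]; simp
    nlinarith [hx.1, hx.2, mul_nonneg (mul_nonneg hM0 hγ.le) (by norm_num : (0:ℝ) ≤ 1/4)]
  have hQlog : ∀ x ∈ Set.Ioc (0:ℝ) 1, |Q x - Real.log x| ≤ M := by
    intro x hx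
    rw [hQform x hx.1]
    have hsym : ∫ u in (1:ℝ)..x, g u = -∫ u in x..(1:ℝ), g u :=
      intervalIntegral.integral_symm x 1
    rw [hsym]
    have hgen : ∀ r : ℝ, Real.log x - 4 / γ * -r - Real.log x = (4/γ) * r :=
      fun r => by ring
    rw [hgen, abs_mul, abs_of_pos (by positivity : (0:ℝ) < 4/γ)]
    calc 4/γ * |∫ u in x..(1:ℝ), g u| ≤ 4/γ * (M * γ / 4) := by
          gcongr; exact hIabs x hx
      _ = M := by field_simp
  -- integrability of g on (0,1]
  have hgmeas : AEStronglyMeasurable g (volume.restrict (Set.Ioc (0:ℝ) 1)) :=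
    (hgc.mono Set.Ioc_subset_Ioi_self).aestronglyMeasurable measurableSet_Ioc
  have hgae : ∀ᵐ u ∂(volume.restrict (Set.Ioc (0:ℝ) 1)), ‖g u‖ ≤ M * γ / 4 := by
    filter_upwards [ae_restrict_mem measurableSet_Ioc] with u hu
    exact hgbound u hu
  have hgint01 : IntegrableOn g (Set.Ioc (0:ℝ) 1) :=
    ⟨hgmeas, HasFiniteIntegral.restrict_of_bounded (C := M * γ / 4) (by simp) hgae⟩
  -- Part (ii)
  set A : ℝ := (4/γ) * ∫ u in Set.Ioc (0:ℝ) 1, g u with hA_def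
  have part2 : Tendsto (fun x => Q x - Real.log x) (𝓝[>] (0:ℝ)) (𝓝 A) := by
    have key : ∀ x ∈ Set.Ioc (0:ℝ) 1, |(Q x - Real.log x) - A| ≤ (M * γ / 4) * (4/γ) * x := by
      intro x hx
      have hsplit : ∫ u in Set.Ioc (0:ℝ) 1, g u
          = (∫ u in Set.Ioc (0:ℝ) x, g u) + ∫ u in Set.Ioc x 1, g u := by
        rw [← setIntegral_union (Set.Ioc_disjoint_Ioc_of_le le_rfl) measurableSet_Ioc
          (hgint01.mono_set (Set.Ioc_subset_Ioc_right hx.2))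
          (hgint01.mono_set (Set.Ioc_subset_Ioc_left hx.1.le)),
          Set.Ioc_union_Ioc_eq_Ioc hx.1.le hx.2]
      have hQx : Q x - Real.log x = (4/γ) * ∫ u in Set.Ioc x 1, g u := by
        rw [hQform x hx.1, intervalIntegral.integral_symm x 1,
          intervalIntegral.integral_of_le hx.2]
        ring
      have hsmall : |∫ u in Set.Ioc (0:ℝ) x, g u| ≤ (M * γ / 4) * x := by
        have := norm_setIntegral_le_of_norm_le_const (μ := volume)
          (s := Set.Ioc (0:ℝ) x) (C := M * γ / 4) (f := g) measure_Ioc_lt_top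
          (fun u hu => hgbound u ⟨hu.1, le_trans hu.2 hx.2⟩)
        rw [measureReal_def, Real.volume_Ioc, ENNReal.toReal_ofReal (by linarith [hx.1] : (0:ℝ) ≤ x - 0)] at this
        simpa using this
      rw [hQx, hA_def, hsplit]
      have hgen : ∀ r s : ℝ, (4/γ) * s - (4/γ) * (r + s) = -((4/γ) * r) :=
        fun r s => by ring
      rw [hgen, abs_neg, abs_mul, abs_of_pos (by positivity : (0:ℝ) < 4/γ)]
      calc 4/γ * |∫ u in Set.Ioc (0:ℝ) x, g u| ≤ 4/γ * ((M * γ / 4) * x) := by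
            gcongr
        _ = (M * γ / 4) * (4/γ) * x := by ring
    have hzero : Tendsto (fun x => (Q x - Real.log x) - A) (𝓝[>] (0:ℝ)) (𝓝 0) := by
      apply squeeze_zero_norm'
      · filter_upwards [Ioc_mem_nhdsGT_of_mem ⟨le_refl (0:ℝ), one_pos⟩] with x hx
        exact key x hx
      · have : Tendsto (fun x : ℝ => (M * γ / 4) * (4/γ) * x) (𝓝 (0:ℝ))
            (𝓝 ((M * γ / 4) * (4/γ) * 0)) :=
          (continuous_const.mul continuous_id).tendsto 0
        simpa using this.mono_left nhdsWithin_le_nhds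
    have := hzero.add (tendsto_const_nhds (x := A))
    simp only [sub_add_cancel, zero_add] at this
    exact this
  -- Part (i)
  have part1 : Tendsto (fun x => Q x / x) atTop atTop := by
    rw [tendsto_atTop]
    intro b
    have hsγ : (0:ℝ) < Real.sqrt γ := Real.sqrt_pos.2 hγ
    set c : ℝ := Real.sqrt γ * (|b| + 1) + 1 with hc_def
    have hc : 0 < c := by positivity
    obtain ⟨N, hN⟩ := (hh1.eventually (eventually_le_atBot (-c))).exists_forall_of_atTop
    set N' : ℝ := max N 1 with hN'_def
    have hN'1 : (1:ℝ) ≤ N' := le_max_right _ _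
    set u₀ : ℝ := max 1 (2 * Real.sqrt (N'/γ)) with hu₀_def
    have hu₀1 : (1:ℝ) ≤ u₀ := le_max_left _ _
    have hu₀0 : (0:ℝ) < u₀ := lt_of_lt_of_le one_pos hu₀1
    set d : ℝ := 2 * c / Real.sqrt γ with hd_def
    have hbd : b < d := by
      have h1 : |b| + 1 ≤ c / Real.sqrt γ := by
        rw [le_div_iff₀ hsγ]
        nlinarith
      have : b ≤ |b| := le_abs_self b
      have hcd : d = 2 * (c / Real.sqrt γ) := by rw [hd_def]; ring
      nlinarith [div_pos hc hsγ]
    -- pointwise bound on g for u ≥ u₀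
    have hgle : ∀ u, u₀ ≤ u → g u ≤ -(c * Real.sqrt γ / 2) := by
      intro u hu
      have hu0 : (0:ℝ) < u := lt_of_lt_of_le hu₀0 hu
      have hu2 : 2 * Real.sqrt (N'/γ) ≤ u := le_trans (le_max_right _ _) hu
      have hNγ : (0:ℝ) ≤ N'/γ := div_nonneg (le_trans zero_le_one hN'1) hγ.le
      have harg : N' ≤ γ * u ^ 2 / 4 := by
        have h1 : (2 * Real.sqrt (N'/γ)) ^ 2 ≤ u ^ 2 := by
          apply pow_le_pow_left₀ (by positivity) hu2
        rw [mul_pow, Real.sq_sqrt hNγ] at h1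
        have h2 : N'/γ ≤ u^2/4 := by linarith
        have h3 := (div_le_iff₀ hγ).mp h2
        nlinarith [h3]
      have hherr : h (γ * u ^ 2 / 4) ≤ -c * Real.sqrt (γ * u ^ 2 / 4) := by
        have hbig : N ≤ γ * u ^ 2 / 4 := le_trans (le_max_left _ _) harg
        have := hN _ hbig
        have hs : (0:ℝ) < Real.sqrt (γ * u ^ 2 / 4) := Real.sqrt_pos.2 (by positivity)
        rw [div_le_iff₀ hs] at this
        linarith [this]
      have hsqrt : Real.sqrt (γ * u ^ 2 / 4) = Real.sqrt γ * u / 2 := by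
        rw [show γ * u ^ 2 / 4 = (Real.sqrt γ * u / 2) ^ 2 by
          rw [div_pow, mul_pow, Real.sq_sqrt hγ.le]; norm_num]
        exact Real.sqrt_sq (by positivity)
      rw [hg_def]
      simp only
      rw [div_le_iff₀ hu0]
      rw [hsqrt] at hherr
      linarith [hherr]
    set K₀ : ℝ := ∫ u in (1:ℝ)..u₀, g u with hK₀_def
    have hlow : ∀ x, u₀ ≤ x → Real.log x - (4/γ) * K₀ + d * (x - u₀) ≤ Q x := by
      intro x hx
      have hx0 : (0:ℝ) < x := lt_of_lt_of_le hu₀0 hx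
      rw [hQform x hx0]
      have hsplit : ∫ u in (1:ℝ)..x, g u = K₀ + ∫ u in u₀..x, g u :=
        (intervalIntegral.integral_add_adjacent_intervals (hgint 1 u₀ one_pos hu₀0)
          (hgint u₀ x hu₀0 hx0)).symm
      have hmono : ∫ u in u₀..x, g u ≤ (x - u₀) * (-(c * Real.sqrt γ / 2)) := by
        have := intervalIntegral.integral_mono_on hx (hgint u₀ x hu₀0 hx0)
          intervalIntegrable_const (g := fun _ => -(c * Real.sqrt γ / 2))
          (fun u hu => hgle u hu.1)
        rwa [intervalIntegral.integral_const, smul_eq_mul] at this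
      have hγeq : Real.sqrt γ * Real.sqrt γ = γ := Real.mul_self_sqrt hγ.le
      have hds : (4/γ) * (c * Real.sqrt γ / 2) = d := by
        calc (4/γ) * (c * Real.sqrt γ / 2) = (2*c) * Real.sqrt γ / γ := by ring
          _ = (2*c) * Real.sqrt γ / (Real.sqrt γ * Real.sqrt γ) := by rw [hγeq]
          _ = (2*c) / Real.sqrt γ := mul_div_mul_right _ _ (ne_of_gt hsγ)
          _ = d := by rw [hd_def]
      rw [hsplit]
      have h4γ : (0:ℝ) < 4/γ := by positivity
      have hm2 := mul_le_mul_of_nonneg_left hmono h4γ.le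
      have hre : (4/γ) * ((x - u₀) * (-(c * Real.sqrt γ / 2))) = -(d * (x - u₀)) := by
        rw [← hds]; ring
      rw [hre] at hm2
      have hK : (4/γ) * (K₀ + ∫ u in u₀..x, g u)
          = (4/γ) * K₀ + (4/γ) * ∫ u in u₀..x, g u := by ring
      rw [hK]
      linarith [hm2]
    -- limit of lower bound / x
    have hLlim : Tendsto (fun x => (Real.log x - (4/γ) * K₀ + d * (x - u₀)) / x)
        atTop (𝓝 d) := by
      have t1 : Tendsto (fun x : ℝ => Real.log x / x) atTop (𝓝 0) :=
        Real.isLittleO_log_id_atTop.tendsto_div_nhds_zero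
      have t2 : Tendsto (fun x : ℝ => (-(4/γ) * K₀ - d * u₀) / x) atTop (𝓝 0) :=
        tendsto_const_nhds.div_atTop tendsto_id
      have := (t1.add t2).add_const d
      rw [zero_add, zero_add] at this
      apply this.congr'
      filter_upwards [eventually_gt_atTop (0:ℝ)] with x hx
      field_simp
      ring
    have hev : ∀ᶠ x in atTop, b ≤ (Real.log x - (4/γ) * K₀ + d * (x - u₀)) / x :=
      hLlim.eventually_const_le hbd
    filter_upwards [hev, eventually_ge_atTop u₀, eventually_gt_atTop (0:ℝ)]
      with x h1 h2 h3
    calc b ≤ (Real.log x - (4/γ) * K₀ + d * (x - u₀)) / x := h1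
      _ ≤ Q x / x := by gcongr; exact hlow x h2
  refine ⟨part1, ⟨A, part2⟩, ?_, ?_⟩
  -- Part (iii)
  · obtain ⟨x₁, hx₁⟩ := ((part1.eventually_ge_atTop 1).and
      (eventually_ge_atTop (1:ℝ))).exists_forall_of_atTop
    set x₂ : ℝ := max x₁ 1 with hx₂_def
    have hx₂1 : (1:ℝ) ≤ x₂ := le_max_right _ _
    rw [eq_top_iff]
    calc (⊤:ℝ≥0∞) = ∫⁻ _y in Set.Ioi x₂, 1 := by
          rw [setLIntegral_one, Real.volume_Ioi]
      _ ≤ ∫⁻ y in Set.Ioi x₂, ENNReal.ofReal (Real.exp (Q y)) := by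
          apply lintegral_mono_ae
          filter_upwards [ae_restrict_mem measurableSet_Ioi] with y hy
          have hy₂ : x₂ ≤ y := le_of_lt hy
          have hy1 : (1:ℝ) ≤ y := le_trans hx₂1 hy₂
          have := hx₁ y (le_trans (le_max_left _ _) hy₂)
          have hy0 : (0:ℝ) < y := lt_of_lt_of_le one_pos hy1
          have hQy : (0:ℝ) ≤ Q y := by
            have := this.1
            rw [le_div_iff₀ hy0] at this
            linarith
          rw [show (1:ℝ≥0∞) = ENNReal.ofReal 1 by simp]
          exact ENNReal.ofReal_le_ofReal (Real.one_le_exp hQy)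
      _ ≤ ∫⁻ y in Set.Ioi 1, ENNReal.ofReal (Real.exp (Q y)) :=
          lintegral_mono_set (Set.Ioi_subset_Ioi hx₂1)
  -- Part (iv)
  · have hQcOn : ContinuousOn Q (Set.Ioi 0) := by
      intro x hx
      apply ContinuousAt.continuousWithinAt
      have hPc : ContinuousAt (fun y => ∫ t in (1:ℝ)..y, g t) x :=
        primitive_continuousAt hgc hx
      have hc2 : ContinuousAt (fun y => Real.log y - (4/γ) * ∫ t in (1:ℝ)..y, g t) x :=
        (Real.continuousAt_log (ne_of_gt hx)).sub (continuousAt_const.mul hPc)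
      apply hc2.congr
      filter_upwards [Ioi_mem_nhds hx] with y hy
      exact (hQform y hy).symm
    have hexpc : ContinuousOn (fun z => Real.exp (-(Q z))) (Set.Ioi 0) :=
      Real.continuous_exp.comp_continuousOn hQcOn.neg
    -- continuity of the integrand on Ioo 0 1
    have hFc : ContinuousOn (fun y => Real.exp (Q y) * ∫ z in y..(1:ℝ), Real.exp (-(Q z)))
        (Set.Ioo 0 1) := by
      intro y hy
      apply ContinuousAt.continuousWithinAt
      have h1 : ContinuousAt (fun y => Real.exp (Q y)) y :=
        Real.continuous_exp.continuousAt.comp ((hQcOn y hy.1).continuousAt (Ioi_mem_nhds hy.1))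
      have h2 : ContinuousAt (fun y => ∫ z in y..(1:ℝ), Real.exp (-(Q z))) y := by
        have := (primitive_continuousAt hexpc hy.1).neg
        apply this.congr
        filter_upwards with w
        rw [Pi.neg_apply, ← intervalIntegral.integral_symm]
      exact h1.mul h2
    -- bound on the integrand
    have hbd : ∀ y ∈ Set.Ioo (0:ℝ) 1,
        ‖Real.exp (Q y) * ∫ z in y..(1:ℝ), Real.exp (-(Q z))‖ ≤ Real.exp (2*M) := by
      intro y hy
      have hy0 := hy.1
      have hy1 := hy.2
      have hyIoc : y ∈ Set.Ioc (0:ℝ) 1 := ⟨hy0, hy1.le⟩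
      have hQy := hQlog y hyIoc
      have hEQ : Real.exp (Q y) ≤ Real.exp M * y := by
        have : Q y ≤ Real.log y + M := by
          have := abs_le.1 hQy
          linarith [this.2]
        calc Real.exp (Q y) ≤ Real.exp (Real.log y + M) := Real.exp_le_exp.2 this
          _ = Real.exp M * y := by rw [Real.exp_add, Real.exp_log hy0]; ring
      have hFle : ∫ z in y..(1:ℝ), Real.exp (-(Q z)) ≤ Real.exp M * (-Real.log y) := by
        have hintexp : IntervalIntegrable (fun z => Real.exp (-(Q z))) volume y 1 :=
          (hexpc.mono (fun t ht => lt_of_lt_of_le (lt_min hy0 one_pos) ht.1)).intervalIntegrable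
        have hintinv : IntervalIntegrable (fun z : ℝ => Real.exp M * z⁻¹) volume y 1 := by
          apply ContinuousOn.intervalIntegrable
          exact continuousOn_const.mul (continuousOn_inv₀.mono
            (fun t ht => ne_of_gt (lt_of_lt_of_le (lt_min hy0 one_pos) ht.1)))
        have hmono := intervalIntegral.integral_mono_on hy1.le hintexp hintinv
          (fun z hz => by
            have hz0 : (0:ℝ) < z := lt_of_lt_of_le hy0 hz.1
            have hQz := abs_le.1 (hQlog z ⟨hz0, hz.2⟩)
            have : -(Q z) ≤ M - Real.log z := by linarith [hQz.1]
            calc Real.exp (-(Q z)) ≤ Real.exp (M - Real.log z) := Real.exp_le_exp.2 this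
              _ = Real.exp M * z⁻¹ := by
                  rw [Real.exp_sub, Real.exp_log hz0, div_eq_mul_inv])
        rw [intervalIntegral.integral_const_mul, integral_inv
          (fun hc => absurd (lt_of_lt_of_le (lt_min hy0 one_pos) hc.1) (lt_irrefl 0)),
          one_div, Real.log_inv] at hmono
        exact hmono
      have hF0 : 0 ≤ ∫ z in y..(1:ℝ), Real.exp (-(Q z)) :=
        intervalIntegral.integral_nonneg hy1.le (fun z _ => (Real.exp_pos _).le)
      have hlogy : -Real.log y ≤ y⁻¹ := by
        have := Real.log_le_sub_one_of_pos (by positivity : (0:ℝ) < y⁻¹)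
        rw [Real.log_inv] at this
        have hyinv : (0:ℝ) < y⁻¹ := by positivity
        linarith
      rw [Real.norm_eq_abs, abs_of_nonneg (mul_nonneg (Real.exp_pos _).le hF0)]
      calc Real.exp (Q y) * ∫ z in y..(1:ℝ), Real.exp (-(Q z))
          ≤ (Real.exp M * y) * (Real.exp M * (-Real.log y)) := by
            apply mul_le_mul hEQ hFle hF0 (by positivity)
        _ = Real.exp (2*M) * (y * (-Real.log y)) := by
            rw [two_mul, Real.exp_add]; ring
        _ ≤ Real.exp (2*M) * 1 := by
            have hy' : y * (-Real.log y) ≤ 1 := by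
              calc y * (-Real.log y) ≤ y * y⁻¹ :=
                    mul_le_mul_of_nonneg_left hlogy hy0.le
                _ = 1 := mul_inv_cancel₀ (ne_of_gt hy0)
            exact mul_le_mul_of_nonneg_left hy' (Real.exp_pos _).le
        _ = Real.exp (2*M) := mul_one _
    refine ⟨hFc.aestronglyMeasurable measurableSet_Ioo, ?_⟩
    apply HasFiniteIntegral.restrict_of_bounded (C := Real.exp (2*M)) (by simp)
    filter_upwards [ae_restrict_mem measurableSet_Ioo] with y hy
    exact hbd y hy
end

section
/- Let γ > 0 and let h : [0,∞) → ℝ be C¹ with h(0) = 0, lim_{x→∞} h(x)/√x = −∞ and lim_{x→∞} x·h'(x)/h(x)² = 0. Define q(x) := 1/(2x) − (2/(γx))·h(γx²/4) for x > 0 and Q(x) := 2∫₁ˣ q(u) du, and set C := −inf_{x>0}(q²(x) − q'(x)) (which is finite). Then ∫₀¹ e^{−Q(y)} / (q²(y) − q'(y) + C + 2) dy < ∞, i.e. hypothesis (H3) holds. -/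
open Filter Set Topology MeasureTheory

set_option maxHeartbeats 1000000 in
/-- Let `γ > 0` and let `h` be `C¹` on `[0,∞)` with `h(0) = 0`,
`h(x)/√x → −∞` and `x h'(x)/h(x)² → 0` as `x → ∞`. For the drift
`q(x) = 1/(2x) − (2/(γx)) h(γx²/4)`, `Q(x) = 2∫₁ˣ q` and
`C = −inf_{x>0}(q²(x) − q'(x))` (which is finite), one has
`∫₀¹ e^{−Q(y)} / (q²(y) − q'(y) + C + 2) dy < ∞`, i.e. hypothesis (H3) holds. -/
theorem H3_for_generalized_Feller_drift (γ : ℝ) (hγ : 0 < γ) (h h' : ℝ → ℝ)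
    (hderiv : ∀ x ∈ Set.Ici (0:ℝ), HasDerivWithinAt h (h' x) (Set.Ici 0) x)
    (hcont : ContinuousOn h' (Set.Ici 0))
    (h0 : h 0 = 0)
    (hh1 : Tendsto (fun x => h x / Real.sqrt x) atTop atBot)
    (hh2 : Tendsto (fun x => x * h' x / (h x) ^ 2) atTop (𝓝 0))
    (q Q : ℝ → ℝ) (C : ℝ)
    (hq : ∀ x ∈ Set.Ioi (0:ℝ), q x = 1 / (2 * x) - (2 / (γ * x)) * h (γ * x ^ 2 / 4))
    (hQ : ∀ x ∈ Set.Ioi (0:ℝ), Q x = 2 * ∫ u in (1:ℝ)..x, q u)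
    (hC : C = -sInf ((fun x => (q x) ^ 2 - deriv q x) '' Set.Ioi 0)) :
    MeasureTheory.IntegrableOn
      (fun y => Real.exp (-(Q y)) / ((q y) ^ 2 - deriv q y + C + 2)) (Set.Ioo 0 1) := by
  have hhc : ContinuousOn h (Set.Ici 0) := fun x hx => (hderiv x hx).continuousWithinAt
  -- derivative of h at interior points
  have hhd : ∀ v : ℝ, 0 < v → HasDerivAt h (h' v) v := by
    intro v hv
    exact (hderiv v hv.le).hasDerivAt (Ici_mem_nhds hv)
  -- the inner map x ↦ γ x²/4
  have hinner : ∀ x : ℝ, HasDerivAt (fun x : ℝ => γ * x ^ 2 / 4) (γ * x / 2) x := by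
    intro x
    have : HasDerivAt (fun x : ℝ => γ * x ^ 2 / 4) (γ * (2 * x) / 4) x := by
      exact (((hasDerivAt_pow 2 x).const_mul γ).div_const 4).congr_deriv (by ring)
    exact this.congr_deriv (by ring)
  -- derivative of q
  have key : ∀ x ∈ Set.Ioi (0:ℝ), HasDerivAt q
      (-(1 / (2 * x ^ 2)) + (2 / (γ * x ^ 2)) * h (γ * x ^ 2 / 4) - h' (γ * x ^ 2 / 4)) x := by
    intro x hx
    have hx0 : (0:ℝ) < x := hx
    have hxne : x ≠ 0 := ne_of_gt hx0
    have hu : 0 < γ * x ^ 2 / 4 := by positivity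
    have d1 : HasDerivAt (fun x : ℝ => 1 / (2 * x)) (-(2) / (2 * x) ^ 2) x := by
      have := (hasDerivAt_const x (1:ℝ)).div ((hasDerivAt_id x).const_mul 2) (by positivity)
      simp only [id_eq] at this
      exact this.congr_deriv (by ring)
    have d2 : HasDerivAt (fun x : ℝ => 2 / (γ * x)) (-(2 * γ) / (γ * x) ^ 2) x := by
      have := (hasDerivAt_const x (2:ℝ)).div ((hasDerivAt_id x).const_mul γ) (by positivity)
      simp only [id_eq] at this
      exact this.congr_deriv (by ring)
    have d3 : HasDerivAt (fun x : ℝ => h (γ * x ^ 2 / 4)) (h' (γ * x ^ 2 / 4) * (γ * x / 2)) x :=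
      (hhd _ hu).comp x (hinner x)
    have d4 := d1.sub (d2.mul d3)
    have heq : q =ᶠ[𝓝 x] fun x => 1 / (2 * x) - 2 / (γ * x) * h (γ * x ^ 2 / 4) :=
      eventuallyEq_of_mem (Ioi_mem_nhds hx0) hq
    refine (d4.congr_of_eventuallyEq heq).congr_deriv ?_
    field_simp
    ring
  have hqderiv : ∀ x ∈ Set.Ioi (0:ℝ), deriv q x =
      -(1 / (2 * x ^ 2)) + (2 / (γ * x ^ 2)) * h (γ * x ^ 2 / 4) - h' (γ * x ^ 2 / 4) := by
    intro x hx; exact (key x hx).deriv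
  -- F decomposition
  obtain ⟨W, hW⟩ : ∃ W : ℝ → ℝ, W = fun x => (4 / (γ ^ 2 * x ^ 2)) * (h (γ * x ^ 2 / 4)) ^ 2
      - (4 / (γ * x ^ 2)) * h (γ * x ^ 2 / 4) + h' (γ * x ^ 2 / 4) := ⟨_, rfl⟩
  have hF : ∀ x ∈ Set.Ioi (0:ℝ), (q x) ^ 2 - deriv q x = 3 / (4 * x ^ 2) + W x := by
    intro x hx
    have hx0 : (0:ℝ) < x := hx
    rw [hqderiv x hx, hq x hx, hW]
    field_simp
    ring
  -- bound on h' near 0 and linear bound on h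
  obtain ⟨M, hM⟩ : ∃ M, ∀ v ∈ Set.Icc (0:ℝ) (γ/4), |h' v| ≤ M :=
    (isCompact_Icc).exists_bound_of_continuousOn (hcont.mono (by
      intro v hv; exact hv.1))
  have hM0 : 0 ≤ M := le_trans (abs_nonneg _) (hM 0 ⟨le_refl 0, by positivity⟩)
  have hlin : ∀ v ∈ Set.Icc (0:ℝ) (γ/4), |h v| ≤ M * v := by
    intro v hv
    have := Convex.norm_image_sub_le_of_norm_hasDerivWithin_le
      (f := h) (f' := h') (s := Set.Icc (0:ℝ) (γ/4))
      (fun z hz => (hderiv z hz.1).mono (fun w hw => hw.1))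
      (fun z hz => hM z hz) (convex_Icc _ _) ⟨le_refl 0, by positivity⟩ hv
    simpa [h0, abs_of_nonneg hv.1] using this
  have humem : ∀ x : ℝ, 0 < x → x ≤ 1 → γ * x ^ 2 / 4 ∈ Set.Icc (0:ℝ) (γ/4) := by
    intro x hx0 hx1
    refine ⟨by positivity, ?_⟩
    nlinarith [mul_nonneg hγ.le (mul_nonneg (sub_nonneg.mpr hx1) (by linarith : (0:ℝ) ≤ x + 1))]
  -- lower bound for W on (0,1]
  have hW1 : ∀ x : ℝ, 0 < x → x ≤ 1 → W x ≥ -(2 * M) := by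
    intro x hx0 hx1
    have hmem := humem x hx0 hx1
    have h1 : |h (γ * x ^ 2 / 4)| ≤ M * (γ * x ^ 2 / 4) := hlin _ hmem
    have h2 : |h' (γ * x ^ 2 / 4)| ≤ M := hM _ hmem
    have hb1 : 0 ≤ (4 / (γ ^ 2 * x ^ 2)) * (h (γ * x ^ 2 / 4)) ^ 2 := by positivity
    have hb2 : |(4 / (γ * x ^ 2)) * h (γ * x ^ 2 / 4)| ≤ M := by
      rw [abs_mul, abs_of_nonneg (by positivity : (0:ℝ) ≤ 4 / (γ * x ^ 2))]
      calc 4 / (γ * x ^ 2) * |h (γ * x ^ 2 / 4)|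
          ≤ 4 / (γ * x ^ 2) * (M * (γ * x ^ 2 / 4)) := by gcongr
        _ = M := by field_simp
    have ha2 := abs_le.1 hb2
    have ha3 := abs_le.1 h2
    simp only [hW]
    linarith [ha2.2, ha3.1]
  -- W ≥ 0 far out
  obtain ⟨A₁, hA₁⟩ : ∃ A₁, ∀ v ≥ A₁, h v / Real.sqrt v ≤ -1 :=
    (hh1.eventually (eventually_le_atBot (-1))).exists_forall_of_atTop
  obtain ⟨A₂, hA₂⟩ : ∃ A₂, ∀ v ≥ A₂, |v * h' v / (h v) ^ 2| ≤ 1/γ := by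
    have := Metric.tendsto_nhds.mp hh2 (1/γ) (by positivity)
    simp only [Real.dist_eq, sub_zero] at this
    exact (this.mono (fun v hv => le_of_lt hv)).exists_forall_of_atTop
  obtain ⟨A, hA⟩ : ∃ A : ℝ, A = max A₁ (max A₂ 1) := ⟨_, rfl⟩
  have hWfar : ∀ x : ℝ, 0 < x → A ≤ γ * x ^ 2 / 4 → 0 ≤ W x := by
    intro x hx0 hAx
    set v : ℝ := γ * x ^ 2 / 4 with hv
    have hxne : x ≠ 0 := ne_of_gt hx0
    rw [hA] at hAx
    have hv1 : (1:ℝ) ≤ v := le_trans (le_trans (le_max_right _ _) (le_max_right _ _)) hAx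
    have hv0 : 0 < v := lt_of_lt_of_le one_pos hv1
    have hs : 0 < Real.sqrt v := Real.sqrt_pos.mpr hv0
    have hs' : Real.sqrt v ≠ 0 := ne_of_gt hs
    have hneg : h v ≤ -Real.sqrt v := by
      have h1 := hA₁ v (le_trans (le_max_left _ _) hAx)
      calc h v = (h v / Real.sqrt v) * Real.sqrt v := by field_simp
        _ ≤ (-1) * Real.sqrt v := mul_le_mul_of_nonneg_right h1 hs.le
        _ = -Real.sqrt v := by ring
    have hhvneg : h v < 0 := lt_of_le_of_lt hneg (by simpa using hs)
    have hhv2 : 0 < (h v) ^ 2 := by nlinarith [hhvneg]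
    have hd : |h' v| ≤ (h v) ^ 2 / (γ * v) := by
      have h2 := hA₂ v (le_trans (le_trans (le_max_left _ _) (le_max_right _ _)) hAx)
      have habs : |v * h' v / (h v) ^ 2| = v * |h' v| / (h v) ^ 2 := by
        rw [abs_div, abs_mul, abs_of_nonneg hv0.le, abs_pow, sq_abs]
      rw [habs, div_le_div_iff₀ hhv2 hγ] at h2
      rw [le_div_iff₀ (mul_pos hγ hv0)]
      nlinarith [h2]
    have ht1 : 0 ≤ (4 / (γ ^ 2 * x ^ 2)) * (h v) ^ 2 + h' v := by
      have he : (4 / (γ ^ 2 * x ^ 2)) * (h v) ^ 2 = (h v) ^ 2 / (γ * v) := by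
        rw [hv]; field_simp
      rw [he]
      have := neg_le_of_abs_le hd
      linarith
    have ht2 : 0 ≤ -((4 / (γ * x ^ 2)) * h v) := by
      have h4 : 0 < 4 / (γ * x ^ 2) := by positivity
      nlinarith
    simp only [hW]
    rw [← hv]
    linarith
  -- a threshold b beyond which the far bound applies
  obtain ⟨A', hA'⟩ : ∃ A' : ℝ, A' = max A 0 := ⟨_, rfl⟩
  obtain ⟨b, hb⟩ : ∃ b : ℝ, b = 1 + 2 * Real.sqrt (A' / γ) := ⟨_, rfl⟩
  have hb1 : (1:ℝ) ≤ b := by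
    have : 0 ≤ Real.sqrt (A' / γ) := Real.sqrt_nonneg _
    simp only [hb]; linarith
  have hbA : ∀ x : ℝ, b ≤ x → A ≤ γ * x ^ 2 / 4 := by
    intro x hbx
    have hs0 : 0 ≤ Real.sqrt (A' / γ) := Real.sqrt_nonneg _
    have hA'0 : (0:ℝ) ≤ A' := hA' ▸ le_max_right _ _
    have hsq : Real.sqrt (A' / γ) ^ 2 = A' / γ := Real.sq_sqrt (div_nonneg hA'0 hγ.le)
    have hAA' : A ≤ A' := hA' ▸ le_max_left _ _
    have hx2 : 2 * Real.sqrt (A' / γ) ≤ x := by simp only [hb] at hbx; linarith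
    have h4 : 4 * (A' / γ) ≤ x ^ 2 := by nlinarith
    have h5 : γ * (4 * (A' / γ)) ≤ γ * x ^ 2 := mul_le_mul_of_nonneg_left h4 hγ.le
    have h6 : γ * (4 * (A' / γ)) = 4 * A' := by field_simp
    linarith
  -- continuity of W on the compact middle part
  have hcontinner : Continuous fun x : ℝ => γ * x ^ 2 / 4 :=
    (continuous_const.mul (continuous_pow 2)).div_const 4
  have hmaps0 : ∀ x : ℝ, γ * x ^ 2 / 4 ∈ Set.Ici (0:ℝ) := fun x => by
    simp only [Set.mem_Ici]; positivity
  have hch : ContinuousOn (fun x => h (γ * x ^ 2 / 4)) (Set.Ioi 0) :=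
    hhc.comp hcontinner.continuousOn (fun x _ => hmaps0 x)
  have hch' : ContinuousOn (fun x => h' (γ * x ^ 2 / 4)) (Set.Ioi 0) :=
    hcont.comp hcontinner.continuousOn (fun x _ => hmaps0 x)
  have hWcont : ContinuousOn W (Set.Icc (1:ℝ) b) := by
    have hsub : Set.Icc (1:ℝ) b ⊆ Set.Ioi 0 := fun x hx => lt_of_lt_of_le one_pos hx.1
    have hne1 : ∀ x ∈ Set.Icc (1:ℝ) b, γ ^ 2 * x ^ 2 ≠ 0 := by
      intro x hx
      have hx0 : (0:ℝ) < x := lt_of_lt_of_le one_pos hx.1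
      positivity
    have hne2 : ∀ x ∈ Set.Icc (1:ℝ) b, γ * x ^ 2 ≠ 0 := by
      intro x hx
      have hx0 : (0:ℝ) < x := lt_of_lt_of_le one_pos hx.1
      positivity
    rw [hW]
    exact (((continuousOn_const.div
        ((continuous_const.mul (continuous_pow 2)).continuousOn) hne1).mul
        ((hch.mono hsub).pow 2)).sub
      ((continuousOn_const.div
        ((continuous_const.mul (continuous_pow 2)).continuousOn) hne2).mul
        (hch.mono hsub))).add (hch'.mono hsub)
  obtain ⟨M₂, hM₂⟩ : ∃ M₂, ∀ x ∈ Set.Icc (1:ℝ) b, |W x| ≤ M₂ :=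
    isCompact_Icc.exists_bound_of_continuousOn hWcont
  -- global lower bound for W
  obtain ⟨m, hm0, hWlow⟩ : ∃ m : ℝ, 0 ≤ m ∧ ∀ x : ℝ, 0 < x → -m ≤ W x := by
    refine ⟨max (2 * M) M₂, le_trans (by linarith) (le_max_left _ _), ?_⟩
    intro x hx0
    rcases le_total x 1 with hx1 | hx1
    · have := hW1 x hx0 hx1
      have h2 : 2 * M ≤ max (2 * M) M₂ := le_max_left _ _
      linarith
    · rcases le_total x b with hxb | hxb
      · have := neg_le_of_abs_le (hM₂ x ⟨hx1, hxb⟩)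
        have h2 : M₂ ≤ max (2 * M) M₂ := le_max_right _ _
        linarith
      · have := hWfar x hx0 (hbA x hxb)
        have h3 : (0:ℝ) ≤ max (2 * M) M₂ := le_trans (by linarith) (le_max_left _ _)
        linarith
  -- the infimum is finite; denominator bounds
  have hSbdd : BddBelow ((fun x => (q x) ^ 2 - deriv q x) '' Set.Ioi 0) := by
    refine ⟨-m, ?_⟩
    rintro _ ⟨x, hx, rfl⟩
    show -m ≤ (q x) ^ 2 - deriv q x
    rw [hF x hx]
    have h1 := hWlow x hx
    have h2 : 0 < 3 / (4 * x ^ 2) := by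
      have hx0 : (0:ℝ) < x := hx
      positivity
    linarith
  have hD2 : ∀ y ∈ Set.Ioi (0:ℝ), 2 ≤ (q y) ^ 2 - deriv q y + C + 2 := by
    intro y hy
    have hle : sInf ((fun x => (q x) ^ 2 - deriv q x) '' Set.Ioi 0) ≤ (q y) ^ 2 - deriv q y :=
      csInf_le hSbdd ⟨y, hy, rfl⟩
    rw [hC]
    linarith
  obtain ⟨K₂, hK₂0, hDlow⟩ : ∃ K₂ : ℝ, 0 ≤ K₂ ∧
      ∀ y ∈ Set.Ioo (0:ℝ) 1, 3 / (4 * y ^ 2) - K₂ ≤ (q y) ^ 2 - deriv q y + C + 2 := by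
    refine ⟨max (m + ((q 1) ^ 2 - deriv q 1)) 0, le_max_right _ _, ?_⟩
    intro y hy
    have hy0 : (0:ℝ) < y := hy.1
    have hCge : -((q 1) ^ 2 - deriv q 1) ≤ C := by
      have hle : sInf ((fun x => (q x) ^ 2 - deriv q x) '' Set.Ioi 0) ≤ (q 1) ^ 2 - deriv q 1 :=
        csInf_le hSbdd ⟨1, by norm_num, rfl⟩
      rw [hC]; linarith
    have hKge : m + ((q 1) ^ 2 - deriv q 1) ≤ max (m + ((q 1) ^ 2 - deriv q 1)) 0 := le_max_left _ _
    rw [hF y hy.1]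
    have := hWlow y hy0
    linarith
  -- key positivity: y * denominator is bounded below
  have hyD : ∀ y ∈ Set.Ioo (0:ℝ) 1, 1 / (K₂ + 1) ≤ y * ((q y) ^ 2 - deriv q y + C + 2) := by
    intro y hy
    have hy0 : (0:ℝ) < y := hy.1
    have hK1 : (0:ℝ) < K₂ + 1 := by linarith
    rcases le_total y (1 / (2 * (K₂ + 1))) with hsmall | hbig
    · have hsm : y * (2 * (K₂ + 1)) ≤ 1 := by
        have := (le_div_iff₀ (by positivity : (0:ℝ) < 2 * (K₂ + 1))).mp hsmall
        linarith
      have hD := hDlow y hy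
      have hmul : y * (3 / (4 * y ^ 2) - K₂) ≤ y * ((q y) ^ 2 - deriv q y + C + 2) :=
        mul_le_mul_of_nonneg_left hD hy0.le
      have heq : y * (3 / (4 * y ^ 2) - K₂) = 3 / (4 * y) - K₂ * y := by
        field_simp
      have e1 : 3 * (K₂ + 1) / 2 ≤ 3 / (4 * y) := by
        rw [div_le_div_iff₀ (by norm_num) (by positivity)]
        nlinarith
      have e2 : K₂ * y ≤ 1 / 2 := by nlinarith
      have e3 : 1 / (K₂ + 1) ≤ 1 := by rw [div_le_one hK1]; linarith
      linarith [hmul, heq.symm.le]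
    · have hD := hD2 y hy.1
      have h2y : 1 / (K₂ + 1) ≤ 2 * y := by
        rw [div_le_iff₀ hK1]
        have := (div_le_iff₀ (by positivity : (0:ℝ) < 2 * (K₂ + 1))).mp hbig
        nlinarith
      nlinarith [mul_le_mul_of_nonneg_left hD hy0.le]
  -- continuity of q and deriv q on (0,∞)
  have hqc : ContinuousOn q (Set.Ioi 0) := fun x hx =>
    (key x hx).continuousAt.continuousWithinAt
  have hdc : ContinuousOn (deriv q) (Set.Ioi 0) := by
    have hne2 : ∀ x ∈ Set.Ioi (0:ℝ), (2:ℝ) * x ^ 2 ≠ 0 := by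
      intro x hx
      have hx0 : (0:ℝ) < x := hx
      positivity
    have hne3 : ∀ x ∈ Set.Ioi (0:ℝ), γ * x ^ 2 ≠ 0 := by
      intro x hx
      have hx0 : (0:ℝ) < x := hx
      positivity
    have hform : ContinuousOn
        (fun x => -(1 / (2 * x ^ 2)) + (2 / (γ * x ^ 2)) * h (γ * x ^ 2 / 4)
          - h' (γ * x ^ 2 / 4)) (Set.Ioi 0) :=
      (((continuousOn_const.div
          ((continuous_const.mul (continuous_pow 2)).continuousOn) hne2).neg).add
        ((continuousOn_const.div
          ((continuous_const.mul (continuous_pow 2)).continuousOn) hne3).mul hch)).sub hch'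
    exact hform.congr (fun x hx => hqderiv x hx)
  -- continuity of Q
  have hPc : ∀ y ∈ Set.Ioo (0:ℝ) 1, ContinuousAt (fun t => 2 * ∫ u in (1:ℝ)..t, q u) y := by
    intro y hy
    have hy0 : (0:ℝ) < y := hy.1
    have hsub : Set.uIcc (1:ℝ) y ⊆ Set.Ioi 0 := by
      rw [Set.uIcc_of_ge hy.2.le]
      exact fun z hz => lt_of_lt_of_le hy0 hz.1
    have hii : IntervalIntegrable q volume 1 y := (hqc.mono hsub).intervalIntegrable
    have hsm := ContinuousOn.stronglyMeasurableAtFilter (μ := volume) isOpen_Ioi hqc y hy.1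
    have hca : ContinuousAt q y := hqc.continuousAt (Ioi_mem_nhds hy0)
    exact (continuousAt_const.mul
      (intervalIntegral.integral_hasDerivAt_right hii (hsm) hca).continuousAt)
  have hQc : ContinuousOn Q (Set.Ioo 0 1) := by
    refine ContinuousOn.congr (f := fun t => 2 * ∫ u in (1:ℝ)..t, q u) ?_ ?_
    · exact fun y hy => (hPc y hy).continuousWithinAt
    · exact fun y hy => hQ y hy.1
  -- continuity of the integrand
  have hsub01 : Set.Ioo (0:ℝ) 1 ⊆ Set.Ioi 0 := fun x hx => hx.1
  have hfc : ContinuousOn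
      (fun y => Real.exp (-(Q y)) / ((q y) ^ 2 - deriv q y + C + 2)) (Set.Ioo 0 1) := by
    refine ContinuousOn.div ?_ ?_ ?_
    · exact Real.continuous_exp.comp_continuousOn hQc.neg
    · exact ((((hqc.mono hsub01).pow 2).sub (hdc.mono hsub01)).add
        continuousOn_const).add continuousOn_const
    · intro y hy
      have := hD2 y hy.1
      linarith
  -- exp bound
  have hexp : ∀ y ∈ Set.Ioo (0:ℝ) 1, Real.exp (-(Q y)) ≤ Real.exp M / y := by
    intro y hy
    have hy0 : (0:ℝ) < y := hy.1
    have hy1 : y ≤ 1 := hy.2.le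
    have hsub : Set.uIcc y (1:ℝ) ⊆ Set.Ioi 0 := by
      rw [Set.uIcc_of_le hy1]
      exact fun z hz => lt_of_lt_of_le hy0 hz.1
    have hii : IntervalIntegrable q volume y 1 := (hqc.mono hsub).intervalIntegrable
    have hgc : ContinuousOn (fun u : ℝ => 2⁻¹ * u⁻¹ + M / 2) (Set.uIcc y 1) := by
      refine ContinuousOn.add ?_ continuousOn_const
      exact continuousOn_const.mul (continuousOn_inv₀.mono (fun z hz => ne_of_gt (hsub hz)))
    have hi1 : IntervalIntegrable (fun u : ℝ => 2⁻¹ * u⁻¹) volume y 1 :=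
      (continuousOn_const.mul (continuousOn_inv₀.mono
        (fun z hz => ne_of_gt (hsub hz)))).intervalIntegrable
    have hgi : IntervalIntegrable (fun u : ℝ => 2⁻¹ * u⁻¹ + M / 2) volume y 1 :=
      hi1.add intervalIntegrable_const
    have hpt : ∀ u ∈ Set.Icc y 1, q u ≤ 2⁻¹ * u⁻¹ + M / 2 := by
      intro u hu
      have hu0 : (0:ℝ) < u := lt_of_lt_of_le hy0 hu.1
      have hmem := humem u hu0 hu.2
      have h1 : |h (γ * u ^ 2 / 4)| ≤ M * (γ * u ^ 2 / 4) := hlin _ hmem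
      have hbb : |(2 / (γ * u)) * h (γ * u ^ 2 / 4)| ≤ M * u / 2 := by
        rw [abs_mul, abs_of_nonneg (by positivity : (0:ℝ) ≤ 2 / (γ * u))]
        calc 2 / (γ * u) * |h (γ * u ^ 2 / 4)|
            ≤ 2 / (γ * u) * (M * (γ * u ^ 2 / 4)) := by gcongr
          _ = M * u / 2 := by field_simp; ring
      have := abs_le.1 hbb
      rw [hq u hu0]
      have he : 1 / (2 * u) = 2⁻¹ * u⁻¹ := by field_simp
      have hMu : M * u / 2 ≤ M / 2 := by nlinarith [mul_le_mul_of_nonneg_left hu.2 hM0]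
      rw [he]
      linarith [this.1]
    have hmono := intervalIntegral.integral_mono_on hy1 hii hgi hpt
    have hcomp : (∫ u in y..(1:ℝ), (2⁻¹ * u⁻¹ + M / 2)) = 2⁻¹ * Real.log (1/y) + (1 - y) * (M/2) := by
      rw [intervalIntegral.integral_add hi1 intervalIntegrable_const,
        intervalIntegral.integral_const_mul, integral_inv_of_pos hy0 one_pos,
        intervalIntegral.integral_const]
      simp [smul_eq_mul]
    have hlog : Real.log (1/y) = -Real.log y := by
      rw [one_div, Real.log_inv]
    have hQy : -(Q y) ≤ -Real.log y + M := by
      rw [hQ y hy.1]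
      have hsymm : (∫ u in (1:ℝ)..y, q u) = -∫ u in y..(1:ℝ), q u :=
        (intervalIntegral.integral_symm y 1)
      rw [hsymm]
      have : (∫ u in y..(1:ℝ), q u) ≤ 2⁻¹ * (-Real.log y) + (1 - y) * (M/2) := by
        rw [← hlog]
        linarith [hmono, hcomp.le]
      nlinarith [this, hM0, hy0.le]
    calc Real.exp (-(Q y)) ≤ Real.exp (-Real.log y + M) := Real.exp_le_exp.mpr hQy
      _ = Real.exp M / y := by
        rw [Real.exp_add, Real.exp_neg, Real.exp_log hy0]
        ring
  -- final integrability
  have hbound : ∀ y ∈ Set.Ioo (0:ℝ) 1,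
      ‖Real.exp (-(Q y)) / ((q y) ^ 2 - deriv q y + C + 2)‖ ≤ Real.exp M * (K₂ + 1) := by
    intro y hy
    have hy0 : (0:ℝ) < y := hy.1
    have hDpos : (0:ℝ) < (q y) ^ 2 - deriv q y + C + 2 := lt_of_lt_of_le two_pos (hD2 y hy.1)
    have hfnn : 0 ≤ Real.exp (-(Q y)) / ((q y) ^ 2 - deriv q y + C + 2) :=
      div_nonneg (Real.exp_nonneg _) hDpos.le
    rw [Real.norm_eq_abs, abs_of_nonneg hfnn]
    calc Real.exp (-(Q y)) / ((q y) ^ 2 - deriv q y + C + 2)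
        ≤ (Real.exp M / y) / ((q y) ^ 2 - deriv q y + C + 2) :=
          (div_le_div_iff_of_pos_right hDpos).mpr (hexp y hy)
      _ = Real.exp M / (y * ((q y) ^ 2 - deriv q y + C + 2)) := by rw [div_div]
      _ ≤ Real.exp M / (1 / (K₂ + 1)) :=
          div_le_div_of_nonneg_left (Real.exp_nonneg M) (by positivity) (hyD y hy)
      _ = Real.exp M * (K₂ + 1) := by
          rw [div_div_eq_mul_div, mul_comm, mul_div_assoc, div_one]
  have hμ : volume (Set.Ioo (0:ℝ) 1) < ⊤ := by
    rw [Real.volume_Ioo]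
    exact ENNReal.ofReal_lt_top
  refine MeasureTheory.Integrable.mono' (g := fun _ => Real.exp M * (K₂ + 1))
    (MeasureTheory.integrableOn_const hμ.ne)
    (hfc.aestronglyMeasurable measurableSet_Ioo) ?_
  rw [MeasureTheory.ae_restrict_iff' measurableSet_Ioo]
  exact MeasureTheory.ae_of_all _ hbound
end

section
/- Let γ > 0 and let h : [0,∞) → ℝ be C¹ with h(0) = 0, lim_{x→∞} h(x)/√x = −∞ and lim_{x→∞} x·h'(x)/h(x)² = 0. Define q(x) := 1/(2x) − (2/(γx))·h(γx²/4) for x > 0 and Q(x) := 2∫₁ˣ q(u) du. Then ∫₁^∞ e^{−Q(x)} dx < ∞ and ∫₀¹ x·e^{−Q(x)/2} dx < ∞, i.e. hypothesis (H4) holds. -/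
open Filter Set Topology MeasureTheory

/-- Let `γ > 0` and let `h` be `C¹` on `[0,∞)` with `h(0) = 0`,
`h(x)/√x → −∞` and `x h'(x)/h(x)² → 0` as `x → ∞`. For the drift
`q(x) = 1/(2x) − (2/(γx)) h(γx²/4)` and `Q(x) = 2∫₁ˣ q`, one has
`∫₁^∞ e^{−Q(x)} dx < ∞` and `∫₀¹ x e^{−Q(x)/2} dx < ∞`, i.e. hypothesis (H4) holds. -/
theorem H4_for_generalized_Feller_drift (γ : ℝ) (hγ : 0 < γ) (h h' : ℝ → ℝ)
    (hderiv : ∀ x ∈ Set.Ici (0:ℝ), HasDerivWithinAt h (h' x) (Set.Ici 0) x)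
    (hcont : ContinuousOn h' (Set.Ici 0))
    (h0 : h 0 = 0)
    (hh1 : Tendsto (fun x => h x / Real.sqrt x) atTop atBot)
    (hh2 : Tendsto (fun x => x * h' x / (h x) ^ 2) atTop (𝓝 0))
    (q Q : ℝ → ℝ)
    (hq : ∀ x ∈ Set.Ioi (0:ℝ), q x = 1 / (2 * x) - (2 / (γ * x)) * h (γ * x ^ 2 / 4))
    (hQ : ∀ x ∈ Set.Ioi (0:ℝ), Q x = 2 * ∫ u in (1:ℝ)..x, q u) :
    MeasureTheory.IntegrableOn (fun x => Real.exp (-(Q x))) (Set.Ioi 1) ∧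
    MeasureTheory.IntegrableOn (fun x => x * Real.exp (-(Q x) / 2)) (Set.Ioo 0 1) := by
  set g : ℝ → ℝ := fun u => h (γ * u ^ 2 / 4) / u with hg_def
  set J : ℝ → ℝ := fun x => ∫ u in (1:ℝ)..x, g u with hJ_def
  have hch : ContinuousOn h (Ici 0) := fun x hx => (hderiv x hx).continuousWithinAt
  -- continuity of g on Ioi 0
  have hcg : ContinuousOn g (Ioi 0) := by
    apply ContinuousOn.div
    · apply hch.comp (by fun_prop : Continuous fun u : ℝ => γ * u ^ 2 / 4).continuousOn
      intro u hu
      have : (0:ℝ) ≤ γ * u ^ 2 / 4 := by positivity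
      exact this
    · exact continuousOn_id
    · intro u hu; exact ne_of_gt hu
  have hsub : ∀ x : ℝ, 0 < x → uIcc (1:ℝ) x ⊆ Ioi 0 := by
    intro x hx y hy
    rcases le_total 1 x with hc | hc
    · rw [uIcc_of_le hc] at hy; exact lt_of_lt_of_le one_pos hy.1
    · rw [uIcc_of_ge hc] at hy; exact lt_of_lt_of_le hx hy.1
  have hgint : ∀ x : ℝ, 0 < x → IntervalIntegrable g volume 1 x := by
    intro x hx
    exact (hcg.mono (hsub x hx)).intervalIntegrable
  have hgint' : ∀ a b : ℝ, 0 < a → 0 < b → IntervalIntegrable g volume a b := by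
    intro a b ha hb
    apply ContinuousOn.intervalIntegrable
    apply hcg.mono
    intro y hy
    rcases le_total a b with hc | hc
    · rw [uIcc_of_le hc] at hy; exact lt_of_lt_of_le ha hy.1
    · rw [uIcc_of_ge hc] at hy; exact lt_of_lt_of_le hb hy.1
  -- formula for Q
  have hQeq : ∀ x ∈ Ioi (0:ℝ), Q x = Real.log x - (4 / γ) * J x := by
    intro x hx
    rw [hQ x hx]
    have hqeq : ∀ u ∈ uIcc (1:ℝ) x, q u = 1 / (2 * u) - (2 / γ) * g u := by
      intro u hu
      have hu0 : 0 < u := hsub x hx hu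
      rw [hq u hu0]
      simp only [hg_def]
      field_simp
    have h1 : ∫ u in (1:ℝ)..x, q u
        = ∫ u in (1:ℝ)..x, (1 / (2 * u) - (2 / γ) * g u) :=
      intervalIntegral.integral_congr hqeq
    have hint1 : IntervalIntegrable (fun u : ℝ => 1 / (2 * u)) volume 1 x := by
      apply ContinuousOn.intervalIntegrable
      apply ContinuousOn.div continuousOn_const (by fun_prop)
      intro u hu
      have hu0 : (0:ℝ) < u := hsub x hx hu
      exact ne_of_gt (by linarith)
    have hint2 : IntervalIntegrable (fun u : ℝ => (2 / γ) * g u) volume 1 x :=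
      (hgint x hx).const_mul _
    rw [h1, intervalIntegral.integral_sub hint1 hint2,
      intervalIntegral.integral_const_mul]
    have h2 : ∫ u in (1:ℝ)..x, 1 / (2 * u) = (1/2) * Real.log x := by
      have heq : ∀ u ∈ uIcc (1:ℝ) x, 1 / (2 * u) = (1/2) * u⁻¹ := by
        intro u hu; rw [one_div, mul_inv]; ring
      rw [intervalIntegral.integral_congr heq, intervalIntegral.integral_const_mul,
        integral_inv_of_pos one_pos hx]
      simp
    rw [h2]
    ring
  -- continuity of J hence Q on Ioi 0
  have hJcont : ∀ x ∈ Ioi (0:ℝ), ContinuousAt J x := by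
    intro x hx
    have hmeas := hcg.stronglyMeasurableAtFilter (μ := volume) isOpen_Ioi x hx
    have hca : ContinuousAt g x := hcg.continuousAt (isOpen_Ioi.mem_nhds hx)
    exact (intervalIntegral.integral_hasDerivAt_right (hgint x hx) hmeas hca).continuousAt
  have hQcont : ContinuousOn Q (Ioi 0) := by
    apply ContinuousOn.congr (f := fun x => Real.log x - (4 / γ) * J x)
    · apply ContinuousOn.sub
      · exact Real.continuousOn_log.mono (fun x hx => ne_of_gt hx)
      · exact continuousOn_const.mul (fun x hx => (hJcont x hx).continuousWithinAt)
    · intro x hx; exact hQeq x hx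
  -- bound for h near 0
  obtain ⟨L, hL⟩ := (isCompact_Icc (a := (0:ℝ)) (b := γ/4)).exists_bound_of_continuousOn
    (hcont.mono (fun t ht => ht.1))
  have hL0 : 0 ≤ L := le_trans (norm_nonneg _) (hL 0 ⟨le_refl _, by positivity⟩)
  have hhb : ∀ t ∈ Icc (0:ℝ) (γ/4), |h t| ≤ L * t := by
    intro t ht
    have key := (convex_Icc (0:ℝ) (γ/4)).norm_image_sub_le_of_norm_hasDerivWithin_le
      (f := h) (f' := h')
      (fun u hu => (hderiv u hu.1).mono (fun v hv => hv.1)) hL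
      (⟨le_refl _, by positivity⟩ : (0:ℝ) ∈ Icc (0:ℝ) (γ/4)) ht
    rw [h0, sub_zero, sub_zero] at key
    calc |h t| ≤ L * ‖t‖ := key
    _ = L * t := by rw [Real.norm_eq_abs, abs_of_nonneg ht.1]
  -- bound for J on (0,1)
  set M₀ : ℝ := L * γ / 4 with hM₀
  have hM₀0 : 0 ≤ M₀ := by positivity
  have hJsmall : ∀ x ∈ Ioo (0:ℝ) 1, |J x| ≤ M₀ := by
    intro x hx
    have hb : ∀ u ∈ Ioc x 1, ‖g u‖ ≤ M₀ := by
      intro u hu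
      have hu0 : 0 < u := lt_trans hx.1 hu.1
      have hu1 : u ≤ 1 := hu.2
      have harg : γ * u ^ 2 / 4 ∈ Icc (0:ℝ) (γ/4) := by
        have hu2 : u ^ 2 ≤ 1 := by nlinarith
        constructor
        · positivity
        · nlinarith
      have hkey := hhb _ harg
      rw [hg_def]
      simp only [Real.norm_eq_abs, abs_div, abs_of_pos hu0]
      rw [div_le_iff₀ hu0]
      have huu : u ^ 2 ≤ u := by nlinarith
      have hLγ : 0 ≤ L * γ := mul_nonneg hL0 hγ.le
      nlinarith [mul_le_mul_of_nonneg_left huu hLγ]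
    have hbb : ∀ u ∈ Set.uIoc (1:ℝ) x, ‖g u‖ ≤ M₀ := by
      intro u hu
      rw [uIoc_of_ge hx.2.le] at hu
      exact hb u hu
    calc |J x| ≤ M₀ * |x - 1| :=
          intervalIntegral.norm_integral_le_of_norm_le_const hbb
    _ ≤ M₀ * 1 := by
          apply mul_le_mul_of_nonneg_left _ hM₀0
          rw [abs_of_nonpos (by linarith [hx.2])]
          linarith [hx.1]
    _ = M₀ := mul_one _
  -- tail bound for g : g u ≤ -c for u ≥ u₀
  set c : ℝ := Real.sqrt γ / 2 with hc_def
  have hc0 : 0 < c := by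
    have := Real.sqrt_pos.mpr hγ
    positivity
  obtain ⟨t₀, ht₀⟩ : ∃ t₀ : ℝ, ∀ t ≥ t₀, h t / Real.sqrt t ≤ -1 :=
    eventually_atTop.mp (hh1.eventually (eventually_le_atBot (-1)))
  set u₀ : ℝ := max 1 (2 * Real.sqrt (max t₀ 1 / γ) + 1) with hu₀_def
  have hu₀1 : 1 ≤ u₀ := le_max_left _ _
  have hu₀pos : 0 < u₀ := lt_of_lt_of_le one_pos hu₀1
  have hgtail : ∀ u : ℝ, u₀ ≤ u → g u ≤ -c := by
    intro u hu
    have hu1 : 1 ≤ u := le_trans hu₀1 hu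
    have hu0 : 0 < u := lt_of_lt_of_le one_pos hu1
    have hsq : 2 * Real.sqrt (max t₀ 1 / γ) + 1 ≤ u := le_trans (le_max_right _ _) hu
    have hsqrtle : Real.sqrt (max t₀ 1 / γ) ≤ u / 2 := by linarith
    have h1 : max t₀ 1 / γ ≤ (u / 2) ^ 2 := by
      nlinarith [Real.sq_sqrt (show (0:ℝ) ≤ max t₀ 1 / γ by positivity),
        Real.sqrt_nonneg (max t₀ 1 / γ), hsqrtle]
    have htarg : max t₀ 1 ≤ γ * u ^ 2 / 4 := by
      rw [div_le_iff₀ hγ] at h1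
      nlinarith
    have htge : t₀ ≤ γ * u ^ 2 / 4 := le_trans (le_max_left _ _) htarg
    have htpos : (0:ℝ) < γ * u ^ 2 / 4 := lt_of_lt_of_le one_pos (le_trans (le_max_right _ _) htarg)
    have hht := ht₀ _ htge
    have hsqrtpos : 0 < Real.sqrt (γ * u ^ 2 / 4) := Real.sqrt_pos.mpr htpos
    have hhle : h (γ * u ^ 2 / 4) ≤ -Real.sqrt (γ * u ^ 2 / 4) := by
      rw [div_le_iff₀ hsqrtpos] at hht
      linarith
    have hsqrteq : Real.sqrt (γ * u ^ 2 / 4) = Real.sqrt γ * u / 2 := by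
      rw [show γ * u ^ 2 / 4 = γ * (u / 2) ^ 2 by ring,
        Real.sqrt_mul hγ.le, Real.sqrt_sq (by positivity)]
      ring
    rw [hg_def]
    show h (γ * u ^ 2 / 4) / u ≤ -c
    rw [div_le_iff₀ hu0]
    rw [hsqrteq] at hhle
    have : Real.sqrt γ * u / 2 = c * u := by rw [hc_def]; ring
    linarith [hhle, this ▸ hhle]
  -- bound for g on [1, u₀]
  obtain ⟨M₁, hM₁⟩ := (isCompact_Icc (a := (1:ℝ)) (b := u₀)).exists_bound_of_continuousOn
    (hcg.mono (fun u hu => lt_of_lt_of_le one_pos hu.1))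
  set M : ℝ := max M₁ 0 with hM_def
  have hM0 : 0 ≤ M := le_max_right _ _
  have hMb : ∀ u ∈ Icc (1:ℝ) u₀, g u ≤ M := by
    intro u hu
    calc g u ≤ ‖g u‖ := le_abs_self _
    _ ≤ M₁ := hM₁ u hu
    _ ≤ M := le_max_left _ _
  set B : ℝ := M * (u₀ - 1) + c * u₀ with hB_def
  -- linear bound on J for x ≥ 1
  have hJle : ∀ x : ℝ, 1 ≤ x → J x ≤ B - c * x := by
    intro x hx1
    have hx0 : (0:ℝ) < x := lt_of_lt_of_le one_pos hx1
    rcases le_total x u₀ with hxu | hxu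
    · have h1 : J x ≤ M * (x - 1) := by
        have := intervalIntegral.integral_mono_on hx1 (hgint x hx0)
          (intervalIntegrable_const (c := M))
          (fun u hu => hMb u ⟨hu.1, le_trans hu.2 hxu⟩)
        simpa [smul_eq_mul, mul_comm] using this
      have : M * (x - 1) ≤ M * (u₀ - 1) := by nlinarith
      have hcx : c * x ≤ c * u₀ := by nlinarith
      rw [hB_def]; linarith
    · have hsplit : J x = (∫ u in (1:ℝ)..u₀, g u) + ∫ u in u₀..x, g u := by
        rw [hJ_def]
        exact (intervalIntegral.integral_add_adjacent_intervals
          (hgint u₀ hu₀pos) (hgint' u₀ x hu₀pos hx0)).symm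
      have h1 : (∫ u in (1:ℝ)..u₀, g u) ≤ M * (u₀ - 1) := by
        have := intervalIntegral.integral_mono_on hu₀1 (hgint u₀ hu₀pos)
          (intervalIntegrable_const (c := M)) (fun u hu => hMb u hu)
        simpa [smul_eq_mul, mul_comm] using this
      have h2 : (∫ u in u₀..x, g u) ≤ -c * (x - u₀) := by
        have := intervalIntegral.integral_mono_on hxu (hgint' u₀ x hu₀pos hx0)
          (intervalIntegrable_const (c := -c)) (fun u hu => hgtail u hu.1)
        rw [intervalIntegral.integral_const, smul_eq_mul] at this
        linarith
      rw [hsplit, hB_def]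
      linarith
  constructor
  · -- first integral
    set lam : ℝ := 4 / γ * c with hlam
    have hlam0 : 0 < lam := by positivity
    have hdom : IntegrableOn (fun x : ℝ => Real.exp (4 / γ * B) * Real.exp (-lam * x)) (Ioi 1) :=
      (exp_neg_integrableOn_Ioi 1 hlam0).const_mul _
    apply Integrable.mono' hdom
    · apply ContinuousOn.aestronglyMeasurable _ measurableSet_Ioi
      exact (Real.continuous_exp.comp_continuousOn
        ((hQcont.mono (fun x (hx : x ∈ Ioi (1:ℝ)) => show (0:ℝ) < x from lt_trans one_pos hx)).neg))
    · rw [ae_restrict_iff' measurableSet_Ioi]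
      apply ae_of_all
      intro x hx
      have hx1 : (1:ℝ) < x := hx
      have hx0 : (0:ℝ) < x := lt_trans one_pos hx1
      rw [Real.norm_eq_abs, abs_of_pos (Real.exp_pos _)]
      rw [hQeq x hx0]
      have hlog : 0 ≤ Real.log x := Real.log_nonneg hx1.le
      have hJx : J x ≤ B - c * x := hJle x hx1.le
      calc Real.exp (-(Real.log x - 4 / γ * J x))
          = Real.exp (-Real.log x + 4 / γ * J x) := by ring_nf
      _ ≤ Real.exp (0 + 4 / γ * (B - c * x)) := by
          apply Real.exp_le_exp.mpr
          have : 4 / γ * J x ≤ 4 / γ * (B - c * x) := by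
            apply mul_le_mul_of_nonneg_left hJx (by positivity)
          linarith
      _ = Real.exp (4 / γ * B) * Real.exp (-lam * x) := by
          rw [← Real.exp_add, hlam]; ring_nf
  · -- second integral
    set K : ℝ := Real.exp (2 / γ * M₀) with hK
    have hdom : IntegrableOn (fun _ : ℝ => K) (Ioo 0 1) :=
      (integrableOn_const_iff (C := K)).mpr (Or.inr (by simp [Real.volume_Ioo]))
    apply Integrable.mono' hdom
    · apply ContinuousOn.aestronglyMeasurable _ measurableSet_Ioo
      apply ContinuousOn.mul continuousOn_id
      exact Real.continuous_exp.comp_continuousOn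
        (((hQcont.mono (fun x hx => hx.1)).neg).div_const 2)
    · rw [ae_restrict_iff' measurableSet_Ioo]
      apply ae_of_all
      intro x hx
      have hx0 : 0 < x := hx.1
      rw [Real.norm_eq_abs, abs_of_nonneg (by positivity)]
      rw [hQeq x hx0]
      have hJx : |J x| ≤ M₀ := hJsmall x hx
      have hlog : Real.log x ≤ 0 := Real.log_nonpos hx0.le hx.2.le
      calc x * Real.exp (-(Real.log x - 4 / γ * J x) / 2)
          = Real.exp (Real.log x) * Real.exp (-(Real.log x - 4 / γ * J x) / 2) := by
            rw [Real.exp_log hx0]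
      _ = Real.exp (Real.log x / 2 + 2 / γ * J x) := by
            rw [← Real.exp_add]; ring_nf
      _ ≤ Real.exp (0 + 2 / γ * M₀) := by
            apply Real.exp_le_exp.mpr
            have h1 : 2 / γ * J x ≤ 2 / γ * M₀ := by
              apply mul_le_mul_of_nonneg_left (le_trans (le_abs_self _) hJx) (by positivity)
            linarith
      _ = K := by rw [hK, zero_add]
end

section
/- Let γ > 0 and let h : [0,∞) → ℝ be C¹ with h(0) = 0 and lim_{x→∞} h(x)/√x = +∞. Then J(x) := ∫₀ˣ 2h(z)/(γz) dz is well defined and finite for every x ≥ 0, ∫₀^∞ e^{−J(z)} dz < ∞, and the function v(x) := (∫ₓ^∞ e^{−J(z)} dz)/(∫₀^∞ e^{−J(z)} dz) satisfies: v(0) = 1, v is strictly decreasing, lim_{x→∞} v(x) = 0, and (γ/2)·x·v''(x) + h(x)·v'(x) = 0 for all x > 0. -/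
open Filter Set Topology MeasureTheory

/-- Let `γ > 0` and let `h : [0,∞) → ℝ` be `C¹` with `h(0) = 0` and
`h(x)/√x → +∞` as `x → ∞`. Then `J(x) = ∫₀ˣ 2h(z)/(γz) dz` is well defined and finite for
every `x ≥ 0`, `∫₀^∞ e^{−J(z)} dz < ∞`, and the function
`v(x) = (∫ₓ^∞ e^{−J}) / (∫₀^∞ e^{−J})` satisfies `v(0) = 1`, `v` is strictly decreasing,
`v(x) → 0` as `x → ∞`, and `(γ/2) x v''(x) + h(x) v'(x) = 0` for all `x > 0`. -/
theorem extinction_probability_of_supercritical_Feller (γ : ℝ) (hγ : 0 < γ) (h : ℝ → ℝ)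
    (hC1 : ContDiffOn ℝ 1 h (Set.Ici 0))
    (h0 : h 0 = 0)
    (hh : Tendsto (fun x => h x / Real.sqrt x) atTop atTop)
    (J v : ℝ → ℝ)
    (hJ : ∀ x, J x = ∫ z in (0:ℝ)..x, 2 * h z / (γ * z))
    (hv : ∀ x, v x =
      (∫ z in Set.Ioi x, Real.exp (-(J z))) / ∫ z in Set.Ioi (0:ℝ), Real.exp (-(J z))) :
    (∀ x, 0 ≤ x →
      IntervalIntegrable (fun z => 2 * h z / (γ * z)) MeasureTheory.volume 0 x) ∧
    MeasureTheory.IntegrableOn (fun z => Real.exp (-(J z))) (Set.Ioi 0) ∧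
    v 0 = 1 ∧
    StrictAntiOn v (Set.Ici 0) ∧
    Tendsto v atTop (𝓝 0) ∧
    (∀ x, 0 < x → γ / 2 * x * deriv (deriv v) x + h x * deriv v x = 0) := by
  set g : ℝ → ℝ := fun z => 2 * h z / (γ * z) with hg_def
  set E : ℝ → ℝ := fun z => Real.exp (-(J z)) with hE_def
  have hcont_h : ContinuousOn h (Ici 0) := hC1.continuousOn
  have hderiv_cont : ContinuousOn (derivWithin h (Ici 0)) (Ici 0) :=
    hC1.continuousOn_derivWithin (uniqueDiffOn_Ici 0) le_rfl
  have hdiff : DifferentiableOn ℝ h (Ici 0) := hC1.differentiableOn one_ne_zero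
  -- linear bound on h near 0: for every b > 0 there is M ≥ 0 with |h z| ≤ M z on [0, b]
  have hbound : ∀ b : ℝ, 0 < b → ∃ M : ℝ, 0 ≤ M ∧ ∀ z ∈ Icc (0:ℝ) b, |h z| ≤ M * z := by
    intro b hb
    obtain ⟨C, hC⟩ := (isCompact_Icc (a := (0:ℝ)) (b := b)).exists_bound_of_continuousOn
      (hderiv_cont.mono (Icc_subset_Ici_self))
    refine ⟨max C 0, le_max_right _ _, fun z hz => ?_⟩
    have key : ‖h z - h 0‖ ≤ max C 0 * ‖z - 0‖ := by
      refine (convex_Icc (0:ℝ) b).norm_image_sub_le_of_norm_hasDerivWithin_le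
        (f' := derivWithin h (Ici 0)) (fun x hx => ?_) (fun x hx => ?_) ?_ hz
      · exact ((hdiff x (Icc_subset_Ici_self hx)).hasDerivWithinAt).mono Icc_subset_Ici_self
      · exact le_trans (hC x hx) (le_max_left _ _)
      · exact ⟨le_rfl, hb.le⟩
    simpa [h0, abs_of_nonneg hz.1] using key
  -- Part 1: interval integrability of g
  have hg_cont : ContinuousOn g (Ioi 0) := by
    apply ContinuousOn.div
    · exact continuousOn_const.mul (hcont_h.mono Ioi_subset_Ici_self)
    · exact continuousOn_const.mul continuousOn_id
    · intro z hz; exact ne_of_gt (mul_pos hγ hz)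
  have hgbound : ∀ b : ℝ, 0 < b → ∃ M : ℝ, 0 ≤ M ∧ ∀ z ∈ Ioc (0:ℝ) b, |g z| ≤ M := by
    intro b hb
    obtain ⟨M, hM0, hM⟩ := hbound b hb
    refine ⟨2 * M / γ, by positivity, fun z hz => ?_⟩
    have hz0 : 0 < z := hz.1
    have : |g z| = 2 * |h z| / (γ * z) := by
      rw [hg_def]; rw [abs_div, abs_mul, abs_mul]
      simp [abs_of_pos hγ, abs_of_pos hz0, abs_of_nonneg (by norm_num : (0:ℝ) ≤ 2)]
    rw [this]
    rw [div_le_div_iff₀ (by positivity) (by positivity)]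
    have h1 : |h z| ≤ M * z := hM z ⟨hz0.le, hz.2⟩
    nlinarith [hz0, hγ]
  have part1 : ∀ x, 0 ≤ x → IntervalIntegrable g volume 0 x := by
    intro x hx
    rcases eq_or_lt_of_le hx with rfl | hx
    · exact IntervalIntegrable.refl
    obtain ⟨M, hM0, hM⟩ := hgbound x hx
    rw [intervalIntegrable_iff_integrableOn_Ioc_of_le hx.le]
    refine Integrable.mono' (integrable_const M) ?_ ?_
    · exact (hg_cont.mono Ioc_subset_Ioi_self).aestronglyMeasurable measurableSet_Ioc
    · refine (ae_restrict_iff' measurableSet_Ioc).2 (ae_of_all _ fun z hz => ?_)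
      simpa [Real.norm_eq_abs] using hM z hz
  -- derivative of J on (0, ∞)
  have hJ_deriv : ∀ x : ℝ, 0 < x → HasDerivAt J (g x) x := by
    intro x hx
    have hd : HasDerivAt (fun u => ∫ z in (0:ℝ)..u, g z) (g x) x :=
      intervalIntegral.integral_hasDerivAt_right (part1 x hx.le)
        (hg_cont.stronglyMeasurableAtFilter isOpen_Ioi x hx)
        (hg_cont.continuousAt (isOpen_Ioi.mem_nhds hx))
    exact hd.congr_of_eventuallyEq (Eventually.of_forall fun u => (hJ u))
  have hJ_cont : ContinuousOn J (Ioi 0) :=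
    fun x hx => ((hJ_deriv x hx).continuousAt).continuousWithinAt
  have hE_cont : ContinuousOn E (Ioi 0) := by
    exact (Real.continuous_exp.comp_continuousOn (hJ_cont.neg))
  -- bound on J on bounded intervals
  have hJ_bdd : ∀ b : ℝ, 0 < b → ∃ K : ℝ, ∀ z ∈ Ioc (0:ℝ) b, |J z| ≤ K := by
    intro b hb
    obtain ⟨M, hM0, hM⟩ := hgbound b hb
    refine ⟨M * b, fun z hz => ?_⟩
    have : ‖∫ t in (0:ℝ)..z, g t‖ ≤ M * |z - 0| := by
      apply intervalIntegral.norm_integral_le_of_norm_le_const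
      intro t ht
      rw [uIoc_of_le hz.1.le] at ht
      simpa [Real.norm_eq_abs] using hM t ⟨ht.1, ht.2.trans hz.2⟩
    rw [hJ z]
    calc |∫ t in (0:ℝ)..z, g t| ≤ M * |z - 0| := this
      _ ≤ M * b := by
          rw [sub_zero, abs_of_pos hz.1]
          exact mul_le_mul_of_nonneg_left hz.2 hM0
  -- integrability of E near 0
  have hE_int_Ioc : ∀ b : ℝ, 0 < b → IntegrableOn E (Ioc 0 b) := by
    intro b hb
    obtain ⟨K, hK⟩ := hJ_bdd b hb
    refine Integrable.mono' (integrable_const (Real.exp K)) ?_ ?_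
    · exact (hE_cont.mono Ioc_subset_Ioi_self).aestronglyMeasurable measurableSet_Ioc
    · refine (ae_restrict_iff' measurableSet_Ioc).2 (ae_of_all _ fun z hz => ?_)
      have := hK z hz
      have : -(J z) ≤ K := by cases abs_le.1 this; linarith
      simpa [hE_def, Real.norm_eq_abs, abs_of_pos (Real.exp_pos _)] using Real.exp_le_exp.2 this
  -- choose x₀ ≥ 1 with h z ≥ √z for z ≥ x₀
  obtain ⟨x₀, hx₀⟩ : ∃ x₀ : ℝ, 1 ≤ x₀ ∧ ∀ z ≥ x₀, Real.sqrt z ≤ h z := by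
    have h1 : ∀ᶠ z in atTop, (1:ℝ) ≤ h z / Real.sqrt z := hh.eventually_ge_atTop 1
    have h2 : ∀ᶠ z in atTop, (1:ℝ) ≤ z := eventually_ge_atTop 1
    obtain ⟨x₀, hx⟩ := (h1.and h2).exists_forall_of_atTop
    refine ⟨max x₀ 1, le_max_right _ _, fun z hz => ?_⟩
    have hzx : x₀ ≤ z := le_trans (le_max_left _ _) hz
    obtain ⟨ha, hb⟩ := hx z hzx
    have hs : 0 < Real.sqrt z := Real.sqrt_pos.2 (by linarith)
    exact (one_le_div hs).1 ha
  have hx₀pos : (0:ℝ) < x₀ := lt_of_lt_of_le one_pos hx₀.1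
  -- lower bound for J on [x₀, ∞)
  have key : ∀ x : ℝ, x₀ ≤ x →
      J x₀ + (4/γ) * Real.sqrt x - (4/γ) * Real.sqrt x₀ ≤ J x := by
    intro x hx
    have hxpos : 0 < x := lt_of_lt_of_le hx₀pos hx
    have hint : IntervalIntegrable g volume x₀ x :=
      (part1 x₀ hx₀pos.le).symm.trans (part1 x hxpos.le)
    have hadd := intervalIntegral.integral_add_adjacent_intervals
      (part1 x₀ hx₀pos.le) hint
    have hJx : J x = J x₀ + ∫ z in x₀..x, g z := by
      rw [hJ x, hJ x₀, ← hadd]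
    have hint2 : IntervalIntegrable (fun z => 2/(γ * Real.sqrt z)) volume x₀ x := by
      apply ContinuousOn.intervalIntegrable
      apply ContinuousOn.div continuousOn_const
      · exact continuousOn_const.mul (Real.continuous_sqrt.continuousOn)
      · intro z hz
        rw [uIcc_of_le hx] at hz
        have : 0 < z := lt_of_lt_of_le hx₀pos hz.1
        exact ne_of_gt (mul_pos hγ (Real.sqrt_pos.2 this))
    have heq : (∫ z in x₀..x, 2/(γ * Real.sqrt z))
        = (4/γ) * Real.sqrt x - (4/γ) * Real.sqrt x₀ := by
      apply intervalIntegral.integral_eq_sub_of_hasDerivAt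
      · intro z hz
        rw [uIcc_of_le hx] at hz
        have hz0 : 0 < z := lt_of_lt_of_le hx₀pos hz.1
        have hs : HasDerivAt Real.sqrt (1 / (2 * Real.sqrt z)) z :=
          Real.hasDerivAt_sqrt (ne_of_gt hz0)
        have := hs.const_mul (4/γ)
        convert this using 1
        · rfl
        have hsz : Real.sqrt z ≠ 0 := ne_of_gt (Real.sqrt_pos.2 hz0)
        have hγ0' : γ ≠ 0 := ne_of_gt hγ
        rw [div_mul_div_comm, mul_one, div_eq_div_iff (mul_ne_zero hγ0' hsz) (mul_ne_zero hγ0' (mul_ne_zero two_ne_zero hsz))]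
        ring
      · exact hint2
    have hmono : (∫ z in x₀..x, 2/(γ * Real.sqrt z)) ≤ ∫ z in x₀..x, g z := by
      apply intervalIntegral.integral_mono_on hx hint2 hint
      intro z hz
      have hz0 : 0 < z := lt_of_lt_of_le hx₀pos hz.1
      have hsz : 0 < Real.sqrt z := Real.sqrt_pos.2 hz0
      have hhz : Real.sqrt z ≤ h z := hx₀.2 z hz.1
      rw [hg_def]
      rw [div_le_div_iff₀ (mul_pos hγ hsz) (mul_pos hγ hz0)]
      have hzz : Real.sqrt z * Real.sqrt z = z := Real.mul_self_sqrt hz0.le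
      nlinarith [mul_nonneg (mul_pos hγ hsz).le (sub_nonneg.2 hhz), hzz]
    linarith [hJx ▸ le_refl (J x), hmono, heq]
  -- e^{-J} is eventually dominated by a constant times z^(-2)
  set C : ℝ := Real.exp (-(J x₀) + (4/γ) * Real.sqrt x₀) with hC_def
  have hc4 : (0:ℝ) < 4/γ := by positivity
  have hdecay : ∀ᶠ z in atTop, Real.exp (-((4/γ) * Real.sqrt z)) ≤ z ^ (-2 : ℝ) := by
    have base := tendsto_rpow_mul_exp_neg_mul_atTop_nhds_zero 4 (4/γ) hc4
    have hsq : Tendsto Real.sqrt atTop atTop := by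
      have hr := tendsto_rpow_atTop (y := (1/2:ℝ)) (by norm_num)
      apply hr.congr'
      filter_upwards [eventually_ge_atTop (0:ℝ)] with z _
      exact (Real.sqrt_eq_rpow z).symm
    have comp := base.comp hsq
    have comp' : Tendsto (fun z => z ^ (2:ℝ) * Real.exp (-(4/γ) * Real.sqrt z))
        atTop (𝓝 0) := by
      apply comp.congr'
      filter_upwards [eventually_ge_atTop (0:ℝ)] with z hz
      have : (Real.sqrt z) ^ (4:ℝ) = z ^ (2:ℝ) := by
        rw [Real.sqrt_eq_rpow, ← Real.rpow_mul hz]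
        norm_num
      simp only [Function.comp]
      rw [this]
    have hev := comp'.eventually (eventually_le_nhds (by norm_num : (0:ℝ) < 1))
    filter_upwards [hev, eventually_ge_atTop (1:ℝ)] with z hz hz1
    have hz0 : (0:ℝ) < z := lt_of_lt_of_le one_pos hz1
    have h2 : (0:ℝ) < z ^ (2:ℝ) := Real.rpow_pos_of_pos hz0 2
    rw [Real.rpow_neg hz0.le]
    have h3 : Real.exp (-((4/γ) * Real.sqrt z)) ≤ 1 / z ^ (2:ℝ) := by
      rw [le_div_iff₀ h2, mul_comm]
      calc z ^ (2:ℝ) * Real.exp (-((4/γ) * Real.sqrt z))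
          = z ^ (2:ℝ) * Real.exp (-(4/γ) * Real.sqrt z) := by rw [neg_mul]
        _ ≤ 1 := hz
    simpa [one_div] using h3
  -- tail integrability
  obtain ⟨a, ha⟩ := (hdecay.and (eventually_ge_atTop (max x₀ 1))).exists_forall_of_atTop
  have hax₀ : x₀ ≤ a := le_trans (le_max_left _ _) (ha a le_rfl).2
  have ha1 : (1:ℝ) ≤ a := le_trans (le_max_right _ _) (ha a le_rfl).2
  have hapos : (0:ℝ) < a := lt_of_lt_of_le one_pos ha1
  have htail : IntegrableOn E (Ioi a) := by
    have hint : Integrable (fun z => C * z ^ (-2 : ℝ)) (volume.restrict (Ioi a)) :=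
      (integrableOn_Ioi_rpow_of_lt (by norm_num) hapos).const_mul C
    refine Integrable.mono' hint ?_ ?_
    · exact (hE_cont.mono (Ioi_subset_Ioi hapos.le)).aestronglyMeasurable measurableSet_Ioi
    · refine (ae_restrict_iff' measurableSet_Ioi).2 (ae_of_all _ fun z hz => ?_)
      have hza : a ≤ z := (le_of_lt hz)
      have hzx₀ : x₀ ≤ z := le_trans hax₀ hza
      have hJz : J x₀ + (4/γ) * Real.sqrt z - (4/γ) * Real.sqrt x₀ ≤ J z := key z hzx₀
      have hEz : E z ≤ C * Real.exp (-((4/γ) * Real.sqrt z)) := by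
        rw [hE_def, hC_def, ← Real.exp_add]
        exact Real.exp_le_exp.2 (by linarith)
      have hdec : Real.exp (-((4/γ) * Real.sqrt z)) ≤ z ^ (-2 : ℝ) := (ha z hza).1
      have hC0 : 0 < C := Real.exp_pos _
      have : E z ≤ C * z ^ (-2 : ℝ) :=
        le_trans hEz (mul_le_mul_of_nonneg_left hdec hC0.le)
      simpa [Real.norm_eq_abs, abs_of_pos (Real.exp_pos _), hE_def] using this
  have part2 : IntegrableOn E (Ioi 0) := by
    have hu : Ioc (0:ℝ) a ∪ Ioi a = Ioi 0 := Ioc_union_Ioi_eq_Ioi hapos.le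
    rw [← hu]
    exact (hE_int_Ioc a hapos).union htail
  -- the denominator is positive
  set D : ℝ := ∫ z in Ioi (0:ℝ), E z with hD_def
  have hsupp : Function.support E = univ :=
    Set.eq_univ_of_forall fun z => Real.exp_ne_zero _
  have hD_pos : 0 < D := by
    rw [hD_def, setIntegral_pos_iff_support_of_nonneg_ae
      (ae_of_all _ fun z => (Real.exp_pos _).le) part2]
    rw [hsupp, Set.univ_inter]
    simp [Real.volume_Ioi]
  -- splitting identity
  have hsplit : ∀ p q : ℝ, 0 ≤ p → p ≤ q →
      (∫ z in Ioi p, E z) = (∫ z in Ioc p q, E z) + ∫ z in Ioi q, E z := by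
    intro p q hp hpq
    rw [← Ioc_union_Ioi_eq_Ioi hpq]
    rw [setIntegral_union (Ioc_disjoint_Ioi le_rfl) measurableSet_Ioi
      (part2.mono_set fun z hz => lt_of_le_of_lt hp hz.1)
      (part2.mono_set (Ioi_subset_Ioi (hp.trans hpq)))]
  have hv0 : v 0 = 1 := by rw [hv 0]; exact div_self (ne_of_gt hD_pos)
  have hanti : StrictAntiOn v (Ici 0) := by
    intro p hp q hq hpq
    rw [hv p, hv q]
    have hs := hsplit p q hp hpq.le
    have hpos : 0 < ∫ z in Ioc p q, E z := by
      rw [setIntegral_pos_iff_support_of_nonneg_ae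
        (ae_of_all _ fun z => (Real.exp_pos _).le)
        (part2.mono_set fun z hz => lt_of_le_of_lt hp hz.1)]
      rw [hsupp, Set.univ_inter]
      simp [Real.volume_Ioc, hpq, sub_pos.2 hpq]
    exact div_lt_div_of_pos_right (by linarith) hD_pos
  have htendsto : Tendsto v atTop (𝓝 0) := by
    have hT := MeasureTheory.intervalIntegral_tendsto_integral_Ioi (0:ℝ) part2 tendsto_id
    have hlim : Tendsto (fun x => (D - ∫ z in (0:ℝ)..x, E z) / D) atTop (𝓝 ((D - D)/D)) :=
      (tendsto_const_nhds.sub hT).div_const D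
    rw [sub_self, zero_div] at hlim
    apply hlim.congr'
    filter_upwards [eventually_ge_atTop (0:ℝ)] with x hx
    rw [hv x, intervalIntegral.integral_of_le hx]
    have h4 := hsplit 0 x le_rfl hx
    rw [← hD_def] at h4
    have h5 : D - (∫ z in Ioc 0 x, E z) = ∫ z in Ioi x, E z := by linarith
    rw [h5]
  -- the ODE
  have hT' : ∀ y : ℝ, 0 < y → HasDerivAt (fun u => ∫ z in Ioi u, E z) (-(E y)) y := by
    intro y hy
    have hprim : HasDerivAt (fun u => ∫ z in (0:ℝ)..u, E z) (E y) y := by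
      apply intervalIntegral.integral_hasDerivAt_right
      · rw [intervalIntegrable_iff_integrableOn_Ioc_of_le hy.le]
        exact hE_int_Ioc y hy
      · exact hE_cont.stronglyMeasurableAtFilter isOpen_Ioi y hy
      · exact hE_cont.continuousAt (isOpen_Ioi.mem_nhds hy)
    have h2 : HasDerivAt (fun u => D - ∫ z in (0:ℝ)..u, E z) (-(E y)) y := hprim.const_sub D
    apply h2.congr_of_eventuallyEq
    filter_upwards [isOpen_Ioi.mem_nhds hy] with u hu
    have := hsplit 0 u le_rfl (le_of_lt hu)
    rw [intervalIntegral.integral_of_le (le_of_lt hu)]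
    rw [← hD_def] at this
    linarith
  have hv'd : ∀ y : ℝ, 0 < y → HasDerivAt v (-(E y)/D) y := by
    intro y hy
    exact ((hT' y hy).div_const D).congr_of_eventuallyEq
      (Eventually.of_forall fun u => hv u)
  have hderiv_v_eq : Set.EqOn (deriv v) (fun y => -(E y)/D) (Ioi 0) :=
    fun y hy => (hv'd y hy).deriv
  refine ⟨part1, part2, hv0, hanti, htendsto, ?_⟩
  intro x hx
  have hEder : HasDerivAt (fun y => -(E y)/D) (E x * g x / D) x := by
    have h1 : HasDerivAt (fun y => -(J y)) (-(g x)) x := (hJ_deriv x hx).neg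
    have h2 : HasDerivAt (fun y => Real.exp (-(J y))) (Real.exp (-(J x)) * -(g x)) x := h1.exp
    have h3 := (h2.neg).div_const D
    have : E x * g x / D = -(Real.exp (-(J x)) * -(g x)) / D := by
      rw [hE_def]; ring
    rw [this]
    exact h3
  have hd2 : deriv (deriv v) x = E x * g x / D := by
    have hev : deriv v =ᶠ[𝓝 x] fun y => -(E y)/D := by
      filter_upwards [isOpen_Ioi.mem_nhds hx] with y hy using hderiv_v_eq hy
    rw [hev.deriv_eq, hEder.deriv]
  rw [hd2, hderiv_v_eq (mem_Ioi.2 hx)]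
  simp only [hg_def]
  have hx0 : x ≠ 0 := ne_of_gt hx
  have hγ0 : γ ≠ 0 := ne_of_gt hγ
  have hD0 : D ≠ 0 := ne_of_gt hD_pos
  field_simp
  ring
end
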